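/- arXiv:1802.01641 — 7 statements merged into one kernel-verified Lean document; each statement's English description precedes it below -/
import Mathlib

section
/- Let (Ω, 𝔉, ℙ) be a probability space, T ≥ 0, Θ > 0, and let E : Ω × [T, T+Θ] → ℝ be jointly measurable with 0 ≤ E(ω,u) ≤ M for some constant M and all (ω,u). Let f : ℝ → ℝ be twice continuously differentiable with f′ and f″ bounded and continuous. Define F : L²([T, T+Θ]) → ℝ by F(x) = 𝔼[f((1/Θ)∫_T^{T+Θ} x(u) E(·,u) du)]. Then F is twice Fréchet differentiable at every x ∈ L²([T, T+Θ]), with second derivative given by the symmetric bilinear form D²F(x)(h,k) = ∫_T^{T+Θ}∫_T^{T+Θ} h(v) k(w) · 𝔼[f″((1/Θ)∫_T^{T+Θ} x(u) E(·,u) du) · E(·,v) E(·,w)/Θ²] dv dw for h, k ∈ L²([T, T+Θ]). -/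
open MeasureTheory ProbabilityTheory Real

private lemma vix_mvt {g : ℝ → ℝ} {g' : ℝ → ℝ} (t : ℝ)
    (hg : ∀ s ∈ Set.uIcc 0 t, HasDerivAt g (g' s) s) {C : ℝ}
    (hC : ∀ s ∈ Set.uIcc 0 t, |g' s| ≤ C) :
    |g t - g 0| ≤ C * |t| := by
  have := Convex.norm_image_sub_le_of_norm_hasDerivWithin_le
    (f := g) (f' := g') (s := Set.uIcc 0 t) (C := C)
    (fun s hs => (hg s hs).hasDerivWithinAt)
    (fun s hs => by simpa [Real.norm_eq_abs] using hC s hs)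
    (convex_uIcc 0 t) (Set.left_mem_uIcc) (Set.right_mem_uIcc)
  simpa [Real.norm_eq_abs] using this

private lemma abs_le_of_mem_uIcc {s t : ℝ} (hs : s ∈ Set.uIcc 0 t) : |s| ≤ |t| := by
  rw [Set.uIcc_eq_union] at hs
  rcases hs with h | h
  · rcases Set.mem_Icc.1 h with ⟨h1, h2⟩
    exact abs_le.2 ⟨le_trans (neg_nonpos.2 (abs_nonneg t)) h1, h2.trans (le_abs_self t)⟩
  · rcases Set.mem_Icc.1 h with ⟨h1, h2⟩
    exact abs_le.2 ⟨le_trans (neg_abs_le t) h1, h2.trans (abs_nonneg t)⟩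

private lemma vix_taylor1 {f : ℝ → ℝ} (hf : Differentiable ℝ f)
    (hf' : Differentiable ℝ (deriv f)) {C : ℝ}
    (hC : ∀ y, |deriv (deriv f) y| ≤ C) (a t : ℝ) :
    |f (a + t) - f a - deriv f a * t| ≤ C * t ^ 2 := by
  have hlip : ∀ p q : ℝ, |deriv f p - deriv f q| ≤ C * |p - q| := by
    intro p q
    have := Convex.norm_image_sub_le_of_norm_deriv_le (f := deriv f) (s := Set.univ)
      (fun y _ => hf' y) (fun y _ => by simpa [Real.norm_eq_abs] using hC y)
      convex_univ (Set.mem_univ q) (Set.mem_univ p)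
    simpa [Real.norm_eq_abs] using this
  have key := vix_mvt (g := fun s => f (a + s) - deriv f a * s)
      (g' := fun s => deriv f (a + s) - deriv f a) t
    (fun s _ => by
      have h1 : HasDerivAt (fun s => f (a + s)) (deriv f (a + s)) s := by
        simpa [Function.comp_def] using ((hf (a + s)).hasDerivAt.comp s ((hasDerivAt_id s).const_add a))
      have h2 : HasDerivAt (fun s : ℝ => deriv f a * s) (deriv f a) s := by
        simpa using (hasDerivAt_id s).const_mul (deriv f a)
      exact h1.sub h2)
    (C := C * |t|)
    (fun s hs => by
      have hC0 : 0 ≤ C := le_trans (abs_nonneg _) (hC 0)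
      have h3 : |a + s - a| ≤ |t| := by simpa using abs_le_of_mem_uIcc hs
      have := (hlip (a + s) a).trans (mul_le_mul_of_nonneg_left h3 hC0)
      simpa using this)
  have : |f (a + t) - deriv f a * t - f a| ≤ C * |t| * |t| := by simpa using key
  calc |f (a + t) - f a - deriv f a * t| = |f (a + t) - deriv f a * t - f a| := by ring_nf
    _ ≤ C * |t| * |t| := this
    _ = C * t ^ 2 := by rw [mul_assoc, abs_mul_abs_self, sq]

private lemma vix_taylor2 {f : ℝ → ℝ} (hf' : Differentiable ℝ (deriv f))
    (hcont : Continuous (deriv (deriv f))) (R : ℝ) {ε : ℝ} (hε : 0 < ε) :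
    ∃ δ > 0, ∀ a t : ℝ, |a| ≤ R → |t| ≤ δ →
      |deriv f (a + t) - deriv f a - deriv (deriv f) a * t| ≤ ε * |t| := by
  have hK : IsCompact (Set.Icc (-(R + 1)) (R + 1)) := isCompact_Icc
  have huc := hK.uniformContinuousOn_of_continuous (hcont.continuousOn)
  rw [Metric.uniformContinuousOn_iff] at huc
  obtain ⟨δ₀, hδ₀, hδ⟩ := huc ε hε
  refine ⟨min (δ₀ / 2) 1, lt_min (half_pos hδ₀) one_pos, fun a t ha ht => ?_⟩
  have ht1 : |t| ≤ 1 := ht.trans (min_le_right _ _)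
  have haR : a ∈ Set.Icc (-(R + 1)) (R + 1) := by
    rcases abs_le.1 ha with ⟨h1, h2⟩
    exact ⟨by linarith, by linarith⟩
  have key := vix_mvt (g := fun s => deriv f (a + s) - deriv (deriv f) a * s)
      (g' := fun s => deriv (deriv f) (a + s) - deriv (deriv f) a) t
    (fun s _ => by
      have h1 : HasDerivAt (fun s => deriv f (a + s)) (deriv (deriv f) (a + s)) s := by
        simpa [Function.comp_def] using ((hf' (a + s)).hasDerivAt.comp s ((hasDerivAt_id s).const_add a))
      have h2 : HasDerivAt (fun s : ℝ => deriv (deriv f) a * s) (deriv (deriv f) a) s := by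
        simpa using (hasDerivAt_id s).const_mul (deriv (deriv f) a)
      exact h1.sub h2)
    (C := ε)
    (fun s hs => by
      have hst : |s| ≤ |t| := abs_le_of_mem_uIcc hs
      have hmem : a + s ∈ Set.Icc (-(R + 1)) (R + 1) := by
        rcases abs_le.1 ha with ⟨h1, h2⟩
        rcases abs_le.1 (hst.trans ht1) with ⟨h3, h4⟩
        exact ⟨by linarith, by linarith⟩
      have hd : dist (a + s) a < δ₀ := by
        rw [Real.dist_eq]
        have : |s| ≤ δ₀ / 2 := (hst.trans ht).trans (min_le_left _ _)
        simpa using lt_of_le_of_lt this (half_lt_self hδ₀)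
      have := hδ (a + s) hmem a haR hd
      rw [Real.dist_eq] at this
      exact le_of_lt this)
  have : |deriv f (a + t) - deriv (deriv f) a * t - deriv f a| ≤ ε * |t| := by simpa using key
  calc |deriv f (a + t) - deriv f a - deriv (deriv f) a * t|
      = |deriv f (a + t) - deriv (deriv f) a * t - deriv f a| := by ring_nf
    _ ≤ ε * |t| := this

private theorem vix_abstract {Ω : Type*} [MeasurableSpace Ω] (P : Measure Ω)
    [IsProbabilityMeasure P]
    {H : Type*} [NormedAddCommGroup H] [InnerProductSpace ℝ H]
    (e : Ω → H) (B : ℝ) (hB1 : 1 ≤ B) (hB : ∀ ω, ‖e ω‖ ≤ B)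
    (hmeas : ∀ x : H, AEStronglyMeasurable (fun ω => (inner ℝ x (e ω) : ℝ)) P)
    (f : ℝ → ℝ) (hf : ContDiff ℝ 2 f)
    {C₁ C₂ : ℝ} (hf'B : ∀ y, |deriv f y| ≤ C₁) (hf''B : ∀ y, |deriv (deriv f) y| ≤ C₂) :
    ∃ F' : H → (H →L[ℝ] ℝ),
      (∀ x, HasFDerivAt (fun y : H => ∫ ω, f (inner ℝ y (e ω)) ∂P) (F' x) x) ∧
      ∀ x, ∃ F'' : H →L[ℝ] H →L[ℝ] ℝ,
        HasFDerivAt F' F'' x ∧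
        ∀ h k : H, F'' h k =
          ∫ ω, deriv (deriv f) (inner ℝ x (e ω)) * inner ℝ h (e ω) * inner ℝ k (e ω) ∂P := by
  have hB0 : 0 < B := lt_of_lt_of_le one_pos hB1
  have hC₁0 : 0 ≤ C₁ := le_trans (abs_nonneg _) (hf'B 0)
  have hC₂0 : 0 ≤ C₂ := le_trans (abs_nonneg _) (hf''B 0)
  have hdiff : Differentiable ℝ f := hf.differentiable two_ne_zero
  have hcd1 : ContDiff ℝ 1 (deriv f) := by
    have h2 : ContDiff ℝ ((1:ℕ) + 1) f := by exact_mod_cast hf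
    exact (contDiff_succ_iff_deriv.mp h2).2.2
  have hdiff' : Differentiable ℝ (deriv f) := hcd1.differentiable one_ne_zero
  have hcont' : Continuous (deriv f) := hcd1.continuous
  have hcont'' : Continuous (deriv (deriv f)) := hcd1.continuous_deriv le_rfl
  -- inner bound
  have hc : ∀ (z : H) ω, |(inner ℝ z (e ω) : ℝ)| ≤ B * ‖z‖ := fun z ω => by
    calc |(inner ℝ z (e ω) : ℝ)| ≤ ‖z‖ * ‖e ω‖ := abs_real_inner_le_norm z (e ω)
      _ ≤ ‖z‖ * B := mul_le_mul_of_nonneg_left (hB ω) (norm_nonneg z)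
      _ = B * ‖z‖ := mul_comm _ _
  -- integrability helper
  have intg : ∀ {g : Ω → ℝ}, AEStronglyMeasurable g P → ∀ (C : ℝ), (∀ ω, |g ω| ≤ C) →
      Integrable g P := by
    intro g hg C hC
    exact (integrable_const C).mono' hg
      (Filter.Eventually.of_forall fun ω => by simpa [Real.norm_eq_abs] using hC ω)
  -- f is Lipschitz
  have hfl : ∀ p q : ℝ, |f p - f q| ≤ C₁ * |p - q| := fun p q => by
    have := Convex.norm_image_sub_le_of_norm_deriv_le (f := f) (s := Set.univ)
      (fun y _ => hdiff y) (fun y _ => by simpa [Real.norm_eq_abs] using hf'B y)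
      convex_univ (Set.mem_univ q) (Set.mem_univ p)
    simpa [Real.norm_eq_abs] using this
  -- measurability facts
  have m0 : ∀ z : H, AEStronglyMeasurable (fun ω => f (inner ℝ z (e ω) : ℝ)) P :=
    fun z => hf.continuous.comp_aestronglyMeasurable (hmeas z)
  have m1 : ∀ z : H, AEStronglyMeasurable (fun ω => deriv f (inner ℝ z (e ω) : ℝ)) P :=
    fun z => hcont'.comp_aestronglyMeasurable (hmeas z)
  have m2 : ∀ z : H, AEStronglyMeasurable (fun ω => deriv (deriv f) (inner ℝ z (e ω) : ℝ)) P :=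
    fun z => hcont''.comp_aestronglyMeasurable (hmeas z)
  -- integrability of the basic integrands
  have intf : ∀ z : H, Integrable (fun ω => f (inner ℝ z (e ω) : ℝ)) P := by
    intro z
    refine intg (m0 z) (|f 0| + C₁ * (B * ‖z‖)) fun ω => ?_
    have h1 : |f (inner ℝ z (e ω) : ℝ) - f 0| ≤ C₁ * |(inner ℝ z (e ω) : ℝ)| := by
      simpa using hfl (inner ℝ z (e ω)) 0
    have h2 := (abs_sub_abs_le_abs_sub (f (inner ℝ z (e ω) : ℝ)) (f 0)).trans h1
    have h3 : C₁ * |(inner ℝ z (e ω) : ℝ)| ≤ C₁ * (B * ‖z‖) :=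
      mul_le_mul_of_nonneg_left (hc z ω) hC₁0
    linarith
  have intF' : ∀ x h : H,
      Integrable (fun ω => deriv f (inner ℝ x (e ω) : ℝ) * (inner ℝ h (e ω) : ℝ)) P := by
    intro x h
    refine intg ((m1 x).mul (hmeas h)) (C₁ * (B * ‖h‖)) fun ω => ?_
    rw [abs_mul]
    exact mul_le_mul (hf'B _) (hc h ω) (abs_nonneg _) hC₁0
  have intF'' : ∀ x h k : H,
      Integrable (fun ω =>
        deriv (deriv f) (inner ℝ x (e ω) : ℝ) * (inner ℝ h (e ω) : ℝ) * (inner ℝ k (e ω) : ℝ)) P := by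
    intro x h k
    refine intg (((m2 x).mul (hmeas h)).mul (hmeas k)) (C₂ * (B * ‖h‖) * (B * ‖k‖)) fun ω => ?_
    rw [abs_mul, abs_mul]
    exact mul_le_mul (mul_le_mul (hf''B _) (hc h ω) (abs_nonneg _) hC₂0) (hc k ω)
      (abs_nonneg _) (by positivity)
  -- construction of the first derivative candidates
  have hA : ∀ x : H, ∃ A : H →L[ℝ] ℝ,
      ∀ h, A h = ∫ ω, deriv f (inner ℝ x (e ω) : ℝ) * (inner ℝ h (e ω) : ℝ) ∂P := by
    intro x
    refine ⟨LinearMap.mkContinuous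
      { toFun := fun h => ∫ ω, deriv f (inner ℝ x (e ω) : ℝ) * (inner ℝ h (e ω) : ℝ) ∂P
        map_add' := ?_
        map_smul' := ?_ } (C₁ * B) ?_, fun h => rfl⟩
    · intro h h'
      simp only [inner_add_left, mul_add]
      exact integral_add (intF' x h) (intF' x h')
    · intro a h
      simp only [real_inner_smul_left, RingHom.id_apply, smul_eq_mul]
      rw [← smul_eq_mul, ← integral_smul]
      congr 1 with ω
      simp only [smul_eq_mul]; ring
    · intro h
      have hb : ∀ ω, ‖deriv f (inner ℝ x (e ω) : ℝ) * (inner ℝ h (e ω) : ℝ)‖ ≤ C₁ * B * ‖h‖ := by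
        intro ω
        rw [Real.norm_eq_abs, abs_mul, mul_assoc]
        exact mul_le_mul (hf'B _) (hc h ω) (abs_nonneg _) hC₁0
      calc ‖∫ ω, deriv f (inner ℝ x (e ω) : ℝ) * (inner ℝ h (e ω) : ℝ) ∂P‖
          ≤ C₁ * B * ‖h‖ * (P Set.univ).toReal :=
            norm_integral_le_of_norm_le_const (Filter.Eventually.of_forall hb)
        _ = C₁ * B * ‖h‖ := by simp
  classical
  set F' : H → (H →L[ℝ] ℝ) := fun x => (hA x).choose with hF'def
  have hF'app : ∀ x h, F' x h = ∫ ω, deriv f (inner ℝ x (e ω) : ℝ) * (inner ℝ h (e ω) : ℝ) ∂P :=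
    fun x => (hA x).choose_spec
  refine ⟨F', fun x => ?_, fun x => ?_⟩
  · -- first Fréchet derivative
    rw [hasFDerivAt_iff_isLittleO_nhds_zero, Asymptotics.isLittleO_iff]
    intro ε hε
    have hδ : (0:ℝ) < ε / (C₂ * B ^ 2 + 1) := by positivity
    refine Metric.eventually_nhds_iff.2 ⟨ε / (C₂ * B ^ 2 + 1), hδ, fun h hh => ?_⟩
    rw [dist_zero_right] at hh
    have key : (∫ ω, f (inner ℝ (x + h) (e ω) : ℝ) ∂P) - (∫ ω, f (inner ℝ x (e ω) : ℝ) ∂P)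
        - F' x h = ∫ ω, (f ((inner ℝ x (e ω) : ℝ) + (inner ℝ h (e ω) : ℝ))
          - f (inner ℝ x (e ω) : ℝ) - deriv f (inner ℝ x (e ω) : ℝ) * (inner ℝ h (e ω) : ℝ)) ∂P := by
      rw [hF'app]
      rw [← integral_sub (intf (x + h)) (intf x), ← integral_sub _ (intF' x h)]
      · congr 1 with ω; rw [inner_add_left]
      · exact (intf (x + h)).sub (intf x)
    have hb : ∀ ω, ‖f ((inner ℝ x (e ω) : ℝ) + (inner ℝ h (e ω) : ℝ))
        - f (inner ℝ x (e ω) : ℝ) - deriv f (inner ℝ x (e ω) : ℝ) * (inner ℝ h (e ω) : ℝ)‖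
        ≤ C₂ * B ^ 2 * ‖h‖ ^ 2 := by
      intro ω
      rw [Real.norm_eq_abs]
      refine (vix_taylor1 hdiff hdiff' hf''B _ _).trans ?_
      have h1 : (inner ℝ h (e ω) : ℝ) ^ 2 ≤ (B * ‖h‖) ^ 2 :=
        sq_le_sq' (abs_le.1 (hc h ω)).1 (abs_le.1 (hc h ω)).2
      calc C₂ * (inner ℝ h (e ω) : ℝ) ^ 2 ≤ C₂ * (B * ‖h‖) ^ 2 :=
            mul_le_mul_of_nonneg_left h1 hC₂0
        _ = C₂ * B ^ 2 * ‖h‖ ^ 2 := by ring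
    calc ‖(∫ ω, f (inner ℝ (x + h) (e ω) : ℝ) ∂P) - (∫ ω, f (inner ℝ x (e ω) : ℝ) ∂P) - F' x h‖
        ≤ C₂ * B ^ 2 * ‖h‖ ^ 2 * (P Set.univ).toReal := by
          rw [key]; exact norm_integral_le_of_norm_le_const (Filter.Eventually.of_forall hb)
      _ = C₂ * B ^ 2 * ‖h‖ * ‖h‖ := by simp; ring
      _ ≤ ε * ‖h‖ := by
          refine mul_le_mul_of_nonneg_right ?_ (norm_nonneg h)
          have h2 : ‖h‖ ≤ ε / (C₂ * B ^ 2 + 1) := le_of_lt hh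
          calc C₂ * B ^ 2 * ‖h‖ ≤ (C₂ * B ^ 2 + 1) * (ε / (C₂ * B ^ 2 + 1)) := by
                refine mul_le_mul (by linarith) h2 (norm_nonneg h) (by positivity)
            _ = ε := by field_simp
  · -- second Fréchet derivative
    have hBil : ∃ T : H →L[ℝ] H →L[ℝ] ℝ, ∀ h k : H, T h k =
        ∫ ω, deriv (deriv f) (inner ℝ x (e ω) : ℝ) * (inner ℝ h (e ω) : ℝ)
          * (inner ℝ k (e ω) : ℝ) ∂P := by
      refine ⟨LinearMap.mkContinuous₂ (LinearMap.mk₂ ℝ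
        (fun h k => ∫ ω, deriv (deriv f) (inner ℝ x (e ω) : ℝ) * (inner ℝ h (e ω) : ℝ)
          * (inner ℝ k (e ω) : ℝ) ∂P) ?_ ?_ ?_ ?_) (C₂ * B * B) ?_, fun h k => rfl⟩
      · intro h h' k
        simp only [inner_add_left, mul_add, add_mul]
        exact integral_add (intF'' x h k) (intF'' x h' k)
      · intro a h k
        simp only [real_inner_smul_left, smul_eq_mul]
        rw [← smul_eq_mul, ← integral_smul]
        congr 1 with ω; simp only [smul_eq_mul]; ring
      · intro h k k'
        simp only [inner_add_left, mul_add]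
        exact integral_add (intF'' x h k) (intF'' x h k')
      · intro a h k
        simp only [real_inner_smul_left, smul_eq_mul]
        rw [← smul_eq_mul, ← integral_smul]
        congr 1 with ω; simp only [smul_eq_mul]; ring
      · intro h k
        have hb : ∀ ω, ‖deriv (deriv f) (inner ℝ x (e ω) : ℝ) * (inner ℝ h (e ω) : ℝ)
            * (inner ℝ k (e ω) : ℝ)‖ ≤ C₂ * B * B * ‖h‖ * ‖k‖ := by
          intro ω
          rw [Real.norm_eq_abs, abs_mul, abs_mul]
          calc |deriv (deriv f) (inner ℝ x (e ω) : ℝ)| * |(inner ℝ h (e ω) : ℝ)|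
              * |(inner ℝ k (e ω) : ℝ)| ≤ C₂ * (B * ‖h‖) * (B * ‖k‖) := by
                exact mul_le_mul (mul_le_mul (hf''B _) (hc h ω) (abs_nonneg _) hC₂0)
                  (hc k ω) (abs_nonneg _) (by positivity)
            _ = C₂ * B * B * ‖h‖ * ‖k‖ := by ring
        calc ‖∫ ω, deriv (deriv f) (inner ℝ x (e ω) : ℝ) * (inner ℝ h (e ω) : ℝ)
            * (inner ℝ k (e ω) : ℝ) ∂P‖ ≤ C₂ * B * B * ‖h‖ * ‖k‖ * (P Set.univ).toReal :=
              norm_integral_le_of_norm_le_const (Filter.Eventually.of_forall hb)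
          _ = C₂ * B * B * ‖h‖ * ‖k‖ := by simp
    obtain ⟨T, hT⟩ := hBil
    refine ⟨T, ?_, hT⟩
    rw [hasFDerivAt_iff_isLittleO_nhds_zero, Asymptotics.isLittleO_iff]
    intro ε hε
    have hε' : (0:ℝ) < ε / (B * B) := by positivity
    obtain ⟨δ, hδ0, hδ⟩ := vix_taylor2 hdiff' hcont'' (B * ‖x‖) hε'
    refine Metric.eventually_nhds_iff.2 ⟨δ / B, by positivity, fun h hh => ?_⟩
    rw [dist_zero_right] at hh
    have hhB : ∀ ω, |(inner ℝ h (e ω) : ℝ)| ≤ δ := fun ω => by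
      refine (hc h ω).trans ?_
      calc B * ‖h‖ ≤ B * (δ / B) := mul_le_mul_of_nonneg_left (le_of_lt hh) (le_of_lt hB0)
        _ = δ := by field_simp
    have hptw : ∀ k : H, ‖F' (x + h) k - F' x k - T h k‖ ≤ ε * ‖h‖ * ‖k‖ := by
      intro k
      have key : F' (x + h) k - F' x k - T h k = ∫ ω,
          (deriv f ((inner ℝ x (e ω) : ℝ) + (inner ℝ h (e ω) : ℝ)) - deriv f (inner ℝ x (e ω) : ℝ)
            - deriv (deriv f) (inner ℝ x (e ω) : ℝ) * (inner ℝ h (e ω) : ℝ))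
            * (inner ℝ k (e ω) : ℝ) ∂P := by
        rw [hF'app, hF'app, hT]
        rw [← integral_sub (intF' (x + h) k) (intF' x k), ← integral_sub _ (intF'' x h k)]
        · congr 1 with ω; rw [inner_add_left]; ring
        · exact (intF' (x + h) k).sub (intF' x k)
      have hb : ∀ ω, ‖(deriv f ((inner ℝ x (e ω) : ℝ) + (inner ℝ h (e ω) : ℝ))
          - deriv f (inner ℝ x (e ω) : ℝ)
          - deriv (deriv f) (inner ℝ x (e ω) : ℝ) * (inner ℝ h (e ω) : ℝ))
          * (inner ℝ k (e ω) : ℝ)‖ ≤ ε * ‖h‖ * ‖k‖ := by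
        intro ω
        rw [Real.norm_eq_abs, abs_mul]
        have h1 := hδ (inner ℝ x (e ω) : ℝ) (inner ℝ h (e ω) : ℝ) (hc x ω) (hhB ω)
        calc |deriv f ((inner ℝ x (e ω) : ℝ) + (inner ℝ h (e ω) : ℝ))
            - deriv f (inner ℝ x (e ω) : ℝ)
            - deriv (deriv f) (inner ℝ x (e ω) : ℝ) * (inner ℝ h (e ω) : ℝ)|
            * |(inner ℝ k (e ω) : ℝ)|
            ≤ (ε / (B * B) * |(inner ℝ h (e ω) : ℝ)|) * |(inner ℝ k (e ω) : ℝ)| :=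
              mul_le_mul_of_nonneg_right h1 (abs_nonneg _)
          _ ≤ (ε / (B * B) * (B * ‖h‖)) * (B * ‖k‖) := by
              exact mul_le_mul (mul_le_mul_of_nonneg_left (hc h ω) (le_of_lt hε'))
                (hc k ω) (abs_nonneg _) (by positivity)
          _ = ε * ‖h‖ * ‖k‖ := by field_simp
      calc ‖F' (x + h) k - F' x k - T h k‖
          ≤ ε * ‖h‖ * ‖k‖ * (P Set.univ).toReal := by
            rw [key]; exact norm_integral_le_of_norm_le_const (Filter.Eventually.of_forall hb)
        _ = ε * ‖h‖ * ‖k‖ := by simp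
    have := ContinuousLinearMap.opNorm_le_bound (F' (x + h) - F' x - T h)
      (by positivity : (0:ℝ) ≤ ε * ‖h‖) (fun k => by
        simpa [ContinuousLinearMap.sub_apply, mul_assoc] using hptw k)
    simpa [Real.norm_eq_abs] using this

/-- Second-order Fréchet differentiability of the VIX-type option price functional
`F(x) = 𝔼[f((1/Θ)∫_T^{T+Θ} x(u) E(·,u) du)]` on `L²([T, T+Θ])`: there is a Fréchet
derivative map `F'`, itself Fréchet differentiable, whose derivative (the second
derivative of `F`) is the symmetric bilinear form
`(h,k) ↦ ∫∫ h(v) k(w) 𝔼[f″((1/Θ)∫ x(u) E(·,u) du) E(·,v) E(·,w)/Θ²] dv dw`. -/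
theorem second_frechet_deriv_vix_price
    {Ω : Type*} [MeasurableSpace Ω] (P : Measure Ω) [IsProbabilityMeasure P]
    (T Θ : ℝ) (hT : 0 ≤ T) (hΘ : 0 < Θ)
    (E : Ω → ℝ → ℝ) (M : ℝ)
    (hEmeas : Measurable (Function.uncurry E))
    (hE : ∀ ω u, u ∈ Set.Icc T (T + Θ) → 0 ≤ E ω u ∧ E ω u ≤ M)
    (f : ℝ → ℝ) (hf : ContDiff ℝ 2 f)
    (hf'bdd : ∃ c, ∀ y, |deriv f y| ≤ c)
    (hf''bdd : ∃ c, ∀ y, |deriv (deriv f) y| ≤ c)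
    (F : Lp ℝ 2 (volume.restrict (Set.Icc T (T + Θ))) → ℝ)
    (hF : ∀ x, F x =
      ∫ ω, f (Θ⁻¹ * ∫ u in Set.Icc T (T + Θ), (x : ℝ → ℝ) u * E ω u) ∂P) :
    ∃ F' : Lp ℝ 2 (volume.restrict (Set.Icc T (T + Θ))) →
        (Lp ℝ 2 (volume.restrict (Set.Icc T (T + Θ))) →L[ℝ] ℝ),
      (∀ x, HasFDerivAt F (F' x) x) ∧
      ∀ x, ∃ F'' : Lp ℝ 2 (volume.restrict (Set.Icc T (T + Θ))) →L[ℝ]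
          (Lp ℝ 2 (volume.restrict (Set.Icc T (T + Θ))) →L[ℝ] ℝ),
        HasFDerivAt F' F'' x ∧
        ∀ h k, F'' h k =
          ∫ v in Set.Icc T (T + Θ), ∫ w in Set.Icc T (T + Θ),
            (h : ℝ → ℝ) v * (k : ℝ → ℝ) w *
              ∫ ω, deriv (deriv f)
                  (Θ⁻¹ * ∫ u in Set.Icc T (T + Θ), (x : ℝ → ℝ) u * E ω u)
                * E ω v * E ω w / Θ ^ 2 ∂P := by
  classical
  obtain ⟨C₁, hC₁⟩ := hf'bdd
  obtain ⟨C₂, hC₂⟩ := hf''bdd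
  have hC₂0 : 0 ≤ C₂ := le_trans (abs_nonneg _) (hC₂ 0)
  have hSmeas : MeasurableSet (Set.Icc T (T + Θ)) := measurableSet_Icc
  have hμuniv : (volume.restrict (Set.Icc T (T + Θ))) Set.univ = ENNReal.ofReal Θ := by
    rw [Measure.restrict_apply_univ, Real.volume_Icc]
    norm_num
  haveI hfin : IsFiniteMeasure (volume.restrict (Set.Icc T (T + Θ))) :=
    ⟨by rw [hμuniv]; exact ENNReal.ofReal_lt_top⟩
  set M' : ℝ := max M 0 with hM'def
  have hM'0 : (0:ℝ) ≤ M' := le_max_right _ _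
  have hEbd : ∀ ω, ∀ᵐ u ∂(volume.restrict (Set.Icc T (T + Θ))), ‖E ω u‖ ≤ M' := by
    intro ω
    refine (ae_restrict_mem hSmeas).mono fun u hu => ?_
    rw [Real.norm_eq_abs, abs_of_nonneg (hE ω u hu).1]
    exact le_trans (hE ω u hu).2 (le_max_left _ _)
  have hmem : ∀ ω, MemLp (E ω) 2 (volume.restrict (Set.Icc T (T + Θ))) := fun ω =>
    MemLp.of_bound hEmeas.of_uncurry_left.aestronglyMeasurable M' (hEbd ω)
  set e : Ω → Lp ℝ 2 (volume.restrict (Set.Icc T (T + Θ))) :=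
    fun ω => Θ⁻¹ • ((hmem ω).toLp (E ω)) with hedef
  -- the inner-product formula
  have hinner : ∀ (z : Lp ℝ 2 (volume.restrict (Set.Icc T (T + Θ)))) ω,
      (inner ℝ z (e ω) : ℝ) = Θ⁻¹ * ∫ u in Set.Icc T (T + Θ), (z : ℝ → ℝ) u * E ω u := by
    intro z ω
    rw [hedef, real_inner_smul_right]
    congr 1
    rw [MeasureTheory.L2.inner_def]
    calc ∫ u in Set.Icc T (T + Θ),
        (inner ℝ ((z : ℝ → ℝ) u) (((hmem ω).toLp (E ω) : ℝ → ℝ) u) : ℝ)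
        = ∫ u in Set.Icc T (T + Θ), (z : ℝ → ℝ) u * (((hmem ω).toLp (E ω) : ℝ → ℝ)) u := by
          refine integral_congr_ae (Filter.Eventually.of_forall fun u => ?_)
          simp [RCLike.inner_apply, starRingEnd_apply]; ring
      _ = ∫ u in Set.Icc T (T + Θ), (z : ℝ → ℝ) u * E ω u := by
          refine integral_congr_ae (((hmem ω).coeFn_toLp).mono fun u hu => ?_)
          dsimp only
          rw [hu]
  -- the norm bound
  set B : ℝ := 1 + |Θ⁻¹| * (Real.sqrt Θ * M') with hBdef
  have hB1 : (1:ℝ) ≤ B := le_add_of_nonneg_right (by positivity)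
  have hbound : ∀ ω, ‖e ω‖ ≤ B := by
    intro ω
    rw [hedef]
    have h1 : ‖Θ⁻¹ • ((hmem ω).toLp (E ω))‖ = |Θ⁻¹| * ‖(hmem ω).toLp (E ω)‖ := by
      rw [norm_smul, Real.norm_eq_abs]
    rw [h1, Lp.norm_toLp]
    have h2 : eLpNorm (E ω) 2 (volume.restrict (Set.Icc T (T + Θ)))
        ≤ (ENNReal.ofReal Θ) ^ ((2:ℝ)⁻¹) * ENNReal.ofReal M' := by
      have h4 : ((2:ENNReal).toReal)⁻¹ = ((2:ℝ))⁻¹ := by norm_num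
      have := eLpNorm_le_of_ae_bound (p := 2) (μ := volume.restrict (Set.Icc T (T + Θ)))
        (hEbd ω)
      rwa [hμuniv, h4] at this
    have hne : (ENNReal.ofReal Θ) ^ ((2:ℝ)⁻¹) * ENNReal.ofReal M' ≠ ⊤ :=
      ENNReal.mul_ne_top (ENNReal.rpow_ne_top_of_nonneg (by norm_num) ENNReal.ofReal_ne_top)
        ENNReal.ofReal_ne_top
    have h3 : (eLpNorm (E ω) 2 (volume.restrict (Set.Icc T (T + Θ)))).toReal
        ≤ Real.sqrt Θ * M' := by
      refine le_trans (ENNReal.toReal_mono hne h2) (le_of_eq ?_)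
      rw [ENNReal.toReal_mul, ← ENNReal.toReal_rpow, ENNReal.toReal_ofReal hΘ.le,
        ENNReal.toReal_ofReal hM'0, Real.sqrt_eq_rpow]
      norm_num
    calc |Θ⁻¹| * (eLpNorm (E ω) 2 (volume.restrict (Set.Icc T (T + Θ)))).toReal
        ≤ |Θ⁻¹| * (Real.sqrt Θ * M') := mul_le_mul_of_nonneg_left h3 (abs_nonneg _)
      _ ≤ B := by rw [hBdef]; linarith
  -- measurability of the inner products
  have hEaesm : AEStronglyMeasurable (fun p : Ω × ℝ => E p.1 p.2)
      (P.prod (volume.restrict (Set.Icc T (T + Θ)))) :=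
    hEmeas.aestronglyMeasurable
  have hintm : ∀ z : Lp ℝ 2 (volume.restrict (Set.Icc T (T + Θ))),
      AEStronglyMeasurable (fun ω => ∫ u in Set.Icc T (T + Θ), (z : ℝ → ℝ) u * E ω u) P := by
    intro z
    exact (((Lp.aestronglyMeasurable z).comp_snd).mul hEaesm).integral_prod_right'
  have hmeasinner : ∀ z : Lp ℝ 2 (volume.restrict (Set.Icc T (T + Θ))),
      AEStronglyMeasurable (fun ω => (inner ℝ z (e ω) : ℝ)) P := by
    intro z
    refine ((hintm z).const_mul Θ⁻¹).congr ?_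
    exact Filter.Eventually.of_forall fun ω => (hinner z ω).symm
  -- apply the abstract theorem
  obtain ⟨F', hF'deriv, hF''⟩ := vix_abstract P e B hB1 hbound hmeasinner f hf hC₁ hC₂
  have hFeq : F = fun y : Lp ℝ 2 (volume.restrict (Set.Icc T (T + Θ))) =>
      ∫ ω, f (inner ℝ y (e ω) : ℝ) ∂P := by
    funext y
    rw [hF y]
    refine integral_congr_ae (Filter.Eventually.of_forall fun ω => ?_)
    dsimp only
    rw [hinner y ω]
  refine ⟨F', fun x => by rw [hFeq]; exact hF'deriv x, fun x => ?_⟩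
  obtain ⟨F'', hderiv2, hform⟩ := hF'' x
  refine ⟨F'', hderiv2, fun h k => ?_⟩
  rw [hform h k]
  -- Fubini part
  have habs : ∀ ω u, u ∈ Set.Icc T (T + Θ) → |E ω u| ≤ M' := fun ω u hu => by
    rw [abs_of_nonneg (hE ω u hu).1]
    exact le_trans (hE ω u hu).2 (le_max_left _ _)
  have hcd1 : ContDiff ℝ 1 (deriv f) := by
    have h2 : ContDiff ℝ ((1:ℕ) + 1) f := by exact_mod_cast hf
    exact (contDiff_succ_iff_deriv.mp h2).2.2
  have hcont'' : Continuous (deriv (deriv f)) := hcd1.continuous_deriv le_rfl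
  have hXm : AEStronglyMeasurable
      (fun ω => Θ⁻¹ * ∫ u in Set.Icc T (T + Θ), (x : ℝ → ℝ) u * E ω u) P :=
    (hintm x).const_mul Θ⁻¹
  have hDm : AEStronglyMeasurable (fun ω => deriv (deriv f) (Θ⁻¹ * ∫ u in Set.Icc T (T + Θ), (x : ℝ → ℝ) u * E ω u)) P :=
    hcont''.comp_aestronglyMeasurable hXm
  have hDb : ∀ ω, |deriv (deriv f) (Θ⁻¹ * ∫ u in Set.Icc T (T + Θ), (x : ℝ → ℝ) u * E ω u)| ≤ C₂ := fun ω => hC₂ _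
  have hIkm : AEStronglyMeasurable (fun ω => (∫ w in Set.Icc T (T + Θ), (k : ℝ → ℝ) w * E ω w)) P := hintm k
  have hIkb : ∀ ω, |(∫ w in Set.Icc T (T + Θ), (k : ℝ → ℝ) w * E ω w)| ≤ Θ * (B * ‖k‖) := by
    intro ω
    have h5 : (∫ w in Set.Icc T (T + Θ), (k : ℝ → ℝ) w * E ω w) = Θ * (inner ℝ k (e ω) : ℝ) := by
      rw [hinner k ω]
      field_simp
    rw [h5, abs_mul, abs_of_pos hΘ]
    refine mul_le_mul_of_nonneg_left ?_ hΘ.le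
    calc |(inner ℝ k (e ω) : ℝ)| ≤ ‖k‖ * ‖e ω‖ := abs_real_inner_le_norm k (e ω)
      _ ≤ ‖k‖ * B := mul_le_mul_of_nonneg_left (hbound ω) (norm_nonneg k)
      _ = B * ‖k‖ := mul_comm _ _
  have hmp : MeasurePreserving (Prod.snd : Ω × ℝ → ℝ)
      (P.prod (volume.restrict (Set.Icc T (T + Θ)))) (volume.restrict (Set.Icc T (T + Θ))) := by
    refine ⟨measurable_snd, ?_⟩
    rw [Measure.map_snd_prod, measure_univ, one_smul]
  have hIsnd : ∀ g : ℝ → ℝ, Integrable g (volume.restrict (Set.Icc T (T + Θ))) →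
      Integrable (fun z : Ω × ℝ => g z.2) (P.prod (volume.restrict (Set.Icc T (T + Θ)))) :=
    fun g hg => (hmp.integrable_comp hg.aestronglyMeasurable).2 hg
  have hz2S : ∀ᵐ z ∂(P.prod (volume.restrict (Set.Icc T (T + Θ)))), z.2 ∈ Set.Icc T (T + Θ) :=
    Measure.quasiMeasurePreserving_snd.tendsto_ae.eventually (ae_restrict_mem hSmeas)
  have hcbd : ∀ ω, |deriv (deriv f) (Θ⁻¹ * ∫ u in Set.Icc T (T + Θ), (x : ℝ → ℝ) u * E ω u) * (∫ w in Set.Icc T (T + Θ), (k : ℝ → ℝ) w * E ω w) * Θ⁻¹ * Θ⁻¹| ≤ C₂ * (Θ * (B * ‖k‖)) * |Θ⁻¹| * |Θ⁻¹| := by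
    intro ω
    rw [abs_mul, abs_mul, abs_mul]
    gcongr
    · exact hDb ω
    · exact hIkb ω
  -- step A : pointwise identity in ω
  have hA : ∀ ω, deriv (deriv f) ((inner ℝ x (e ω) : ℝ)) * (inner ℝ h (e ω) : ℝ)
        * (inner ℝ k (e ω) : ℝ)
      = ∫ v in Set.Icc T (T + Θ), (h : ℝ → ℝ) v * E ω v * (deriv (deriv f) (Θ⁻¹ * ∫ u in Set.Icc T (T + Θ), (x : ℝ → ℝ) u * E ω u) * (∫ w in Set.Icc T (T + Θ), (k : ℝ → ℝ) w * E ω w) * Θ⁻¹ * Θ⁻¹) := by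
    intro ω
    rw [integral_mul_const, hinner x ω, hinner h ω, hinner k ω]
    ring
  -- integrability for the first swap
  have hint1 : Integrable (Function.uncurry fun ω v => (h : ℝ → ℝ) v * E ω v
      * (deriv (deriv f) (Θ⁻¹ * ∫ u in Set.Icc T (T + Θ), (x : ℝ → ℝ) u * E ω u) * (∫ w in Set.Icc T (T + Θ), (k : ℝ → ℝ) w * E ω w) * Θ⁻¹ * Θ⁻¹)) (P.prod (volume.restrict (Set.Icc T (T + Θ)))) := by
    have hΦm : AEStronglyMeasurable (Function.uncurry fun ω v => (h : ℝ → ℝ) v * E ω v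
        * (deriv (deriv f) (Θ⁻¹ * ∫ u in Set.Icc T (T + Θ), (x : ℝ → ℝ) u * E ω u) * (∫ w in Set.Icc T (T + Θ), (k : ℝ → ℝ) w * E ω w) * Θ⁻¹ * Θ⁻¹)) (P.prod (volume.restrict (Set.Icc T (T + Θ)))) :=
      (((Lp.aestronglyMeasurable h).comp_snd).mul hEaesm).mul
        ((((hDm.mul hIkm).mul_const Θ⁻¹).mul_const Θ⁻¹).comp_fst)
    have hdom : Integrable (fun z : Ω × ℝ => |(h : ℝ → ℝ) z.2|
        * (M' * (C₂ * (Θ * (B * ‖k‖)) * |Θ⁻¹| * |Θ⁻¹|)))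
        (P.prod (volume.restrict (Set.Icc T (T + Θ)))) := by
      have hh : Integrable (fun u => |(h : ℝ → ℝ) u|) (volume.restrict (Set.Icc T (T + Θ))) :=
        ((Lp.memLp h).integrable one_le_two).abs
      exact (hIsnd _ (hh.mul_const _))
    refine hdom.mono' hΦm (hz2S.mono fun z hz => ?_)
    obtain ⟨ω, v⟩ := z
    simp only [Function.uncurry_apply_pair]
    rw [Real.norm_eq_abs, abs_mul, abs_mul, mul_assoc]
    refine mul_le_mul_of_nonneg_left ?_ (abs_nonneg _)
    exact mul_le_mul (habs ω v hz) (hcbd ω) (abs_nonneg _) hM'0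
  -- the per-v identity
  have hstep : ∀ v, v ∈ Set.Icc T (T + Θ) →
      (∫ ω, (h : ℝ → ℝ) v * E ω v * (deriv (deriv f) (Θ⁻¹ * ∫ u in Set.Icc T (T + Θ), (x : ℝ → ℝ) u * E ω u) * (∫ w in Set.Icc T (T + Θ), (k : ℝ → ℝ) w * E ω w) * Θ⁻¹ * Θ⁻¹) ∂P)
      = ∫ w in Set.Icc T (T + Θ), (h : ℝ → ℝ) v * (k : ℝ → ℝ) w *
          ∫ ω, deriv (deriv f) (Θ⁻¹ * ∫ u in Set.Icc T (T + Θ), (x : ℝ → ℝ) u * E ω u) * E ω v * E ω w / Θ ^ 2 ∂P := by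
    intro v hv
    have hEv : ∀ ω, |E ω v| ≤ M' := fun ω => habs ω v hv
    have hA2 : ∀ ω, E ω v * (deriv (deriv f) (Θ⁻¹ * ∫ u in Set.Icc T (T + Θ), (x : ℝ → ℝ) u * E ω u) * (∫ w in Set.Icc T (T + Θ), (k : ℝ → ℝ) w * E ω w) * Θ⁻¹ * Θ⁻¹)
        = ∫ w in Set.Icc T (T + Θ), (k : ℝ → ℝ) w * E ω w * (E ω v * deriv (deriv f) (Θ⁻¹ * ∫ u in Set.Icc T (T + Θ), (x : ℝ → ℝ) u * E ω u) * Θ⁻¹ * Θ⁻¹) := by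
      intro ω
      rw [integral_mul_const]
      ring
    have hint2 : Integrable (Function.uncurry fun ω w => (k : ℝ → ℝ) w * E ω w
        * (E ω v * deriv (deriv f) (Θ⁻¹ * ∫ u in Set.Icc T (T + Θ), (x : ℝ → ℝ) u * E ω u) * Θ⁻¹ * Θ⁻¹)) (P.prod (volume.restrict (Set.Icc T (T + Θ)))) := by
      have hΨm : AEStronglyMeasurable (Function.uncurry fun ω w => (k : ℝ → ℝ) w * E ω w
          * (E ω v * deriv (deriv f) (Θ⁻¹ * ∫ u in Set.Icc T (T + Θ), (x : ℝ → ℝ) u * E ω u) * Θ⁻¹ * Θ⁻¹)) (P.prod (volume.restrict (Set.Icc T (T + Θ)))) :=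
        (((Lp.aestronglyMeasurable k).comp_snd).mul hEaesm).mul
          (((((hEmeas.of_uncurry_right).aestronglyMeasurable.mul hDm).mul_const
            Θ⁻¹).mul_const Θ⁻¹).comp_fst)
      have hdom : Integrable (fun z : Ω × ℝ => |(k : ℝ → ℝ) z.2|
          * (M' * (M' * C₂ * |Θ⁻¹| * |Θ⁻¹|)))
          (P.prod (volume.restrict (Set.Icc T (T + Θ)))) :=
        hIsnd _ ((((Lp.memLp k).integrable one_le_two).abs).mul_const _)
      refine hdom.mono' hΨm (hz2S.mono fun z hz => ?_)
      obtain ⟨ω, w⟩ := z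
      simp only [Function.uncurry_apply_pair]
      rw [Real.norm_eq_abs, abs_mul, abs_mul, mul_assoc]
      refine mul_le_mul_of_nonneg_left ?_ (abs_nonneg _)
      refine mul_le_mul (habs ω w hz) ?_ (abs_nonneg _) hM'0
      rw [abs_mul, abs_mul, abs_mul]
      gcongr
      · exact hEv ω
      · exact hDb ω
    calc ∫ ω, (h : ℝ → ℝ) v * E ω v * (deriv (deriv f) (Θ⁻¹ * ∫ u in Set.Icc T (T + Θ), (x : ℝ → ℝ) u * E ω u) * (∫ w in Set.Icc T (T + Θ), (k : ℝ → ℝ) w * E ω w) * Θ⁻¹ * Θ⁻¹) ∂P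
        = ∫ ω, (h : ℝ → ℝ) v * (E ω v * (deriv (deriv f) (Θ⁻¹ * ∫ u in Set.Icc T (T + Θ), (x : ℝ → ℝ) u * E ω u) * (∫ w in Set.Icc T (T + Θ), (k : ℝ → ℝ) w * E ω w) * Θ⁻¹ * Θ⁻¹)) ∂P :=
          integral_congr_ae (Filter.Eventually.of_forall fun ω => mul_assoc _ _ _)
      _ = (h : ℝ → ℝ) v * ∫ ω, E ω v * (deriv (deriv f) (Θ⁻¹ * ∫ u in Set.Icc T (T + Θ), (x : ℝ → ℝ) u * E ω u) * (∫ w in Set.Icc T (T + Θ), (k : ℝ → ℝ) w * E ω w) * Θ⁻¹ * Θ⁻¹) ∂P := integral_const_mul _ _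
      _ = (h : ℝ → ℝ) v * ∫ ω, (∫ w in Set.Icc T (T + Θ),
            (k : ℝ → ℝ) w * E ω w * (E ω v * deriv (deriv f) (Θ⁻¹ * ∫ u in Set.Icc T (T + Θ), (x : ℝ → ℝ) u * E ω u) * Θ⁻¹ * Θ⁻¹)) ∂P := by
          rw [integral_congr_ae (Filter.Eventually.of_forall hA2)]
      _ = (h : ℝ → ℝ) v * ∫ w in Set.Icc T (T + Θ), ∫ ω,
            (k : ℝ → ℝ) w * E ω w * (E ω v * deriv (deriv f) (Θ⁻¹ * ∫ u in Set.Icc T (T + Θ), (x : ℝ → ℝ) u * E ω u) * Θ⁻¹ * Θ⁻¹) ∂P := by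
          rw [integral_integral_swap hint2]
      _ = ∫ w in Set.Icc T (T + Θ), (h : ℝ → ℝ) v * (k : ℝ → ℝ) w *
            ∫ ω, deriv (deriv f) (Θ⁻¹ * ∫ u in Set.Icc T (T + Θ), (x : ℝ → ℝ) u * E ω u) * E ω v * E ω w / Θ ^ 2 ∂P := by
          rw [← integral_const_mul]
          refine integral_congr_ae (Filter.Eventually.of_forall fun w => ?_)
          dsimp only
          have h6 : (∫ ω, (k : ℝ → ℝ) w * E ω w * (E ω v * deriv (deriv f) (Θ⁻¹ * ∫ u in Set.Icc T (T + Θ), (x : ℝ → ℝ) u * E ω u) * Θ⁻¹ * Θ⁻¹) ∂P)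
              = (k : ℝ → ℝ) w * ∫ ω, E ω w * (E ω v * deriv (deriv f) (Θ⁻¹ * ∫ u in Set.Icc T (T + Θ), (x : ℝ → ℝ) u * E ω u) * Θ⁻¹ * Θ⁻¹) ∂P := by
            rw [← integral_const_mul]
            exact integral_congr_ae (Filter.Eventually.of_forall fun ω => mul_assoc _ _ _)
          have h7 : (∫ ω, E ω w * (E ω v * deriv (deriv f) (Θ⁻¹ * ∫ u in Set.Icc T (T + Θ), (x : ℝ → ℝ) u * E ω u) * Θ⁻¹ * Θ⁻¹) ∂P)
              = ∫ ω, deriv (deriv f) (Θ⁻¹ * ∫ u in Set.Icc T (T + Θ), (x : ℝ → ℝ) u * E ω u) * E ω v * E ω w / Θ ^ 2 ∂P :=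
            integral_congr_ae (Filter.Eventually.of_forall fun ω => by ring)
          rw [h6, h7, ← mul_assoc]
  calc ∫ ω, deriv (deriv f) ((inner ℝ x (e ω) : ℝ)) * (inner ℝ h (e ω) : ℝ)
        * (inner ℝ k (e ω) : ℝ) ∂P
      = ∫ ω, (∫ v in Set.Icc T (T + Θ),
          (h : ℝ → ℝ) v * E ω v * (deriv (deriv f) (Θ⁻¹ * ∫ u in Set.Icc T (T + Θ), (x : ℝ → ℝ) u * E ω u) * (∫ w in Set.Icc T (T + Θ), (k : ℝ → ℝ) w * E ω w) * Θ⁻¹ * Θ⁻¹)) ∂P :=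
        integral_congr_ae (Filter.Eventually.of_forall hA)
    _ = ∫ v in Set.Icc T (T + Θ), ∫ ω,
          (h : ℝ → ℝ) v * E ω v * (deriv (deriv f) (Θ⁻¹ * ∫ u in Set.Icc T (T + Θ), (x : ℝ → ℝ) u * E ω u) * (∫ w in Set.Icc T (T + Θ), (k : ℝ → ℝ) w * E ω w) * Θ⁻¹ * Θ⁻¹) ∂P :=
        integral_integral_swap hint1
    _ = ∫ v in Set.Icc T (T + Θ), ∫ w in Set.Icc T (T + Θ),
          (h : ℝ → ℝ) v * (k : ℝ → ℝ) w *
            ∫ ω, deriv (deriv f) (Θ⁻¹ * ∫ u in Set.Icc T (T + Θ), (x : ℝ → ℝ) u * E ω u) * E ω v * E ω w / Θ ^ 2 ∂P :=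
        integral_congr_ae ((ae_restrict_mem hSmeas).mono fun v hv => hstep v hv)
end

section
/- Let H ∈ (0, 1/2]. There exists a constant C, depending only on H, such that for all real numbers t ≤ T ≤ t₁ < t₂: (∫_t^T ((t₂−s)^{H−1/2} − (t₁−s)^{H−1/2})² ds)^{1/2} ≤ C (t₂−t₁)(t₂−T)^{H−1}. -/
open Real MeasureTheory

/-- Bernoulli's inequality for nonpositive exponents and nonnegative `s`. -/
lemma bernoulli_nonpos {s p : ℝ} (hs : 0 ≤ s) (hp0 : p ≤ 0) (hp1 : -1 ≤ p) :
    1 + p * s ≤ (1 + s) ^ p := by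
  set q : ℝ := -p with hq
  have hq0 : 0 ≤ q := by simp [hq]; linarith
  have hq1 : q ≤ 1 := by simp [hq]; linarith
  have hx : (0:ℝ) < 1 + s := by linarith
  have hb : (1 + s) ^ q ≤ 1 + q * s :=
    rpow_one_add_le_one_add_mul_self (by linarith) hq0 hq1
  have hy : (0:ℝ) < (1 + s) ^ q := rpow_pos_of_pos hx q
  have hrw : (1 + s) ^ p = ((1 + s) ^ q)⁻¹ := by
    rw [show p = -q by rw [hq, neg_neg], Real.rpow_neg hx.le]
  rw [hrw, show p = -q by rw [hq, neg_neg]]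
  have hgoal : (1 + -q * s) * (1 + s) ^ q ≤ 1 := by
    rcases le_or_gt (1 + -q * s) 0 with h | h
    · nlinarith [hy.le]
    · calc (1 + -q * s) * (1 + s) ^ q ≤ (1 + -q * s) * (1 + q * s) :=
            mul_le_mul_of_nonneg_left hb h.le
        _ = 1 - (q*s)^2 := by ring
        _ ≤ 1 := by nlinarith [sq_nonneg (q*s)]
  rw [inv_eq_one_div, le_div_iff₀ hy]
  exact hgoal

/-- Key difference estimate: `b^α - (b+Δ)^α ≤ (-α) Δ b^(α-1)` for `-1 ≤ α ≤ 0`. -/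
lemma rpow_diff_le {b Δ α : ℝ} (hα0 : α ≤ 0) (hα1 : -1 ≤ α) (hb : 0 < b) (hΔ : 0 ≤ Δ) :
    b ^ α - (b + Δ) ^ α ≤ -α * Δ * b ^ (α - 1) := by
  have hber := bernoulli_nonpos (s := Δ / b) (p := α) (div_nonneg hΔ hb.le) hα0 hα1
  have h1p : (0:ℝ) ≤ 1 + Δ / b := by positivity
  have h1 : b ^ α * (1 + α * (Δ / b)) ≤ (b + Δ) ^ α := by
    rw [show b + Δ = b * (1 + Δ / b) by field_simp, Real.mul_rpow hb.le h1p]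
    exact mul_le_mul_of_nonneg_left hber (rpow_nonneg hb.le α)
  have h2 : b ^ (α - 1) = b ^ α / b := Real.rpow_sub_one hb.ne' α
  have h3 : b ^ α * (1 + α * (Δ / b)) = b ^ α + α * Δ * (b ^ α / b) := by
    field_simp
  rw [h2]; nlinarith [h1, h3]

set_option maxHeartbeats 1000000 in
/-- Rectangle-scheme kernel estimate for the rough Bergomi kernel
`g(t,s) = (t−s)^{H−1/2}`: for `H ∈ (0,1/2]` there is a constant `C = C(H)` such that
for all `t ≤ T ≤ t₁ < t₂`,
`(∫_t^T ((t₂−s)^{H−1/2} − (t₁−s)^{H−1/2})² ds)^{1/2} ≤ C (t₂−t₁)(t₂−T)^{H−1}`. -/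
theorem rough_bergomi_rectangle_kernel_estimate
    (H : ℝ) (hH0 : 0 < H) (hH : H ≤ 1 / 2) :
    ∃ C : ℝ, ∀ t T t₁ t₂ : ℝ, t ≤ T → T ≤ t₁ → t₁ < t₂ →
      Real.sqrt (∫ s in Set.Icc t T,
          ((t₂ - s) ^ (H - 1 / 2) - (t₁ - s) ^ (H - 1 / 2)) ^ 2)
        ≤ C * (t₂ - t₁) * (t₂ - T) ^ (H - 1) := by
  have h2H : (0:ℝ) < 2 - 2*H := by linarith
  set K : ℝ := 1/4 * 2 ^ (2 - 2*H) / (2 - 2*H) + 2 ^ (2 - 2*H) / (2*H) with hK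
  have hKpos : 0 < K := by
    have h1 : (0:ℝ) < (2:ℝ) ^ (2 - 2*H) := rpow_pos_of_pos (by norm_num) _
    positivity
  refine ⟨Real.sqrt K, ?_⟩
  intro t T t₁ t₂ ht hT h12
  have hΔ : (0:ℝ) < t₂ - t₁ := by linarith
  have hX : (0:ℝ) < t₂ - T := by linarith
  set Δ := t₂ - t₁ with hΔdef
  set X := t₂ - T with hXdef
  set g₁ : ℝ → ℝ := fun s => 1/4 * Δ^2 * (t₁ - s) ^ (2*H - 3) with hg1
  set g₂ : ℝ → ℝ := fun s => (t₁ - s) ^ (2*H - 1) with hg2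
  set F₁ : ℝ → ℝ := Set.indicator (Set.Iic (t₁ - Δ)) g₁ with hF1
  set F₂ : ℝ → ℝ := Set.indicator (Set.Ioi (t₁ - Δ)) g₂ with hF2
  set m : ℝ := min T (t₁ - Δ) with hm
  -- pointwise estimate
  have hpt : ∀ s ∈ Set.Icc t T, s ≠ t₁ →
      ((t₂ - s) ^ (H - 1/2) - (t₁ - s) ^ (H - 1/2)) ^ 2 ≤ F₁ s + F₂ s := by
    intro s hs hne
    obtain ⟨hst, hsT⟩ := hs
    have hslt : s < t₁ := lt_of_le_of_ne (hsT.trans hT) hne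
    have hb : (0:ℝ) < t₁ - s := by linarith
    have ha : t₂ - s = (t₁ - s) + Δ := by rw [hΔdef]; ring
    have hflip : ((t₂ - s) ^ (H - 1/2) - (t₁ - s) ^ (H - 1/2)) ^ 2
        = ((t₁ - s) ^ (H - 1/2) - (t₂ - s) ^ (H - 1/2)) ^ 2 := by ring
    have hd0 : 0 ≤ (t₁ - s) ^ (H - 1/2) - (t₂ - s) ^ (H - 1/2) := by
      have := rpow_le_rpow_of_nonpos hb (by linarith : t₁ - s ≤ t₂ - s)
        (by linarith : H - 1/2 ≤ 0)
      linarith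
    rcases le_or_gt s (t₁ - Δ) with hfar | hnear
    · -- far region
      have hF2z : F₂ s = 0 := Set.indicator_of_notMem (by simpa using hfar) g₂
      have hF1v : F₁ s = g₁ s := Set.indicator_of_mem (by simpa using hfar) g₁
      have hdle : (t₁ - s) ^ (H - 1/2) - (t₂ - s) ^ (H - 1/2)
          ≤ 1/2 * Δ * (t₁ - s) ^ (H - 1/2 - 1) := by
        have h := rpow_diff_le (b := t₁ - s) (Δ := Δ) (α := H - 1/2)
          (by linarith) (by linarith) hb hΔ.le
        rw [← ha] at h
        have hpow : (0:ℝ) ≤ (t₁ - s) ^ (H - 1/2 - 1) := rpow_nonneg hb.le _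
        nlinarith [h, hpow, mul_nonneg (mul_nonneg hH0.le hΔ.le) hpow]
      have hsq : ((t₁ - s) ^ (H - 1/2 - 1)) ^ 2 = (t₁ - s) ^ (2*H - 3) := by
        rw [← Real.rpow_natCast ((t₁ - s) ^ (H - 1/2 - 1)) 2, ← Real.rpow_mul hb.le]
        norm_num
        ring_nf
      rw [hflip, hF2z, hF1v, add_zero, hg1]
      calc ((t₁ - s) ^ (H - 1/2) - (t₂ - s) ^ (H - 1/2)) ^ 2
          ≤ (1/2 * Δ * (t₁ - s) ^ (H - 1/2 - 1)) ^ 2 := by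
            exact pow_le_pow_left₀ hd0 hdle 2
        _ = 1/4 * Δ^2 * ((t₁ - s) ^ (H - 1/2 - 1)) ^ 2 := by ring
        _ = 1/4 * Δ^2 * (t₁ - s) ^ (2*H - 3) := by rw [hsq]
    · -- near region
      have hF1z : F₁ s = 0 := Set.indicator_of_notMem (by simpa using hnear) g₁
      have hF2v : F₂ s = g₂ s := Set.indicator_of_mem (by simpa using hnear) g₂
      have hdle : (t₁ - s) ^ (H - 1/2) - (t₂ - s) ^ (H - 1/2) ≤ (t₁ - s) ^ (H - 1/2) := by
        have : (0:ℝ) ≤ (t₂ - s) ^ (H - 1/2) := rpow_nonneg (by linarith) _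
        linarith
      have hsq : ((t₁ - s) ^ (H - 1/2)) ^ 2 = (t₁ - s) ^ (2*H - 1) := by
        rw [← Real.rpow_natCast ((t₁ - s) ^ (H - 1/2)) 2, ← Real.rpow_mul hb.le]
        norm_num
        ring_nf
      rw [hflip, hF1z, hF2v, zero_add, hg2]
      calc ((t₁ - s) ^ (H - 1/2) - (t₂ - s) ^ (H - 1/2)) ^ 2
          ≤ ((t₁ - s) ^ (H - 1/2)) ^ 2 := pow_le_pow_left₀ hd0 hdle 2
        _ = (t₁ - s) ^ (2*H - 1) := hsq
  have hset1 : Set.Iic (t₁ - Δ) ∩ Set.Icc t T = Set.Icc t m := by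
    ext x
    simp only [Set.mem_inter_iff, Set.mem_Iic, Set.mem_Icc, hm, le_min_iff]
    tauto
  -- integrability of F₁
  have hInt1 : IntegrableOn F₁ (Set.Icc t T) := by
    rw [hF1, IntegrableOn, integrable_indicator_iff measurableSet_Iic, IntegrableOn,
      Measure.restrict_restrict measurableSet_Iic, hset1]
    have hcont : ContinuousOn g₁ (Set.Icc t m) := by
      apply continuousOn_const.mul
      apply ContinuousOn.rpow_const (continuous_const.sub continuous_id).continuousOn
      intro x hx
      left
      have : x ≤ t₁ - Δ := hx.2.trans (min_le_right _ _)
      simp only [Pi.sub_apply, id_eq]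
      intro h
      nlinarith [hΔ]
    exact hcont.integrableOn_Icc
  -- integrability of F₂
  have hIntg2 : IntegrableOn g₂ (Set.Ioc (t₁ - Δ) t₁) := by
    have hii : IntervalIntegrable (fun x : ℝ => x ^ (2*H - 1)) volume Δ 0 :=
      intervalIntegral.intervalIntegrable_rpow' (by linarith)
    have := hii.comp_sub_left t₁
    simp only [sub_zero] at this
    rw [intervalIntegrable_iff_integrableOn_Ioc_of_le (by linarith)] at this
    exact this
  have hsub2 : Set.Ioi (t₁ - Δ) ∩ Set.Icc t T ⊆ Set.Ioc (t₁ - Δ) t₁ := by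
    intro s hs
    exact ⟨hs.1, hs.2.2.trans hT⟩
  have hInt2 : IntegrableOn F₂ (Set.Icc t T) := by
    rw [hF2, IntegrableOn, integrable_indicator_iff measurableSet_Ioi, IntegrableOn,
      Measure.restrict_restrict measurableSet_Ioi]
    exact hIntg2.mono_set hsub2
  -- a.e. bound and monotonicity
  have hae_le : (fun s => ((t₂ - s) ^ (H - 1/2) - (t₁ - s) ^ (H - 1/2)) ^ 2)
      ≤ᵐ[volume.restrict (Set.Icc t T)] fun s => F₁ s + F₂ s := by
    have hne : ∀ᵐ s ∂(volume.restrict (Set.Icc t T)), s ≠ t₁ := by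
      apply ae_restrict_of_ae
      rw [ae_iff]
      have : {a : ℝ | ¬a ≠ t₁} = {t₁} := by ext x; simp
      rw [this]
      exact measure_singleton t₁
    filter_upwards [ae_restrict_mem measurableSet_Icc, hne] with s hs hne'
    exact hpt s hs hne'
  have hmono : (∫ s in Set.Icc t T, ((t₂ - s) ^ (H - 1/2) - (t₁ - s) ^ (H - 1/2)) ^ 2)
      ≤ ∫ s in Set.Icc t T, (F₁ s + F₂ s) :=
    integral_mono_of_nonneg (Filter.Eventually.of_forall fun s => sq_nonneg _)
      (hInt1.add hInt2) hae_le
  have hsplit : (∫ s in Set.Icc t T, (F₁ s + F₂ s))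
      = (∫ s in Set.Icc t T, F₁ s) + ∫ s in Set.Icc t T, F₂ s :=
    integral_add hInt1 hInt2
  -- bound for F₁ integral
  have hhalf : X / 2 ≤ t₁ - m := by
    rcases min_le_iff.mp (le_refl m) with _ | _
    all_goals rcases le_total T (t₁ - Δ) with h | h
    · rw [hm, min_eq_left h]; rw [hXdef, hΔdef] at *; linarith
    · rw [hm, min_eq_right h]; rw [hXdef, hΔdef] at *; linarith
    · rw [hm, min_eq_left h]; rw [hXdef, hΔdef] at *; linarith
    · rw [hm, min_eq_right h]; rw [hXdef, hΔdef] at *; linarith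
  have hpow2 : ((X/2):ℝ) ^ (2*H - 2) = 2 ^ (2 - 2*H) * X ^ (2*H - 2) := by
    rw [div_rpow hX.le (by norm_num : (0:ℝ) ≤ 2), div_eq_mul_inv,
      ← Real.rpow_neg (by norm_num : (0:ℝ) ≤ 2)]
    rw [show -(2*H - 2) = 2 - 2*H by ring]
    ring
  have hXm : (t₁ - m) ^ (2*H - 2) ≤ 2 ^ (2 - 2*H) * X ^ (2*H - 2) := by
    rw [← hpow2]
    exact rpow_le_rpow_of_nonpos (by linarith) hhalf (by linarith)
  have hB1 : (∫ s in Set.Icc t T, F₁ s)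
      ≤ 1/4 * 2 ^ (2 - 2*H) / (2 - 2*H) * (Δ^2 * X ^ (2*H - 2)) := by
    rw [hF1, integral_indicator measurableSet_Iic,
      Measure.restrict_restrict measurableSet_Iic, hset1]
    rcases le_or_gt t m with htm | htm
    · rw [integral_Icc_eq_integral_Ioc, ← intervalIntegral.integral_of_le htm]
      have hmt₁ : Δ ≤ t₁ - m := by
        have := min_le_right T (t₁ - Δ); rw [← hm] at this; linarith
      have hcalc : (∫ s in t..m, g₁ s)
          = 1/4 * Δ^2 * ∫ x in (t₁ - m)..(t₁ - t), x ^ (2*H - 3) := by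
        rw [hg1]
        rw [intervalIntegral.integral_const_mul]
        rw [intervalIntegral.integral_comp_sub_left (fun x => x ^ (2*H - 3)) t₁]
      rw [hcalc]
      have hval : (∫ x in (t₁ - m)..(t₁ - t), x ^ (2*H - 3))
          = ((t₁ - t) ^ (2*H - 2) - (t₁ - m) ^ (2*H - 2)) / (2*H - 2) := by
        rw [integral_rpow (Or.inr ⟨by intro h; nlinarith, by
          intro h
          have h1 : (0:ℝ) < t₁ - m := by linarith
          have h2 : (0:ℝ) < t₁ - t := by linarith
          rcases Set.mem_uIcc.mp h with ⟨_, h'⟩ | ⟨_, h'⟩ <;> linarith⟩)]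
        rw [show (2*H - 3 + 1 : ℝ) = 2*H - 2 by ring]
      rw [hval]
      have hBpos : (0:ℝ) ≤ (t₁ - t) ^ (2*H - 2) := rpow_nonneg (by linarith) _
      have hkey : ((t₁ - t) ^ (2*H - 2) - (t₁ - m) ^ (2*H - 2)) / (2*H - 2)
          = ((t₁ - m) ^ (2*H - 2) - (t₁ - t) ^ (2*H - 2)) / (2 - 2*H) := by
        rw [div_eq_div_iff (by linarith) (by linarith)]
        ring
      have hstep : ((t₁ - t) ^ (2*H - 2) - (t₁ - m) ^ (2*H - 2)) / (2*H - 2)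
          ≤ (t₁ - m) ^ (2*H - 2) / (2 - 2*H) := by
        rw [hkey]
        exact (div_le_div_iff_of_pos_right h2H).mpr (by linarith [hBpos])
      calc 1/4 * Δ^2 * (((t₁ - t) ^ (2*H - 2) - (t₁ - m) ^ (2*H - 2)) / (2*H - 2))
          ≤ 1/4 * Δ^2 * ((t₁ - m) ^ (2*H - 2) / (2 - 2*H)) :=
            mul_le_mul_of_nonneg_left hstep (by positivity)
        _ ≤ 1/4 * Δ^2 * (2 ^ (2 - 2*H) * X ^ (2*H - 2) / (2 - 2*H)) :=
            mul_le_mul_of_nonneg_left ((div_le_div_iff_of_pos_right h2H).mpr hXm) (by positivity)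
        _ = 1/4 * 2 ^ (2 - 2*H) / (2 - 2*H) * (Δ^2 * X ^ (2*H - 2)) := by ring
    · rw [Set.Icc_eq_empty (not_le.mpr htm)]
      simp only [Measure.restrict_empty, integral_zero_measure]
      positivity
  -- bound for F₂ integral
  have hB2 : (∫ s in Set.Icc t T, F₂ s)
      ≤ 2 ^ (2 - 2*H) / (2*H) * (Δ^2 * X ^ (2*H - 2)) := by
    rw [hF2, integral_indicator measurableSet_Ioi,
      Measure.restrict_restrict measurableSet_Ioi]
    rcases le_or_gt T (t₁ - Δ) with hTd | hTd
    · have hempty : Set.Ioi (t₁ - Δ) ∩ Set.Icc t T = ∅ := by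
        ext x
        simp only [Set.mem_inter_iff, Set.mem_Ioi, Set.mem_Icc, Set.mem_empty_iff_false,
          iff_false, not_and]
        intro h1 h2
        intro h3
        linarith
      rw [hempty]
      simp only [Measure.restrict_empty, integral_zero_measure]
      positivity
    · have hXΔ : X / 2 ≤ Δ := by rw [hXdef, hΔdef] at *; linarith
      have hnn : 0 ≤ᵐ[volume.restrict (Set.Ioc (t₁ - Δ) t₁)] g₂ := by
        filter_upwards [ae_restrict_mem measurableSet_Ioc] with s hs
        exact rpow_nonneg (by linarith [hs.2] : (0:ℝ) ≤ t₁ - s) _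
      have hmono2 : (∫ s in Set.Ioi (t₁ - Δ) ∩ Set.Icc t T, g₂ s)
          ≤ ∫ s in Set.Ioc (t₁ - Δ) t₁, g₂ s :=
        setIntegral_mono_set hIntg2 hnn (HasSubset.Subset.eventuallyLE hsub2)
      have hval2 : (∫ s in Set.Ioc (t₁ - Δ) t₁, g₂ s) = Δ ^ (2*H) / (2*H) := by
        rw [← intervalIntegral.integral_of_le (by linarith : t₁ - Δ ≤ t₁), hg2]
        rw [intervalIntegral.integral_comp_sub_left (fun x => x ^ (2*H - 1)) t₁]
        rw [show t₁ - t₁ = (0:ℝ) by ring, show t₁ - (t₁ - Δ) = Δ by ring]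
        rw [integral_rpow (Or.inl (by linarith : (-1:ℝ) < 2*H - 1))]
        rw [show (2*H - 1 + 1) = 2*H by ring]
        rw [Real.zero_rpow (by positivity : (2*H:ℝ) ≠ 0)]
        ring
      have hΔpow : Δ ^ (2*H) = Δ^2 * Δ ^ (2*H - 2) := by
        rw [show Δ^2 = Δ^((2:ℕ):ℝ) from (Real.rpow_natCast Δ 2).symm, ← Real.rpow_add hΔ]
        congr 1
        push_cast
        ring
      have hΔX : Δ ^ (2*H - 2) ≤ 2 ^ (2 - 2*H) * X ^ (2*H - 2) := by
        rw [← hpow2]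
        exact rpow_le_rpow_of_nonpos (by linarith) hXΔ (by linarith)
      calc (∫ s in Set.Ioi (t₁ - Δ) ∩ Set.Icc t T, g₂ s)
          ≤ Δ ^ (2*H) / (2*H) := hval2 ▸ hmono2
        _ = Δ^2 * Δ ^ (2*H - 2) / (2*H) := by rw [hΔpow]
        _ ≤ Δ^2 * (2 ^ (2 - 2*H) * X ^ (2*H - 2)) / (2*H) :=
            (div_le_div_iff_of_pos_right (by linarith : (0:ℝ) < 2*H)).mpr
              (mul_le_mul_of_nonneg_left hΔX (sq_nonneg Δ))
        _ = 2 ^ (2 - 2*H) / (2*H) * (Δ^2 * X ^ (2*H - 2)) := by ring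
  -- total bound
  have htotal : (∫ s in Set.Icc t T, ((t₂ - s) ^ (H - 1/2) - (t₁ - s) ^ (H - 1/2)) ^ 2)
      ≤ K * (Δ^2 * X ^ (2*H - 2)) := by
    calc (∫ s in Set.Icc t T, ((t₂ - s) ^ (H - 1/2) - (t₁ - s) ^ (H - 1/2)) ^ 2)
        ≤ ∫ s in Set.Icc t T, (F₁ s + F₂ s) := hmono
      _ = (∫ s in Set.Icc t T, F₁ s) + ∫ s in Set.Icc t T, F₂ s := hsplit
      _ ≤ 1/4 * 2 ^ (2 - 2*H) / (2 - 2*H) * (Δ^2 * X ^ (2*H - 2))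
          + 2 ^ (2 - 2*H) / (2*H) * (Δ^2 * X ^ (2*H - 2)) := add_le_add hB1 hB2
      _ = K * (Δ^2 * X ^ (2*H - 2)) := by rw [hK]; ring
  have hXsq : X ^ (2*H - 2) = (X ^ (H - 1))^2 := by
    rw [← Real.rpow_natCast (X ^ (H - 1)) 2, ← Real.rpow_mul hX.le]
    congr 1
    push_cast
    ring
  have hfin : Real.sqrt (K * (Δ^2 * X ^ (2*H - 2))) = Real.sqrt K * Δ * X ^ (H - 1) := by
    have h1 : Δ^2 * X ^ (2*H - 2) = (Δ * X ^ (H - 1))^2 := by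
      rw [hXsq]; ring
    rw [h1, Real.sqrt_mul hKpos.le, Real.sqrt_sq (by positivity)]
    ring
  calc Real.sqrt (∫ s in Set.Icc t T, ((t₂ - s) ^ (H - 1/2) - (t₁ - s) ^ (H - 1/2)) ^ 2)
      ≤ Real.sqrt (K * (Δ^2 * X ^ (2*H - 2))) := Real.sqrt_le_sqrt htotal
    _ = Real.sqrt K * Δ * X ^ (H - 1) := hfin
end

section
/- Let H ∈ (0, 1/2]. There exists a constant C, depending only on H, such that for all real numbers t ≤ T ≤ t₁ ≤ t₂ ≤ t₃ with t₁ < t₃: (∫_t^T ((t₂−s)^{H−1/2} − ((t₃−t₂)/(t₃−t₁))(t₁−s)^{H−1/2} − ((t₂−t₁)/(t₃−t₁))(t₃−s)^{H−1/2})² ds)^{1/2} ≤ C (t₃−t₁)² (t₃−T)^{H−2}. -/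
open Real MeasureTheory intervalIntegral

/-- Bernoulli / tangent-line inequality for `x ^ p` with `p ≤ 0`. -/
private lemma bern_tangent {p x y : ℝ} (hp : p ≤ 0) (hx : 0 < x) (hy : 0 < y) :
    x ^ p + p * x ^ (p - 1) * (y - x) ≤ y ^ p := by
  have hxne : x ≠ 0 := hx.ne'
  have hu : 0 < y / x := div_pos hy hx
  have hlog : Real.log (y / x) ≤ y / x - 1 := Real.log_le_sub_one_of_pos hu
  have h2 : p * (y / x - 1) ≤ p * Real.log (y / x) := mul_le_mul_of_nonpos_left hlog hp
  have h3 : 1 + p * Real.log (y / x) ≤ (y / x) ^ p := by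
    rw [Real.rpow_def_of_pos hu]
    have := Real.add_one_le_exp (Real.log (y / x) * p)
    linarith [this]
  have hxp : 0 < x ^ p := Real.rpow_pos_of_pos hx p
  have h4 : (1 + p * (y / x - 1)) * x ^ p ≤ (y / x) ^ p * x ^ p := by
    have : 1 + p * (y / x - 1) ≤ (y / x) ^ p := by linarith
    exact mul_le_mul_of_nonneg_right this hxp.le
  have h5 : (y / x) ^ p * x ^ p = y ^ p := by
    rw [← Real.mul_rpow (le_of_lt hu) hx.le, div_mul_cancel₀ _ hxne]
  have h6 : x ^ p + p * x ^ (p - 1) * (y - x) = (1 + p * (y / x - 1)) * x ^ p := by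
    have h1 : x ^ (p - 1) = x ^ p / x := by
      rw [Real.rpow_sub hx, Real.rpow_one]
    rw [h1]; field_simp
  rw [h6, ← h5]; exact h4

set_option maxHeartbeats 1000000 in
/-- Convexity: linear interpolation lies above. -/
private lemma interp_nonpos {p a b c : ℝ} (hp : p ≤ 0) (ha : 0 < a)
    (hab : a ≤ b) (hbc : b ≤ c) (hac : a < c) :
    b ^ p - ((c - b) / (c - a)) * a ^ p - ((b - a) / (c - a)) * c ^ p ≤ 0 := by
  have hb : 0 < b := lt_of_lt_of_le ha hab
  have hc : 0 < c := lt_of_lt_of_le hb hbc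
  have hca : 0 < c - a := by linarith
  have hl : 0 ≤ (c - b) / (c - a) := div_nonneg (by linarith) hca.le
  have hm : 0 ≤ (b - a) / (c - a) := div_nonneg (by linarith) hca.le
  have e1 := bern_tangent hp hb ha
  have e2 := bern_tangent hp hb hc
  have h1 := mul_le_mul_of_nonneg_left e1 hl
  have h2 := mul_le_mul_of_nonneg_left e2 hm
  have hsum : (c - b) / (c - a) + (b - a) / (c - a) = 1 := by
    field_simp; ring
  have hcomb : ((c - b) / (c - a)) * (a - b) + ((b - a) / (c - a)) * (c - b) = 0 := by
    field_simp; ring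
  have hid : ((c - b) / (c - a)) * (b ^ p + p * b ^ (p - 1) * (a - b))
      + ((b - a) / (c - a)) * (b ^ p + p * b ^ (p - 1) * (c - b)) = b ^ p := by
    linear_combination (b ^ p) * hsum + (p * b ^ (p - 1)) * hcomb
  linarith [h1, h2, hid]

set_option maxHeartbeats 1000000 in
/-- Second-order interpolation error bound. -/
private lemma interp_abs {p a b c : ℝ} (hp0 : -(1 / 2) < p) (hp : p ≤ 0) (ha : 0 < a)
    (hab : a ≤ b) (hbc : b ≤ c) (hac : a < c) :
    |b ^ p - ((c - b) / (c - a)) * a ^ p - ((b - a) / (c - a)) * c ^ p|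
      ≤ (c - a) ^ 2 * a ^ (p - 2) := by
  have hb : 0 < b := lt_of_lt_of_le ha hab
  have hc : 0 < c := lt_of_lt_of_le hb hbc
  have hca : 0 < c - a := by linarith
  have hl : 0 ≤ (c - b) / (c - a) := div_nonneg (by linarith) hca.le
  have hm : 0 ≤ (b - a) / (c - a) := div_nonneg (by linarith) hca.le
  have hA2 : 0 < a ^ (p - 2) := Real.rpow_pos_of_pos ha _
  rw [abs_of_nonpos (interp_nonpos hp ha hab hbc hac)]
  -- bound the negative part
  have e3 := bern_tangent hp ha hb
  have e4 := bern_tangent hp hc hb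
  have h3 : a ^ p - b ^ p ≤ (-p) * a ^ (p - 1) * (b - a) := by nlinarith [e3]
  have h4 : c ^ p - b ^ p ≤ p * c ^ (p - 1) * (c - b) := by nlinarith [e4]
  have h5 := mul_le_mul_of_nonneg_left h3 hl
  have h6 := mul_le_mul_of_nonneg_left h4 hm
  -- ρ identities
  have hρ0 : 0 ≤ (c - b) * (b - a) / (c - a) :=
    div_nonneg (mul_nonneg (by linarith) (by linarith)) hca.le
  have hρΔ : (c - b) * (b - a) / (c - a) ≤ c - a := by
    rw [div_le_iff₀ hca]
    nlinarith
  -- step: -(f) ≤ (-p) * ρ * (a^(p-1) - c^(p-1))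
  have step1 : -(b ^ p - ((c - b) / (c - a)) * a ^ p - ((b - a) / (c - a)) * c ^ p)
      ≤ (-p) * ((c - b) * (b - a) / (c - a)) * (a ^ (p - 1) - c ^ (p - 1)) := by
    have expand : ((c - b) / (c - a)) * ((-p) * a ^ (p - 1) * (b - a))
        + ((b - a) / (c - a)) * (p * c ^ (p - 1) * (c - b))
        = (-p) * ((c - b) * (b - a) / (c - a)) * (a ^ (p - 1) - c ^ (p - 1)) := by
      field_simp; ring
    have hsum : (c - b) / (c - a) + (b - a) / (c - a) = 1 := by field_simp; ring
    have hid2 : ((c - b) / (c - a)) * a ^ p + ((b - a) / (c - a)) * c ^ p - b ^ p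
        = ((c - b) / (c - a)) * (a ^ p - b ^ p) + ((b - a) / (c - a)) * (c ^ p - b ^ p) := by
      linear_combination (b ^ p) * hsum
    linarith [h5, h6, expand, hid2]
  -- bern at exponent p - 1
  have e5 := bern_tangent (by linarith : p - 1 ≤ 0) ha hc
  have h7 : a ^ (p - 1) - c ^ (p - 1) ≤ (1 - p) * a ^ (p - 1 - 1) * (c - a) := by
    nlinarith [e5, sq_nonneg (c - a)]
  have h7' : a ^ (p - 1 - 1) = a ^ (p - 2) := by rw [show p - 1 - 1 = p - 2 from by ring]
  rw [h7'] at h7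
  have hAC : 0 ≤ a ^ (p - 1) - c ^ (p - 1) :=
    sub_nonneg.2 (Real.rpow_le_rpow_of_nonpos ha hac.le (by linarith))
  have step2 : (-p) * ((c - b) * (b - a) / (c - a)) * (a ^ (p - 1) - c ^ (p - 1))
      ≤ (-p) * (c - a) * ((1 - p) * a ^ (p - 2) * (c - a)) := by
    have hp' : 0 ≤ -p := by linarith
    have t1 : (-p) * ((c - b) * (b - a) / (c - a)) * (a ^ (p - 1) - c ^ (p - 1))
        ≤ (-p) * (c - a) * (a ^ (p - 1) - c ^ (p - 1)) := by
      apply mul_le_mul_of_nonneg_right _ hAC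
      exact mul_le_mul_of_nonneg_left hρΔ hp'
    have t2 : (-p) * (c - a) * (a ^ (p - 1) - c ^ (p - 1))
        ≤ (-p) * (c - a) * ((1 - p) * a ^ (p - 2) * (c - a)) := by
      apply mul_le_mul_of_nonneg_left h7
      exact mul_nonneg hp' hca.le
    linarith
  have step3 : (-p) * (c - a) * ((1 - p) * a ^ (p - 2) * (c - a))
      ≤ (c - a) ^ 2 * a ^ (p - 2) := by
    have hcoef : (-p) * (1 - p) ≤ 1 := by
      have hpq : p * (p + 1 / 2) ≤ 0 := mul_nonpos_of_nonpos_of_nonneg hp (by linarith)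
      nlinarith [hpq]
    have hre : (-p) * (c - a) * ((1 - p) * a ^ (p - 2) * (c - a))
        = ((-p) * (1 - p)) * ((c - a) ^ 2 * a ^ (p - 2)) := by ring
    rw [hre]
    have hpos : 0 ≤ (c - a) ^ 2 * a ^ (p - 2) := mul_nonneg (sq_nonneg _) hA2.le
    calc ((-p) * (1 - p)) * ((c - a) ^ 2 * a ^ (p - 2))
        ≤ 1 * ((c - a) ^ 2 * a ^ (p - 2)) := mul_le_mul_of_nonneg_right hcoef hpos
      _ = (c - a) ^ 2 * a ^ (p - 2) := one_mul _
  linarith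

/-- Crude bound. -/
private lemma crude_abs {p a b c : ℝ} (hp : p ≤ 0) (ha : 0 < a)
    (hab : a ≤ b) (hbc : b ≤ c) (hac : a < c) :
    |b ^ p - ((c - b) / (c - a)) * a ^ p - ((b - a) / (c - a)) * c ^ p|
      ≤ 3 * a ^ p := by
  have hb : 0 < b := lt_of_lt_of_le ha hab
  have hc : 0 < c := lt_of_lt_of_le hb hbc
  have hca : 0 < c - a := by linarith
  have hl0 : 0 ≤ (c - b) / (c - a) := div_nonneg (by linarith) hca.le
  have hm0 : 0 ≤ (b - a) / (c - a) := div_nonneg (by linarith) hca.le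
  have hl1 : (c - b) / (c - a) ≤ 1 := by rw [div_le_one hca]; linarith
  have hm1 : (b - a) / (c - a) ≤ 1 := by rw [div_le_one hca]; linarith
  have hap : 0 < a ^ p := Real.rpow_pos_of_pos ha _
  have hba : b ^ p ≤ a ^ p := Real.rpow_le_rpow_of_nonpos ha hab hp
  have hcap : c ^ p ≤ a ^ p := Real.rpow_le_rpow_of_nonpos ha (by linarith) hp
  have hbp : 0 < b ^ p := Real.rpow_pos_of_pos hb _
  have hcp : 0 < c ^ p := Real.rpow_pos_of_pos hc _
  rw [abs_le]
  constructor
  · have t1 : ((c - b) / (c - a)) * a ^ p ≤ a ^ p := by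
      nlinarith
    have t2 : ((b - a) / (c - a)) * c ^ p ≤ a ^ p := by
      nlinarith
    nlinarith
  · have t1 : 0 ≤ ((c - b) / (c - a)) * a ^ p := mul_nonneg hl0 hap.le
    have t2 : 0 ≤ ((b - a) / (c - a)) * c ^ p := mul_nonneg hm0 hcp.le
    nlinarith

/-- Pointwise second-order bound in `s`-form. -/
private lemma ptw_interp {H t₁ t₂ t₃ s : ℝ} (hH0 : 0 < H) (hH : H ≤ 1 / 2)
    (h12 : t₁ ≤ t₂) (h23 : t₂ ≤ t₃) (h13 : t₁ < t₃) (hs : s ≤ t₁ - (t₃ - t₁)) :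
    ((t₂ - s) ^ (H - 1 / 2) - ((t₃ - t₂) / (t₃ - t₁)) * (t₁ - s) ^ (H - 1 / 2)
      - ((t₂ - t₁) / (t₃ - t₁)) * (t₃ - s) ^ (H - 1 / 2)) ^ 2
      ≤ (t₃ - t₁) ^ 4 * (t₁ - s) ^ (2 * H - 5) := by
  have ha : 0 < t₁ - s := by linarith
  have key := interp_abs (p := H - 1 / 2) (a := t₁ - s) (b := t₂ - s) (c := t₃ - s)
    (by linarith) (by linarith) ha (by linarith) (by linarith) (by linarith)
  rw [show (t₃ - s) - (t₂ - s) = t₃ - t₂ from by ring,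
    show (t₃ - s) - (t₁ - s) = t₃ - t₁ from by ring,
    show (t₂ - s) - (t₁ - s) = t₂ - t₁ from by ring] at key
  have habs := abs_le.mp key
  have hsq := sq_le_sq' habs.1 habs.2
  calc ((t₂ - s) ^ (H - 1 / 2) - ((t₃ - t₂) / (t₃ - t₁)) * (t₁ - s) ^ (H - 1 / 2)
      - ((t₂ - t₁) / (t₃ - t₁)) * (t₃ - s) ^ (H - 1 / 2)) ^ 2
      ≤ ((t₃ - t₁) ^ 2 * (t₁ - s) ^ (H - 1 / 2 - 2)) ^ 2 := hsq
    _ = (t₃ - t₁) ^ 4 * (t₁ - s) ^ (2 * H - 5) := by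
        rw [mul_pow, ← pow_mul, sq, ← Real.rpow_add ha,
          show H - 1 / 2 - 2 + (H - 1 / 2 - 2) = 2 * H - 5 from by ring]

/-- Pointwise crude bound in `s`-form. -/
private lemma ptw_crude {H t₁ t₂ t₃ s : ℝ} (hH0 : 0 < H) (hH : H ≤ 1 / 2)
    (h12 : t₁ ≤ t₂) (h23 : t₂ ≤ t₃) (h13 : t₁ < t₃) (hs : s < t₁) :
    ((t₂ - s) ^ (H - 1 / 2) - ((t₃ - t₂) / (t₃ - t₁)) * (t₁ - s) ^ (H - 1 / 2)
      - ((t₂ - t₁) / (t₃ - t₁)) * (t₃ - s) ^ (H - 1 / 2)) ^ 2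
      ≤ 9 * (t₁ - s) ^ (2 * H - 1) := by
  have ha : 0 < t₁ - s := by linarith
  have key := crude_abs (p := H - 1 / 2) (a := t₁ - s) (b := t₂ - s) (c := t₃ - s)
    (by linarith) ha (by linarith) (by linarith) (by linarith)
  rw [show (t₃ - s) - (t₂ - s) = t₃ - t₂ from by ring,
    show (t₃ - s) - (t₁ - s) = t₃ - t₁ from by ring,
    show (t₂ - s) - (t₁ - s) = t₂ - t₁ from by ring] at key
  have habs := abs_le.mp key
  have hsq := sq_le_sq' habs.1 habs.2
  calc ((t₂ - s) ^ (H - 1 / 2) - ((t₃ - t₂) / (t₃ - t₁)) * (t₁ - s) ^ (H - 1 / 2)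
      - ((t₂ - t₁) / (t₃ - t₁)) * (t₃ - s) ^ (H - 1 / 2)) ^ 2
      ≤ (3 * (t₁ - s) ^ (H - 1 / 2)) ^ 2 := hsq
    _ = 9 * (t₁ - s) ^ (2 * H - 1) := by
        rw [mul_pow, sq ((t₁ - s) ^ (H - 1 / 2)), ← Real.rpow_add ha,
          show H - 1 / 2 + (H - 1 / 2) = 2 * H - 1 from by ring]
        norm_num

set_option maxHeartbeats 1000000 in
/-- Trapezoidal-scheme kernel estimate for the rough Bergomi kernel
`g(t,s) = (t−s)^{H−1/2}`: for `H ∈ (0,1/2]` there is a constant `C = C(H)` such that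
for all `t ≤ T ≤ t₁ ≤ t₂ ≤ t₃` with `t₁ < t₃`,
`(∫_t^T ((t₂−s)^{H−1/2} − ((t₃−t₂)/(t₃−t₁))(t₁−s)^{H−1/2}
  − ((t₂−t₁)/(t₃−t₁))(t₃−s)^{H−1/2})² ds)^{1/2} ≤ C (t₃−t₁)² (t₃−T)^{H−2}`. -/
theorem rough_bergomi_trapezoidal_kernel_estimate
    (H : ℝ) (hH0 : 0 < H) (hH : H ≤ 1 / 2) :
    ∃ C : ℝ, ∀ t T t₁ t₂ t₃ : ℝ, t ≤ T → T ≤ t₁ → t₁ ≤ t₂ → t₂ ≤ t₃ → t₁ < t₃ →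
      Real.sqrt (∫ s in Set.Icc t T,
          ((t₂ - s) ^ (H - 1 / 2)
            - ((t₃ - t₂) / (t₃ - t₁)) * (t₁ - s) ^ (H - 1 / 2)
            - ((t₂ - t₁) / (t₃ - t₁)) * (t₃ - s) ^ (H - 1 / 2)) ^ 2)
        ≤ C * (t₃ - t₁) ^ 2 * (t₃ - T) ^ (H - 2) := by
  have h4H : (0:ℝ) < 4 - 2 * H := by linarith
  have h2H0 : (0:ℝ) < 2 * H := by linarith
  have hK : (0:ℝ) < 16 / (4 - 2 * H) + 144 / (2 * H) := by positivity
  refine ⟨Real.sqrt (16 / (4 - 2 * H) + 144 / (2 * H)), ?_⟩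
  intro t T t₁ t₂ t₃ htT hTt1 h12 h23 h13
  have hΔ : (0:ℝ) < t₃ - t₁ := by linarith
  have hτ : (0:ℝ) < t₃ - T := by linarith
  have h2H1 : (-1:ℝ) < 2 * H - 1 := by linarith
  set φ : ℝ → ℝ := fun s => ((t₂ - s) ^ (H - 1 / 2)
      - ((t₃ - t₂) / (t₃ - t₁)) * (t₁ - s) ^ (H - 1 / 2)
      - ((t₂ - t₁) / (t₃ - t₁)) * (t₃ - s) ^ (H - 1 / 2)) ^ 2 with hφdef
  have hφ0 : ∀ s, 0 ≤ φ s := fun s => sq_nonneg _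
  have hφm : Measurable φ := by rw [hφdef]; fun_prop
  -- antitone rpow comparison with 16·(t₃-T)^(2H-4)
  have hτ2 : ∀ x : ℝ, 0 < x → (t₃ - T) / 2 ≤ x →
      x ^ (2 * H - 4) ≤ 16 * (t₃ - T) ^ (2 * H - 4) := by
    intro x hx hhalf
    have h1 : x ^ (2 * H - 4) ≤ ((t₃ - T) / 2) ^ (2 * H - 4) :=
      Real.rpow_le_rpow_of_nonpos (by positivity) hhalf (by linarith)
    have h2 : ((t₃ - T) / 2) ^ (2 * H - 4) = (t₃ - T) ^ (2 * H - 4) / 2 ^ (2 * H - 4) :=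
      Real.div_rpow hτ.le (by norm_num : (0:ℝ) ≤ 2) (2 * H - 4)
    have h3 : (1 / 16 : ℝ) ≤ 2 ^ (2 * H - 4) := by
      have h5 : (2:ℝ) ^ ((-4:ℝ)) ≤ 2 ^ (2 * H - 4) :=
        Real.rpow_le_rpow_of_exponent_le one_le_two (by linarith)
      have h4 : (2:ℝ) ^ ((-4:ℝ)) = 1 / 16 := by
        rw [show ((-4:ℝ)) = -((4:ℕ):ℝ) from by norm_num, Real.rpow_neg (by norm_num),
          Real.rpow_natCast]
        norm_num
      rw [h4] at h5
      exact h5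
    have hpos : (0:ℝ) < 2 ^ (2 * H - 4) := Real.rpow_pos_of_pos (by norm_num) _
    have hτz : 0 ≤ (t₃ - T) ^ (2 * H - 4) := Real.rpow_nonneg hτ.le _
    have h5 : (t₃ - T) ^ (2 * H - 4) / 2 ^ (2 * H - 4) ≤ 16 * (t₃ - T) ^ (2 * H - 4) := by
      rw [div_le_iff₀ hpos]
      nlinarith [mul_nonneg hτz (by linarith : (0:ℝ) ≤ 2 ^ (2 * H - 4) - 1 / 16)]
    rw [h2] at h1
    linarith
  -- integrability of the dominating functions
  have hg2int : ∀ u v : ℝ, IntervalIntegrable (fun s => 9 * (t₁ - s) ^ (2 * H - 1)) volume u v := by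
    intro u v
    have h := (intervalIntegrable_rpow' h2H1 (a := t₁ - u) (b := t₁ - v)).comp_sub_left t₁
    simp only [sub_sub_cancel] at h
    exact h.const_mul 9
  have hg1int : ∀ u v : ℝ, 0 < t₁ - u → 0 < t₁ - v →
      IntervalIntegrable (fun s => (t₃ - t₁) ^ 4 * (t₁ - s) ^ (2 * H - 5)) volume u v := by
    intro u v hu hv
    have h0 : (0:ℝ) ∉ Set.uIcc (t₁ - u) (t₁ - v) := Set.notMem_uIcc_of_lt hu hv
    have h := (intervalIntegrable_rpow (μ := volume) (r := 2 * H - 5)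
      (Or.inr h0)).comp_sub_left t₁
    simp only [sub_sub_cancel] at h
    exact h.const_mul _
  -- a.e. avoidance of t₁
  have h_ne : ∀ᵐ s : ℝ, s ≠ t₁ := by
    rw [MeasureTheory.ae_iff]
    have hset : {s : ℝ | ¬ s ≠ t₁} = {t₁} := by ext s; simp
    rw [hset]; exact measure_singleton _
  -- φ is interval integrable on subintervals of (-∞, t₁]
  have hφint : ∀ u v : ℝ, u ≤ v → v ≤ t₁ → IntervalIntegrable φ volume u v := by
    intro u v huv hvt
    refine (hg2int u v).mono_fun' hφm.aestronglyMeasurable ?_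
    filter_upwards [MeasureTheory.ae_restrict_of_ae h_ne,
      MeasureTheory.ae_restrict_mem measurableSet_uIoc] with s hs hmem
    rw [Set.uIoc_of_le huv] at hmem
    have hst : s < t₁ := lt_of_le_of_ne (le_trans hmem.2 hvt) hs
    have hnorm : ‖φ s‖ = φ s := by rw [Real.norm_eq_abs, abs_of_nonneg (hφ0 s)]
    rw [hnorm, hφdef]
    exact ptw_crude hH0 hH h12 h23 h13 hst
  -- computed integral bound 1
  have hint1 : ∀ u v : ℝ, u ≤ v → v ≤ t₁ - (t₃ - t₁) →
      (∫ s in u..v, (t₃ - t₁) ^ 4 * (t₁ - s) ^ (2 * H - 5))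
        ≤ (t₃ - t₁) ^ 4 * ((t₁ - v) ^ (2 * H - 4) / (4 - 2 * H)) := by
    intro u v huv hv
    have hv' : 0 < t₁ - v := by linarith
    have hu' : 0 < t₁ - u := by linarith
    rw [intervalIntegral.integral_const_mul]
    have hcomp : (∫ s in u..v, (t₁ - s) ^ (2 * H - 5))
        = ∫ x in (t₁ - v)..(t₁ - u), x ^ (2 * H - 5) :=
      intervalIntegral.integral_comp_sub_left (fun x => x ^ (2 * H - 5)) t₁
    have h0 : (0:ℝ) ∉ Set.uIcc (t₁ - v) (t₁ - u) := Set.notMem_uIcc_of_lt hv' hu'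
    have hval : (∫ x in (t₁ - v)..(t₁ - u), x ^ (2 * H - 5))
        = ((t₁ - u) ^ (2 * H - 4) - (t₁ - v) ^ (2 * H - 4)) / (2 * H - 4) := by
      rw [integral_rpow (Or.inr ⟨ne_of_lt (by linarith : 2 * H - 5 < -1), h0⟩),
        show 2 * H - 5 + 1 = 2 * H - 4 from by ring]
    have heq : ((t₁ - u) ^ (2 * H - 4) - (t₁ - v) ^ (2 * H - 4)) / (2 * H - 4)
        = ((t₁ - v) ^ (2 * H - 4) - (t₁ - u) ^ (2 * H - 4)) / (4 - 2 * H) := by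
      rw [div_eq_div_iff (by linarith) (by linarith)]; ring
    rw [hcomp, hval, heq]
    have hb0 : 0 ≤ (t₁ - u) ^ (2 * H - 4) := Real.rpow_nonneg hu'.le _
    have hfrac : ((t₁ - v) ^ (2 * H - 4) - (t₁ - u) ^ (2 * H - 4)) / (4 - 2 * H)
        ≤ (t₁ - v) ^ (2 * H - 4) / (4 - 2 * H) := by
      gcongr
      linarith
    exact mul_le_mul_of_nonneg_left hfrac (by positivity)
  -- computed integral bound 2
  have hint2 : ∀ m : ℝ, m ≤ T → t₁ - (t₃ - t₁) ≤ m →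
      (∫ s in m..T, 9 * (t₁ - s) ^ (2 * H - 1)) ≤ 9 * ((t₃ - t₁) ^ (2 * H) / (2 * H)) := by
    intro m hmT hm
    rw [intervalIntegral.integral_const_mul]
    have hcomp : (∫ s in m..T, (t₁ - s) ^ (2 * H - 1))
        = ∫ x in (t₁ - T)..(t₁ - m), x ^ (2 * H - 1) :=
      intervalIntegral.integral_comp_sub_left (fun x => x ^ (2 * H - 1)) t₁
    have hval : (∫ x in (t₁ - T)..(t₁ - m), x ^ (2 * H - 1))
        = ((t₁ - m) ^ (2 * H) - (t₁ - T) ^ (2 * H)) / (2 * H) := by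
      rw [integral_rpow (Or.inl h2H1), show 2 * H - 1 + 1 = 2 * H from by ring]
    rw [hcomp, hval]
    have h1 : (t₁ - m) ^ (2 * H) ≤ (t₃ - t₁) ^ (2 * H) :=
      Real.rpow_le_rpow (by linarith) (by linarith) (by linarith)
    have h2 : 0 ≤ (t₁ - T) ^ (2 * H) := Real.rpow_nonneg (by linarith) _
    have hfrac : ((t₁ - m) ^ (2 * H) - (t₁ - T) ^ (2 * H)) / (2 * H)
        ≤ (t₃ - t₁) ^ (2 * H) / (2 * H) := by
      gcongr
      linarith
    exact mul_le_mul_of_nonneg_left hfrac (by norm_num)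
  -- the core estimate
  have core : (∫ s in t..T, φ s)
      ≤ (16 / (4 - 2 * H) + 144 / (2 * H)) * ((t₃ - t₁) ^ 4 * (t₃ - T) ^ (2 * H - 4)) := by
    rcases le_or_gt T (t₁ - (t₃ - t₁)) with hA | hB
    · -- Case A : T ≤ t₁ - Δ
      have hφi := hφint t T htT hTt1
      have hg1i := hg1int t T (by linarith) (by linarith)
      have hmono := intervalIntegral.integral_mono_on htT hφi hg1i
        (fun s hs => by
          rw [hφdef]; exact ptw_interp hH0 hH h12 h23 h13 (le_trans hs.2 hA))
      have hcalc := hint1 t T htT hA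
      have h16 := hτ2 (t₁ - T) (by linarith) (by linarith)
      calc (∫ s in t..T, φ s)
          ≤ ∫ s in t..T, (t₃ - t₁) ^ 4 * (t₁ - s) ^ (2 * H - 5) := hmono
        _ ≤ (t₃ - t₁) ^ 4 * ((t₁ - T) ^ (2 * H - 4) / (4 - 2 * H)) := hcalc
        _ ≤ (t₃ - t₁) ^ 4 * ((16 * (t₃ - T) ^ (2 * H - 4)) / (4 - 2 * H)) := by
            gcongr
        _ = (16 / (4 - 2 * H)) * ((t₃ - t₁) ^ 4 * (t₃ - T) ^ (2 * H - 4)) := by ring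
        _ ≤ (16 / (4 - 2 * H) + 144 / (2 * H)) * ((t₃ - t₁) ^ 4 * (t₃ - T) ^ (2 * H - 4)) := by
            apply mul_le_mul_of_nonneg_right _ (by positivity)
            have h9 : (0:ℝ) ≤ 144 / (2 * H) := by positivity
            linarith
    · -- Case B : t₁ - Δ < T
      have htm : t ≤ max t (t₁ - (t₃ - t₁)) := le_max_left _ _
      have hmT : max t (t₁ - (t₃ - t₁)) ≤ T := max_le htT (by linarith)
      have hmt1 : t₁ - (t₃ - t₁) ≤ max t (t₁ - (t₃ - t₁)) := le_max_right _ _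
      have hsplit : (∫ s in t..T, φ s)
          = (∫ s in t..(max t (t₁ - (t₃ - t₁))), φ s)
            + ∫ s in (max t (t₁ - (t₃ - t₁)))..T, φ s :=
        (intervalIntegral.integral_add_adjacent_intervals
          (hφint t _ htm (by linarith)) (hφint _ T hmT hTt1)).symm
      have hP1 : (∫ s in t..(max t (t₁ - (t₃ - t₁))), φ s)
          ≤ (t₃ - t₁) ^ 4 * ((t₃ - t₁) ^ (2 * H - 4) / (4 - 2 * H)) := by
        rcases le_or_gt t (t₁ - (t₃ - t₁)) with hc | hc
        · have hmeq : max t (t₁ - (t₃ - t₁)) = t₁ - (t₃ - t₁) := max_eq_right hc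
          rw [hmeq]
          have hφi := hφint t _ hc (by linarith)
          have hg1i := hg1int t (t₁ - (t₃ - t₁)) (by linarith) (by linarith)
          have hmono := intervalIntegral.integral_mono_on hc hφi hg1i
            (fun s hs => by
              rw [hφdef]; exact ptw_interp hH0 hH h12 h23 h13 hs.2)
          have hcalc := hint1 t (t₁ - (t₃ - t₁)) hc le_rfl
          rw [show t₁ - (t₁ - (t₃ - t₁)) = t₃ - t₁ from by ring] at hcalc
          exact le_trans hmono hcalc
        · have hmeq : max t (t₁ - (t₃ - t₁)) = t := max_eq_left (by linarith)
          rw [hmeq, intervalIntegral.integral_same]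
          positivity
      have hP2 : (∫ s in (max t (t₁ - (t₃ - t₁)))..T, φ s)
          ≤ 9 * ((t₃ - t₁) ^ (2 * H) / (2 * H)) := by
        have hφi := hφint _ T hmT hTt1
        have hg2i := hg2int (max t (t₁ - (t₃ - t₁))) T
        have hmono : (∫ s in (max t (t₁ - (t₃ - t₁)))..T, φ s)
            ≤ ∫ s in (max t (t₁ - (t₃ - t₁)))..T, 9 * (t₁ - s) ^ (2 * H - 1) := by
          apply intervalIntegral.integral_mono_ae_restrict hmT hφi hg2i
          filter_upwards [MeasureTheory.ae_restrict_of_ae h_ne,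
            MeasureTheory.ae_restrict_mem measurableSet_Icc] with s hs hmem
          have hst : s < t₁ := lt_of_le_of_ne (le_trans hmem.2 hTt1) hs
          rw [hφdef]
          exact ptw_crude hH0 hH h12 h23 h13 hst
        exact le_trans hmono (hint2 _ hmT hmt1)
      have hΔ2H : (t₃ - t₁) ^ (2 * H) = (t₃ - t₁) ^ 4 * (t₃ - t₁) ^ (2 * H - 4) := by
        rw [← Real.rpow_natCast (t₃ - t₁) 4, ← Real.rpow_add hΔ]
        congr 1
        push_cast; ring
      have h16 : (t₃ - t₁) ^ (2 * H - 4) ≤ 16 * (t₃ - T) ^ (2 * H - 4) :=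
        hτ2 (t₃ - t₁) hΔ (by linarith)
      calc (∫ s in t..T, φ s)
          = (∫ s in t..(max t (t₁ - (t₃ - t₁))), φ s)
            + ∫ s in (max t (t₁ - (t₃ - t₁)))..T, φ s := hsplit
        _ ≤ (t₃ - t₁) ^ 4 * ((t₃ - t₁) ^ (2 * H - 4) / (4 - 2 * H))
            + 9 * ((t₃ - t₁) ^ (2 * H) / (2 * H)) := add_le_add hP1 hP2
        _ = (t₃ - t₁) ^ 4 * (t₃ - t₁) ^ (2 * H - 4) * (1 / (4 - 2 * H) + 9 / (2 * H)) := by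
            rw [hΔ2H]; ring
        _ ≤ (t₃ - t₁) ^ 4 * (16 * (t₃ - T) ^ (2 * H - 4)) * (1 / (4 - 2 * H) + 9 / (2 * H)) := by
            apply mul_le_mul_of_nonneg_right _ (by positivity)
            exact mul_le_mul_of_nonneg_left h16 (by positivity)
        _ = (16 / (4 - 2 * H) + 144 / (2 * H)) * ((t₃ - t₁) ^ 4 * (t₃ - T) ^ (2 * H - 4)) := by
            ring
  -- finish: take square roots
  have hBsq : ((t₃ - t₁) ^ 2 * (t₃ - T) ^ (H - 2)) ^ 2
      = (t₃ - t₁) ^ 4 * (t₃ - T) ^ (2 * H - 4) := by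
    rw [mul_pow, ← pow_mul, sq ((t₃ - T) ^ (H - 2)), ← Real.rpow_add hτ,
      show H - 2 + (H - 2) = 2 * H - 4 from by ring]
  have hIcc : (∫ s in Set.Icc t T, φ s) = ∫ s in t..T, φ s := by
    rw [MeasureTheory.integral_Icc_eq_integral_Ioc, intervalIntegral.integral_of_le htT]
  calc Real.sqrt (∫ s in Set.Icc t T, φ s)
      ≤ Real.sqrt ((16 / (4 - 2 * H) + 144 / (2 * H))
          * ((t₃ - t₁) ^ 2 * (t₃ - T) ^ (H - 2)) ^ 2) := by
        apply Real.sqrt_le_sqrt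
        rw [hIcc, hBsq]; exact core
    _ = Real.sqrt (16 / (4 - 2 * H) + 144 / (2 * H)) * ((t₃ - t₁) ^ 2 * (t₃ - T) ^ (H - 2)) := by
        rw [Real.sqrt_mul hK.le, Real.sqrt_sq (by positivity)]
    _ = Real.sqrt (16 / (4 - 2 * H) + 144 / (2 * H)) * (t₃ - t₁) ^ 2 * (t₃ - T) ^ (H - 2) := by
        ring
end

section
/- Let k, δ ≥ 0, let μ be a nonnegative measure on (0,∞) with ∫_0^∞ (z∧1) μ(dz) < ∞, and define R(u) = −ku + (δ²/2)u² + ∫_0^∞ (e^{zu} − 1) μ(dz) for u ≥ 0. Let m be a nonnegative measure on (0,∞) with ∫_0^∞ (z∧1) m(dz) < ∞, let θ ≥ 0 and define F(u) = kθu + ∫_0^∞ (e^{zu} − 1) m(dz). Let T > 0, let G : [0,T] → [0,∞) be continuous and nondecreasing with G(0) = 0, and suppose there exists A > 0 such that ∫_1^∞ z e^{zA} (μ + m)(dz) < ∞ and 2G(T) + T·max(0, R(A)) ≤ A. Then there exists a continuous function ψ : [0,T] → ℝ satisfying the integral equation ψ(t) = 2G(t) + ∫_0^t R(ψ(s)) ds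 with 0 ≤ ψ(t) ≤ A for all t ∈ [0,T], and the function φ(t) := ∫_0^t F(ψ(s)) ds satisfies 0 ≤ φ(t) ≤ T·F(A) for all t ∈ [0,T]. -/
open MeasureTheory intervalIntegral Real

/-- The function `R(u) = −ku + (δ²/2)u² + ∫_0^∞ (e^{zu} − 1) μ(dz)` associated with a
positive affine process. -/
noncomputable def affineR (k δ : ℝ) (μ : Measure ℝ) (u : ℝ) : ℝ :=
  -(k * u) + δ ^ 2 / 2 * u ^ 2 + ∫ z in Set.Ioi (0:ℝ), (Real.exp (z * u) - 1) ∂μ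

/-- The function `F(u) = kθu + ∫_0^∞ (e^{zu} − 1) m(dz)` associated with a positive
affine process. -/
noncomputable def affineF (k θ : ℝ) (m : Measure ℝ) (u : ℝ) : ℝ :=
  k * θ * u + ∫ z in Set.Ioi (0:ℝ), (Real.exp (z * u) - 1) ∂m

section Helpers
open Set

private lemma exp_sub_exp_le' {a b c : ℝ} (hab : a ≤ b) (hbc : b ≤ c) :
    Real.exp b - Real.exp a ≤ Real.exp c * (b - a) := by
  have h1 : a - b + 1 ≤ Real.exp (a - b) := Real.add_one_le_exp (a - b)
  have h2 : Real.exp a = Real.exp b * Real.exp (a - b) := by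
    rw [← Real.exp_add]; ring_nf
  have h3 : Real.exp b ≤ Real.exp c := Real.exp_le_exp.2 hbc
  nlinarith [Real.exp_pos b, Real.exp_pos a]

private lemma abs_exp_mul_sub_le {A z u v : ℝ} (hz : 0 < z) (hu : u ≤ A) (hv : v ≤ A) :
    |Real.exp (z * u) - Real.exp (z * v)| ≤ z * Real.exp (z * A) * |u - v| := by
  rcases le_total u v with h | h
  · rw [abs_of_nonpos (sub_nonpos.2 (Real.exp_le_exp.2 (mul_le_mul_of_nonneg_left h hz.le))),
      abs_of_nonpos (sub_nonpos.2 h)]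
    have := exp_sub_exp_le' (mul_le_mul_of_nonneg_left h hz.le)
      (mul_le_mul_of_nonneg_left hv hz.le)
    nlinarith
  · rw [abs_of_nonneg (sub_nonneg.2 (Real.exp_le_exp.2 (mul_le_mul_of_nonneg_left h hz.le))),
      abs_of_nonneg (sub_nonneg.2 h)]
    have := exp_sub_exp_le' (mul_le_mul_of_nonneg_left h hz.le)
      (mul_le_mul_of_nonneg_left hu hz.le)
    nlinarith

private lemma integrableOn_zexp {ν : Measure ℝ} {A : ℝ} (hA : 0 < A)
    (h1 : IntegrableOn (fun z => min z 1) (Ioi 0) ν)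
    (h2 : IntegrableOn (fun z => z * Real.exp (z * A)) (Ioi 1) ν) :
    IntegrableOn (fun z => z * Real.exp (z * A)) (Ioi 0) ν := by
  have hU : Ioi (0:ℝ) = Ioc 0 1 ∪ Ioi 1 := (Set.Ioc_union_Ioi_eq_Ioi zero_le_one).symm
  rw [hU]
  refine MeasureTheory.IntegrableOn.union ?_ h2
  have hdom : IntegrableOn (fun z => Real.exp A * min z 1) (Ioc 0 1) ν :=
    (h1.mono_set Set.Ioc_subset_Ioi_self).const_mul _
  refine MeasureTheory.Integrable.mono' hdom ?_ ?_
  · exact (continuous_id.mul (Real.continuous_exp.comp (continuous_id.mul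
      continuous_const))).aestronglyMeasurable.restrict
  · filter_upwards [ae_restrict_mem measurableSet_Ioc] with z hz
    obtain ⟨hz0, hz1⟩ := hz
    rw [Real.norm_eq_abs, abs_of_nonneg (by positivity)]
    have he : Real.exp (z * A) ≤ Real.exp A := Real.exp_le_exp.2 (by nlinarith)
    have hm : min z 1 = z := min_eq_left hz1
    rw [hm]
    nlinarith [Real.exp_pos A]

private lemma integrableOn_expzu {ν : Measure ℝ} {A : ℝ} (hA : 0 < A)
    (h1 : IntegrableOn (fun z => min z 1) (Ioi 0) ν)
    (h2 : IntegrableOn (fun z => z * Real.exp (z * A)) (Ioi 1) ν)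
    {u : ℝ} (hu0 : 0 ≤ u) (huA : u ≤ A) :
    IntegrableOn (fun z => Real.exp (z * u) - 1) (Ioi 0) ν := by
  have hz := integrableOn_zexp hA h1 h2
  refine MeasureTheory.Integrable.mono' (hz.const_mul A) ?_ ?_
  · exact ((Real.continuous_exp.comp (continuous_id.mul continuous_const)).sub
      continuous_const).aestronglyMeasurable.restrict
  · filter_upwards [ae_restrict_mem measurableSet_Ioi] with z hz0
    have hz0' : (0:ℝ) < z := hz0
    have hb : (0:ℝ) ≤ Real.exp (z * u) - 1 := by
      have := Real.add_one_le_exp (z * u); nlinarith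
    rw [Real.norm_eq_abs, abs_of_nonneg hb]
    have h := exp_sub_exp_le' (a := 0) (b := z * u) (c := z * A) (by positivity)
      (by nlinarith)
    rw [Real.exp_zero] at h
    nlinarith [mul_le_mul_of_nonneg_left huA (mul_nonneg hz0'.le (Real.exp_pos (z * A)).le)]

private lemma integral_exp_nonneg {ν : Measure ℝ} {u : ℝ} (hu : 0 ≤ u) :
    0 ≤ ∫ z in Ioi (0:ℝ), (Real.exp (z * u) - 1) ∂ν := by
  refine setIntegral_nonneg measurableSet_Ioi fun z hz => ?_
  have hz' : (0:ℝ) < z := hz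
  have := Real.add_one_le_exp (z * u)
  nlinarith

private lemma integral_exp_le {ν : Measure ℝ} {A : ℝ} (hA : 0 < A)
    (h1 : IntegrableOn (fun z => min z 1) (Ioi 0) ν)
    (h2 : IntegrableOn (fun z => z * Real.exp (z * A)) (Ioi 1) ν)
    {u : ℝ} (hu0 : 0 ≤ u) (huA : u ≤ A) :
    ∫ z in Ioi (0:ℝ), (Real.exp (z * u) - 1) ∂ν
      ≤ A * ∫ z in Ioi (0:ℝ), z * Real.exp (z * A) ∂ν := by
  rw [← MeasureTheory.integral_const_mul]
  refine setIntegral_mono_on (integrableOn_expzu hA h1 h2 hu0 huA)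
    ((integrableOn_zexp hA h1 h2).const_mul A) measurableSet_Ioi fun z hz => ?_
  have hz' : (0:ℝ) < z := hz
  have h := exp_sub_exp_le' (a := 0) (b := z * u) (c := z * A) (by positivity) (by nlinarith)
  rw [Real.exp_zero] at h
  nlinarith [mul_le_mul_of_nonneg_left huA (mul_nonneg hz'.le (Real.exp_pos (z * A)).le)]

private lemma integral_exp_mono {ν : Measure ℝ} {A : ℝ} (hA : 0 < A)
    (h1 : IntegrableOn (fun z => min z 1) (Ioi 0) ν)
    (h2 : IntegrableOn (fun z => z * Real.exp (z * A)) (Ioi 1) ν)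
    {u v : ℝ} (hu0 : 0 ≤ u) (huv : u ≤ v) (hvA : v ≤ A) :
    ∫ z in Ioi (0:ℝ), (Real.exp (z * u) - 1) ∂ν
      ≤ ∫ z in Ioi (0:ℝ), (Real.exp (z * v) - 1) ∂ν := by
  refine setIntegral_mono_on (integrableOn_expzu hA h1 h2 hu0 (huv.trans hvA))
    (integrableOn_expzu hA h1 h2 (hu0.trans huv) hvA) measurableSet_Ioi fun z hz => ?_
  have hz' : (0:ℝ) < z := hz
  have := Real.exp_le_exp.2 (mul_le_mul_of_nonneg_left huv hz'.le)
  linarith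

private lemma integral_exp_lip {ν : Measure ℝ} {A : ℝ} (hA : 0 < A)
    (h1 : IntegrableOn (fun z => min z 1) (Ioi 0) ν)
    (h2 : IntegrableOn (fun z => z * Real.exp (z * A)) (Ioi 1) ν)
    {u v : ℝ} (hu0 : 0 ≤ u) (huA : u ≤ A) (hv0 : 0 ≤ v) (hvA : v ≤ A) :
    |(∫ z in Ioi (0:ℝ), (Real.exp (z * u) - 1) ∂ν)
        - ∫ z in Ioi (0:ℝ), (Real.exp (z * v) - 1) ∂ν|
      ≤ (∫ z in Ioi (0:ℝ), z * Real.exp (z * A) ∂ν) * |u - v| := by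
  have hiu := integrableOn_expzu hA h1 h2 hu0 huA
  have hiv := integrableOn_expzu hA h1 h2 hv0 hvA
  rw [← integral_sub hiu hiv]
  have hnorm : |∫ z in Ioi (0:ℝ), ((Real.exp (z * u) - 1) - (Real.exp (z * v) - 1)) ∂ν|
      ≤ ∫ z in Ioi (0:ℝ), |(Real.exp (z * u) - 1) - (Real.exp (z * v) - 1)| ∂ν := by
    simpa [Real.norm_eq_abs] using
      norm_integral_le_integral_norm (μ := ν.restrict (Ioi 0))
        (fun z => (Real.exp (z * u) - 1) - (Real.exp (z * v) - 1))
  refine hnorm.trans ?_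
  rw [← MeasureTheory.integral_mul_const]
  refine setIntegral_mono_on ((hiu.sub hiv).abs) (((integrableOn_zexp hA h1 h2)).mul_const _)
    measurableSet_Ioi fun z hz => ?_
  have hz' : (0:ℝ) < z := hz
  have h := abs_exp_mul_sub_le (A := A) hz' huA hvA (u := u) (v := v)
  calc |(Real.exp (z * u) - 1) - (Real.exp (z * v) - 1)|
      = |Real.exp (z * u) - Real.exp (z * v)| := by ring_nf
    _ ≤ z * Real.exp (z * A) * |u - v| := h

end Helpers

section RF
open Set

private lemma affineR_zero' (k δ : ℝ) (μ : Measure ℝ) : affineR k δ μ 0 = 0 := by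
  simp [affineR]

private lemma affineF_zero' (k θ : ℝ) (m : Measure ℝ) : affineF k θ m 0 = 0 := by
  simp [affineF]

private lemma affineR_le_max {k δ A : ℝ} (hk : 0 ≤ k) (hA : 0 < A) {μ : Measure ℝ}
    (h1 : IntegrableOn (fun z => min z 1) (Ioi 0) μ)
    (h2 : IntegrableOn (fun z => z * Real.exp (z * A)) (Ioi 1) μ)
    {c : ℝ} (hc0 : 0 ≤ c) (hcA : c ≤ A) :
    affineR k δ μ c ≤ max 0 (affineR k δ μ A) := by
  set lam := c / A with hlam
  have hl0 : 0 ≤ lam := div_nonneg hc0 hA.le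
  have hl1 : lam ≤ 1 := (div_le_one hA).2 hcA
  have hAc : lam * A = c := by rw [hlam, div_mul_cancel₀ c hA.ne']
  have hIc : ∫ z in Ioi (0:ℝ), (Real.exp (z * c) - 1) ∂μ
      ≤ lam * ∫ z in Ioi (0:ℝ), (Real.exp (z * A) - 1) ∂μ := by
    rw [← MeasureTheory.integral_const_mul]
    refine setIntegral_mono_on (integrableOn_expzu hA h1 h2 hc0 hcA)
      ((integrableOn_expzu hA h1 h2 hA.le le_rfl).const_mul _) measurableSet_Ioi ?_
    intro z hz
    have hz' : (0:ℝ) < z := hz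
    have hcv := convexOn_exp.2 (Set.mem_univ 0) (Set.mem_univ (z * A))
      (by linarith : (0:ℝ) ≤ 1 - lam) hl0 (by ring)
    simp only [smul_eq_mul, mul_zero, zero_add, Real.exp_zero, mul_one] at hcv
    have hz2 : lam * (z * A) = z * c := by rw [← hAc]; ring
    rw [hz2] at hcv
    linarith
  have hkey : affineR k δ μ c ≤ lam * affineR k δ μ A := by
    unfold affineR
    have hsq : c ^ 2 ≤ lam * A ^ 2 := by nlinarith
    nlinarith [sq_nonneg δ]
  rcases le_or_gt (affineR k δ μ A) 0 with h | h
  · have : lam * affineR k δ μ A ≤ 0 := mul_nonpos_of_nonneg_of_nonpos hl0 h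
    exact hkey.trans (this.trans (le_max_left _ _))
  · have : lam * affineR k δ μ A ≤ affineR k δ μ A := by nlinarith
    exact hkey.trans (this.trans (le_max_right _ _))

private lemma affineR_lip {k δ A : ℝ} (hk : 0 ≤ k) (hδ : 0 ≤ δ) (hA : 0 < A) {μ : Measure ℝ}
    (h1 : IntegrableOn (fun z => min z 1) (Ioi 0) μ)
    (h2 : IntegrableOn (fun z => z * Real.exp (z * A)) (Ioi 1) μ)
    {u v : ℝ} (hu0 : 0 ≤ u) (huA : u ≤ A) (hv0 : 0 ≤ v) (hvA : v ≤ A) :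
    |affineR k δ μ u - affineR k δ μ v|
      ≤ (k + δ ^ 2 * A + ∫ z in Ioi (0:ℝ), z * Real.exp (z * A) ∂μ) * |u - v| := by
  have hIl := integral_exp_lip hA h1 h2 hu0 huA hv0 hvA
  unfold affineR
  set Iu := ∫ z in Ioi (0:ℝ), (Real.exp (z * u) - 1) ∂μ
  set Iv := ∫ z in Ioi (0:ℝ), (Real.exp (z * v) - 1) ∂μ
  have hd : (-(k * u) + δ ^ 2 / 2 * u ^ 2 + Iu) - (-(k * v) + δ ^ 2 / 2 * v ^ 2 + Iv)
      = (-(k * (u - v))) + (δ ^ 2 / 2 * ((u + v) * (u - v))) + (Iu - Iv) := by ring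
  rw [hd]
  have h3 := abs_add_three (-(k * (u - v))) (δ ^ 2 / 2 * ((u + v) * (u - v))) (Iu - Iv)
  refine h3.trans ?_
  have e1 : |(-(k * (u - v)))| = k * |u - v| := by
    rw [abs_neg, abs_mul, abs_of_nonneg hk]
  have e2 : |δ ^ 2 / 2 * ((u + v) * (u - v))| ≤ δ ^ 2 * A * |u - v| := by
    rw [abs_mul, abs_mul, abs_of_nonneg (by positivity : (0:ℝ) ≤ δ ^ 2 / 2),
      abs_of_nonneg (by linarith : (0:ℝ) ≤ u + v)]
    have h2A : u + v ≤ 2 * A := by linarith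
    nlinarith [mul_nonneg (mul_nonneg (sq_nonneg δ) (sub_nonneg.2 h2A)) (abs_nonneg (u - v))]
  rw [e1]
  nlinarith [abs_nonneg (u - v)]

private lemma affineF_lip {k θ A : ℝ} (hk : 0 ≤ k) (hθ : 0 ≤ θ) (hA : 0 < A) {m : Measure ℝ}
    (h1 : IntegrableOn (fun z => min z 1) (Ioi 0) m)
    (h2 : IntegrableOn (fun z => z * Real.exp (z * A)) (Ioi 1) m)
    {u v : ℝ} (hu0 : 0 ≤ u) (huA : u ≤ A) (hv0 : 0 ≤ v) (hvA : v ≤ A) :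
    |affineF k θ m u - affineF k θ m v|
      ≤ (k * θ + ∫ z in Ioi (0:ℝ), z * Real.exp (z * A) ∂m) * |u - v| := by
  have hIl := integral_exp_lip hA h1 h2 hu0 huA hv0 hvA
  unfold affineF
  set Iu := ∫ z in Ioi (0:ℝ), (Real.exp (z * u) - 1) ∂m
  set Iv := ∫ z in Ioi (0:ℝ), (Real.exp (z * v) - 1) ∂m
  have hd : (k * θ * u + Iu) - (k * θ * v + Iv) = k * θ * (u - v) + (Iu - Iv) := by ring
  rw [hd]
  refine (abs_add_le _ _).trans ?_
  have e1 : |k * θ * (u - v)| = k * θ * |u - v| := by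
    rw [abs_mul, abs_of_nonneg (mul_nonneg hk hθ)]
  rw [e1]
  nlinarith [abs_nonneg (u - v)]

private lemma affineF_nonneg {k θ : ℝ} (hk : 0 ≤ k) (hθ : 0 ≤ θ) {m : Measure ℝ}
    {u : ℝ} (hu : 0 ≤ u) : 0 ≤ affineF k θ m u := by
  unfold affineF
  have := integral_exp_nonneg (ν := m) hu
  nlinarith [mul_nonneg (mul_nonneg hk hθ) hu]

private lemma affineF_mono {k θ A : ℝ} (hk : 0 ≤ k) (hθ : 0 ≤ θ) (hA : 0 < A) {m : Measure ℝ}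
    (h1 : IntegrableOn (fun z => min z 1) (Ioi 0) m)
    (h2 : IntegrableOn (fun z => z * Real.exp (z * A)) (Ioi 1) m)
    {u v : ℝ} (hu0 : 0 ≤ u) (huv : u ≤ v) (hvA : v ≤ A) :
    affineF k θ m u ≤ affineF k θ m v := by
  unfold affineF
  have := integral_exp_mono hA h1 h2 hu0 huv hvA
  nlinarith [mul_nonneg (mul_nonneg hk hθ) (sub_nonneg.2 huv)]

end RF

/-- Existence and bounds for the solution of the Riccati-type equation
`ψ(t) = 2G(t) + ∫_0^t R(ψ(s)) ds` on `[0,T]`, together with the bounds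
`0 ≤ φ(t) = ∫_0^t F(ψ(s)) ds ≤ T·F(A)`, under the quantitative hypothesis
`2G(T) + T·max(0, R(A)) ≤ A` and exponential integrability of the jump measures. -/
theorem riccati_existence_affine
    (k δ θ T A : ℝ) (hk : 0 ≤ k) (hδ : 0 ≤ δ) (hθ : 0 ≤ θ) (hT : 0 < T) (hA : 0 < A)
    (μ m : Measure ℝ)
    (hμ_int : IntegrableOn (fun z => min z 1) (Set.Ioi 0) μ)
    (hm_int : IntegrableOn (fun z => min z 1) (Set.Ioi 0) m)
    (G : ℝ → ℝ) (hG_cont : ContinuousOn G (Set.Icc 0 T))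
    (hG_mono : MonotoneOn G (Set.Icc 0 T)) (hG0 : G 0 = 0)
    (hexp_int : IntegrableOn (fun z => z * Real.exp (z * A)) (Set.Ioi 1) (μ + m))
    (hbound : 2 * G T + T * max 0 (affineR k δ μ A) ≤ A) :
    ∃ ψ : ℝ → ℝ, ContinuousOn ψ (Set.Icc 0 T)
      ∧ (∀ t ∈ Set.Icc 0 T,
          ψ t = 2 * G t + ∫ s in (0:ℝ)..t, affineR k δ μ (ψ s))
      ∧ (∀ t ∈ Set.Icc 0 T, 0 ≤ ψ t ∧ ψ t ≤ A)
      ∧ (∀ t ∈ Set.Icc 0 T,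
          0 ≤ (∫ s in (0:ℝ)..t, affineF k θ m (ψ s))
          ∧ (∫ s in (0:ℝ)..t, affineF k θ m (ψ s)) ≤ T * affineF k θ m A) := by
  -- Split the exponential integrability hypothesis.
  have hμe : IntegrableOn (fun z => z * Real.exp (z * A)) (Set.Ioi 1) μ := by
    have h := hexp_int
    rw [IntegrableOn, Measure.restrict_add] at h
    exact h.left_of_add_measure
  have hme : IntegrableOn (fun z => z * Real.exp (z * A)) (Set.Ioi 1) m := by
    have h := hexp_int
    rw [IntegrableOn, Measure.restrict_add] at h
    exact h.right_of_add_measure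
  set Iμ := ∫ z in Set.Ioi (0:ℝ), z * Real.exp (z * A) ∂μ with hIμdef
  have hIμ0 : 0 ≤ Iμ := setIntegral_nonneg measurableSet_Ioi fun z hz =>
    mul_nonneg (le_of_lt hz) (Real.exp_pos _).le
  set L := k + δ ^ 2 * A + Iμ with hLdef
  have hL0 : 0 ≤ L := by
    have : (0:ℝ) ≤ δ ^ 2 * A := by positivity
    rw [hLdef]; linarith
  -- The clamping map onto [0, A].
  set proj : ℝ → ℝ := fun x => max 0 (min x A) with hprojdef
  have hproj0 : ∀ x, 0 ≤ proj x := fun x => le_max_left _ _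
  have hprojA : ∀ x, proj x ≤ A := fun x => max_le hA.le (min_le_right x A)
  have hproj_lip : ∀ x y, |proj x - proj y| ≤ |x - y| := by
    intro x y
    calc |proj x - proj y| = |max (min x A) 0 - max (min y A) 0| := by
          rw [hprojdef]; simp only
          rw [max_comm (0:ℝ) (min x A), max_comm (0:ℝ) (min y A)]
      _ ≤ |min x A - min y A| := abs_max_sub_max_le_abs _ _ _
      _ ≤ max |x - y| |A - A| := abs_min_sub_min_le_max _ _ _ _
      _ = |x - y| := by simp
  have hproj_id : ∀ x, 0 ≤ x → x ≤ A → proj x = x := by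
    intro x h0 h1
    rw [hprojdef]; simp only
    rw [min_eq_left h1, max_eq_right h0]
  -- The clamped right-hand side.
  set Rc : ℝ → ℝ := fun x => affineR k δ μ (proj x) with hRcdef
  have hRc_lip : ∀ x y, |Rc x - Rc y| ≤ L * |x - y| := by
    intro x y
    have h := affineR_lip hk hδ hA hμ_int hμe (hproj0 x) (hprojA x) (hproj0 y) (hprojA y)
    rw [← hIμdef, ← hLdef] at h
    rw [hRcdef]; simp only
    calc |affineR k δ μ (proj x) - affineR k δ μ (proj y)| ≤ L * |proj x - proj y| := h
      _ ≤ L * |x - y| := mul_le_mul_of_nonneg_left (hproj_lip x y) hL0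
  have hRcLip : LipschitzWith L.toNNReal Rc := by
    apply LipschitzWith.of_dist_le_mul
    intro x y
    rw [Real.dist_eq, Real.dist_eq, Real.coe_toNNReal L hL0]
    exact hRc_lip x y
  have hRc_le : ∀ x, Rc x ≤ max 0 (affineR k δ μ A) := fun x =>
    affineR_le_max hk hA hμ_int hμe (hproj0 x) (hprojA x)
  have hMRA0 : (0:ℝ) ≤ max 0 (affineR k δ μ A) := le_max_left _ _
  set M := k * A + δ ^ 2 / 2 * A ^ 2 + A * Iμ with hMdef
  have hM0 : 0 ≤ M := by
    have h1 : 0 ≤ A * Iμ := mul_nonneg hA.le hIμ0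
    have h2 : (0:ℝ) ≤ δ ^ 2 / 2 * A ^ 2 := by positivity
    have h3 : 0 ≤ k * A := mul_nonneg hk hA.le
    rw [hMdef]; linarith
  have hRc_abs : ∀ x, |Rc x| ≤ M := by
    intro x
    have h0 := hproj0 x
    have h1 := hprojA x
    have hIl : 0 ≤ ∫ z in Set.Ioi (0:ℝ), (Real.exp (z * proj x) - 1) ∂μ :=
      integral_exp_nonneg h0
    have hIu := integral_exp_le hA hμ_int hμe h0 h1
    rw [← hIμdef] at hIu
    have hkp : k * proj x ≤ k * A := mul_le_mul_of_nonneg_left h1 hk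
    have hkp0 : 0 ≤ k * proj x := mul_nonneg hk h0
    have hp2 : proj x ^ 2 ≤ A ^ 2 := by nlinarith
    have hd2 : δ ^ 2 / 2 * proj x ^ 2 ≤ δ ^ 2 / 2 * A ^ 2 :=
      mul_le_mul_of_nonneg_left hp2 (by positivity)
    have hd0 : (0:ℝ) ≤ δ ^ 2 / 2 * proj x ^ 2 := by positivity
    have hAI : 0 ≤ A * Iμ := mul_nonneg hA.le hIμ0
    have hd2' : (0:ℝ) ≤ δ ^ 2 / 2 * A ^ 2 := by positivity
    rw [hRcdef]; simp only
    rw [abs_le]; unfold affineR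
    constructor
    · rw [hMdef]; linarith
    · rw [hMdef]; linarith
  -- The clamping map onto [0, T] and extension of G.
  set projT : ℝ → ℝ := fun t => max 0 (min t T) with hprojTdef
  have hprojT_mem : ∀ t, projT t ∈ Set.Icc 0 T := fun t =>
    ⟨le_max_left _ _, max_le hT.le (min_le_right t T)⟩
  have hprojT_id : ∀ t ∈ Set.Icc (0:ℝ) T, projT t = t := by
    intro t ht
    rw [hprojTdef]; simp only
    rw [min_eq_left ht.2, max_eq_right ht.1]
  have hprojT_cont : Continuous projT := by
    rw [hprojTdef]; exact continuous_const.max (continuous_id.min continuous_const)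
  set Ge : ℝ → ℝ := fun t => G (projT t) with hGedef
  have hGe_cont : Continuous Ge := hG_cont.comp_continuous hprojT_cont hprojT_mem
  have hGe_eq : ∀ t ∈ Set.Icc (0:ℝ) T, Ge t = G t := by
    intro t ht
    rw [hGedef]; simp only
    rw [hprojT_id t ht]
  -- Picard–Lindelöf.
  have hPL : IsPicardLindelof (fun t x => Rc (x + 2 * Ge t)) (tmin := 0) (tmax := T)
      ⟨0, le_rfl, hT.le⟩ 0 (M * T + 1).toNNReal 0 M.toNNReal L.toNNReal := by
    refine ⟨?_, ?_, ?_, ?_⟩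
    · intro t _
      have hlw : LipschitzWith L.toNNReal (fun x : ℝ => Rc (x + 2 * Ge t)) := by
        apply LipschitzWith.of_dist_le_mul
        intro x y
        rw [Real.dist_eq, Real.dist_eq, Real.coe_toNNReal L hL0]
        have h := hRc_lip (x + 2 * Ge t) (y + 2 * Ge t)
        simpa [add_sub_add_right_eq_sub] using h
      exact hlw.lipschitzOnWith
    · intro x _
      exact (hRcLip.continuous.comp
        (continuous_const.add (continuous_const.mul hGe_cont))).continuousOn
    · intro t _ x _
      rw [Real.norm_eq_abs, Real.coe_toNNReal _ hM0]; exact hRc_abs _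
    · have hfin : ((M.toNNReal : ℝ)) * max (T - 0) (0 - 0)
          ≤ ((M * T + 1).toNNReal : ℝ) - ((0 : NNReal) : ℝ) := by
        rw [Real.coe_toNNReal _ hM0, Real.coe_toNNReal _ (by positivity), NNReal.coe_zero,
          sub_zero, sub_zero, sub_zero, max_eq_left hT.le]
        linarith
      exact hfin
  obtain ⟨α, hα0', hαd⟩ := IsPicardLindelof.exists_eq_forall_mem_Icc_hasDerivWithinAt₀ hPL
  have hα0 : α 0 = 0 := hα0'
  have hα_cont : ContinuousOn α (Set.Icc 0 T) := fun t ht => (hαd t ht).continuousWithinAt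
  set ψ : ℝ → ℝ := fun t => α t + 2 * Ge t with hψdef
  have hψ_cont : ContinuousOn ψ (Set.Icc 0 T) :=
    hα_cont.add (continuous_const.mul hGe_cont).continuousOn
  have hGe0 : Ge 0 = 0 := by
    rw [hGedef]; simp only
    rw [hprojT_id 0 ⟨le_rfl, hT.le⟩, hG0]
  have hψ0 : ψ 0 = 0 := by
    rw [hψdef]; simp only
    rw [hα0, hGe0]; ring
  have hg_cont : ContinuousOn (fun s => Rc (ψ s)) (Set.Icc 0 T) :=
    hRcLip.continuous.comp_continuousOn hψ_cont
  have hsubIcc : ∀ t ∈ Set.Icc (0:ℝ) T, Set.uIcc (0:ℝ) t ⊆ Set.Icc 0 T := by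
    intro t ht
    rw [Set.uIcc_of_le ht.1]
    exact Set.Icc_subset_Icc le_rfl ht.2
  have hg_int : ∀ t₁ ∈ Set.Icc (0:ℝ) T, ∀ t₂ ∈ Set.Icc (0:ℝ) T,
      IntervalIntegrable (fun s => Rc (ψ s)) MeasureTheory.volume t₁ t₂ := by
    intro t₁ h₁ t₂ h₂
    apply ContinuousOn.intervalIntegrable
    apply hg_cont.mono
    have h₁' : t₁ ∈ Set.uIcc (0:ℝ) T := by rw [Set.uIcc_of_le hT.le]; exact h₁
    have h₂' : t₂ ∈ Set.uIcc (0:ℝ) T := by rw [Set.uIcc_of_le hT.le]; exact h₂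
    rw [← Set.uIcc_of_le hT.le]
    exact Set.uIcc_subset_uIcc h₁' h₂'
  -- The integral equation (with the clamped field).
  have hFTC : ∀ t ∈ Set.Icc (0:ℝ) T, ψ t = 2 * Ge t + ∫ s in (0:ℝ)..t, Rc (ψ s) := by
    intro t ht
    have key : ∫ s in (0:ℝ)..t, Rc (ψ s) = α t - α 0 := by
      refine intervalIntegral.integral_eq_sub_of_hasDeriv_right_of_le ht.1
        (hα_cont.mono (Set.Icc_subset_Icc le_rfl ht.2)) ?_
        (hg_int 0 ⟨le_rfl, hT.le⟩ t ht)
      intro x hx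
      have hx' : x ∈ Set.Icc (0:ℝ) T := ⟨hx.1.le, hx.2.le.trans ht.2⟩
      have hmem : Set.Icc (0:ℝ) T ∈ nhds x := Icc_mem_nhds hx.1 (lt_of_lt_of_le hx.2 ht.2)
      exact ((hαd x hx').hasDerivAt hmem).hasDerivWithinAt
    rw [hα0, sub_zero] at key
    rw [hψdef]; simp only
    rw [key]; ring
  -- Upper bound.
  have hψ_le : ∀ t ∈ Set.Icc (0:ℝ) T, ψ t ≤ A := by
    intro t ht
    rw [hFTC t ht]
    have h1 : (∫ s in (0:ℝ)..t, Rc (ψ s)) ≤ ∫ s in (0:ℝ)..t, max 0 (affineR k δ μ A) := by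
      apply intervalIntegral.integral_mono_on ht.1 (hg_int 0 ⟨le_rfl, hT.le⟩ t ht)
        intervalIntegrable_const
      exact fun s _ => hRc_le _
    rw [intervalIntegral.integral_const, smul_eq_mul, sub_zero] at h1
    have h2 : Ge t = G t := hGe_eq t ht
    have h3 : G t ≤ G T := hG_mono ht (Set.right_mem_Icc.2 hT.le) ht.2
    have h4 : t * max 0 (affineR k δ μ A) ≤ T * max 0 (affineR k δ μ A) :=
      mul_le_mul_of_nonneg_right ht.2 hMRA0
    linarith
  -- Lower bound.
  have hψ_nonneg : ∀ t ∈ Set.Icc (0:ℝ) T, 0 ≤ ψ t := by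
    intro t ht
    by_contra hneg
    push_neg at hneg
    set S : Set ℝ := Set.Icc 0 t ∩ ψ ⁻¹' Set.Ici 0 with hSdef
    have hS_closed : IsClosed S :=
      (hψ_cont.mono (Set.Icc_subset_Icc le_rfl ht.2)).preimage_isClosed_of_isClosed
        isClosed_Icc isClosed_Ici
    have hS_ne : (0:ℝ) ∈ S := ⟨⟨le_rfl, ht.1⟩, by simp [Set.mem_preimage, hψ0]⟩
    have hS_bdd : BddAbove S := ⟨t, fun x hx => hx.1.2⟩
    set c := sSup S with hcdef
    have hcS : c ∈ S := hS_closed.csSup_mem ⟨0, hS_ne⟩ hS_bdd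
    have hc_mem : c ∈ Set.Icc 0 t := hcS.1
    have hcT : c ∈ Set.Icc (0:ℝ) T := ⟨hc_mem.1, hc_mem.2.trans ht.2⟩
    have hψc : 0 ≤ ψ c := hcS.2
    have hzero : Set.EqOn (fun s => Rc (ψ s)) (fun _ => (0:ℝ)) (Set.Ioc c t) := by
      intro s hs
      have hsn : ψ s < 0 := by
        by_contra hh
        push_neg at hh
        have hsS : s ∈ S := ⟨⟨hc_mem.1.trans hs.1.le, hs.2⟩, hh⟩
        exact absurd (le_csSup hS_bdd hsS) (not_le.2 hs.1)
      have hpz : proj (ψ s) = 0 := by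
        rw [hprojdef]; simp only
        rw [min_eq_left (by linarith : ψ s ≤ A), max_eq_left hsn.le]
      show Rc (ψ s) = 0
      rw [hRcdef]; simp only
      rw [hpz, affineR_zero']
    have hint0 : (∫ s in c..t, Rc (ψ s)) = 0 := by
      rw [intervalIntegral.integral_of_le hc_mem.2,
        MeasureTheory.setIntegral_congr_fun measurableSet_Ioc hzero]
      simp
    have hsplit : (∫ s in (0:ℝ)..t, Rc (ψ s)) - ∫ s in (0:ℝ)..c, Rc (ψ s)
        = ∫ s in c..t, Rc (ψ s) :=
      intervalIntegral.integral_interval_sub_left (hg_int 0 ⟨le_rfl, hT.le⟩ t ht)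
        (hg_int 0 ⟨le_rfl, hT.le⟩ c hcT)
    have h1 := hFTC t ht
    have h2 := hFTC c hcT
    have hGm : G c ≤ G t := hG_mono hcT ht hc_mem.2
    rw [hGe_eq t ht] at h1
    rw [hGe_eq c hcT] at h2
    linarith
  -- Assemble.
  refine ⟨ψ, hψ_cont, ?_, fun t ht => ⟨hψ_nonneg t ht, hψ_le t ht⟩, ?_⟩
  · intro t ht
    have h1 := hFTC t ht
    have h2 : (∫ s in (0:ℝ)..t, Rc (ψ s)) = ∫ s in (0:ℝ)..t, affineR k δ μ (ψ s) := by
      refine intervalIntegral.integral_congr fun s hs => ?_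
      have hs' : s ∈ Set.Icc (0:ℝ) T := hsubIcc t ht hs
      show Rc (ψ s) = affineR k δ μ (ψ s)
      rw [hRcdef]; simp only
      rw [hproj_id _ (hψ_nonneg s hs') (hψ_le s hs')]
    rw [hGe_eq t ht] at h1
    rw [h1, h2]
  · -- φ bounds
    set Im := ∫ z in Set.Ioi (0:ℝ), z * Real.exp (z * A) ∂m with hImdef
    have hIm0 : 0 ≤ Im := setIntegral_nonneg measurableSet_Ioi fun z hz =>
      mul_nonneg (le_of_lt hz) (Real.exp_pos _).le
    have hLF0 : 0 ≤ k * θ + Im := add_nonneg (mul_nonneg hk hθ) hIm0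
    set Fc : ℝ → ℝ := fun x => affineF k θ m (proj x) with hFcdef
    have hFcLip : LipschitzWith (k * θ + Im).toNNReal Fc := by
      apply LipschitzWith.of_dist_le_mul
      intro x y
      rw [Real.dist_eq, Real.dist_eq, Real.coe_toNNReal _ hLF0]
      have h := affineF_lip hk hθ hA hm_int hme (hproj0 x) (hprojA x) (hproj0 y) (hprojA y)
      rw [← hImdef] at h
      rw [hFcdef]; simp only
      calc |affineF k θ m (proj x) - affineF k θ m (proj y)|
          ≤ (k * θ + Im) * |proj x - proj y| := h
        _ ≤ (k * θ + Im) * |x - y| := mul_le_mul_of_nonneg_left (hproj_lip x y) hLF0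
    intro t ht
    have hcongr : (∫ s in (0:ℝ)..t, affineF k θ m (ψ s)) = ∫ s in (0:ℝ)..t, Fc (ψ s) := by
      refine intervalIntegral.integral_congr fun s hs => ?_
      have hs' : s ∈ Set.Icc (0:ℝ) T := hsubIcc t ht hs
      show affineF k θ m (ψ s) = Fc (ψ s)
      rw [hFcdef]; simp only
      rw [hproj_id _ (hψ_nonneg s hs') (hψ_le s hs')]
    have hFC_int : IntervalIntegrable (fun s => Fc (ψ s)) MeasureTheory.volume 0 t :=
      ((hFcLip.continuous.comp_continuousOn hψ_cont).mono (hsubIcc t ht)).intervalIntegrable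
    constructor
    · rw [hcongr]
      apply intervalIntegral.integral_nonneg ht.1
      intro s _
      show 0 ≤ Fc (ψ s)
      rw [hFcdef]; simp only
      exact affineF_nonneg hk hθ (hproj0 _)
    · rw [hcongr]
      have h1 : (∫ s in (0:ℝ)..t, Fc (ψ s)) ≤ ∫ s in (0:ℝ)..t, affineF k θ m A := by
        apply intervalIntegral.integral_mono_on ht.1 hFC_int intervalIntegrable_const
        intro s _
        show Fc (ψ s) ≤ affineF k θ m A
        rw [hFcdef]; simp only
        exact affineF_mono hk hθ hA hm_int hme (hproj0 _) (hprojA _) le_rfl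
      rw [intervalIntegral.integral_const, smul_eq_mul, sub_zero] at h1
      have hFA0 : 0 ≤ affineF k θ m A := affineF_nonneg hk hθ hA.le
      have h2 : t * affineF k θ m A ≤ T * affineF k θ m A :=
        mul_le_mul_of_nonneg_right ht.2 hFA0
      linarith
end

section
/- Let n ≥ 1, let C be a symmetric positive semidefinite real n×n matrix, m ∈ ℝⁿ, and let Z = (Z₁,…,Zₙ) be a random vector with the multivariate Gaussian law of mean m and covariance C. Let ζ₁,…,ζₙ ≥ 0 and let φ : ℝ → ℝ be continuously differentiable with φ and φ′ bounded. Then 𝔼[φ′(Σᵢ ζᵢ e^{Zᵢ}) · Σᵢ ζᵢ (C𝟙)ᵢ e^{Zᵢ}] = 𝔼[φ(Σᵢ ζᵢ e^{Zᵢ}) · Σᵢ (Zᵢ − mᵢ)], where 𝟙 = (1,…,1)ᵀ and (C𝟙)ᵢ = Σⱼ Cᵢⱼ. The identity holds even when C is degenerate. -/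
open MeasureTheory ProbabilityTheory Real Finset

section
open scoped ComplexOrder

/-- The positive semidefinite square root of a positive semidefinite matrix
(the definition `Matrix.PosSemidef.sqrt` of the older Mathlib, since removed). -/
noncomputable def Matrix.PosSemidef.sqrt {n : Type*} [Fintype n] [DecidableEq n]
    {𝕜 : Type*} [RCLike 𝕜] {A : Matrix n n 𝕜} (hA : A.PosSemidef) : Matrix n n 𝕜 :=
  hA.1.eigenvectorUnitary.1 * Matrix.diagonal ((↑) ∘ (√·) ∘ hA.1.eigenvalues) *
  (star hA.1.eigenvectorUnitary : Matrix n n 𝕜)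

end

open MeasureTheory ProbabilityTheory Real Filter Set
open scoped ENNReal NNReal

noncomputable def gpdf : ℝ → ℝ := gaussianPDFReal 0 1

lemma gpdf_def (x : ℝ) : gpdf x = (Real.sqrt (2 * π))⁻¹ * Real.exp (-x ^ 2 / 2) := by
  simp [gpdf, gaussianPDFReal]

lemma gpdf_eq : gpdf = fun x => (Real.sqrt (2 * π))⁻¹ * Real.exp (-x ^ 2 / 2) :=
  funext gpdf_def

lemma gpdf_nonneg (x : ℝ) : 0 ≤ gpdf x := gaussianPDFReal_nonneg 0 1 x

lemma gpdf_meas : Measurable gpdf := measurable_gaussianPDFReal 0 1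

lemma hasDerivAt_gpdf (x : ℝ) : HasDerivAt gpdf (-x * gpdf x) x := by
  rw [gpdf_eq]
  have h1 : HasDerivAt (fun x : ℝ => -x ^ 2 / 2) (-x) x := by
    have : HasDerivAt (fun x : ℝ => -x ^ 2 / 2) (-((2 : ℕ) * x ^ (2 - 1)) / 2) x :=
      ((hasDerivAt_pow 2 x).neg).div_const 2
    convert this using 1
    norm_num
    ring
  have h : HasDerivAt (fun x : ℝ => (Real.sqrt (2 * π))⁻¹ * Real.exp (-x ^ 2 / 2))
      ((Real.sqrt (2 * π))⁻¹ * (Real.exp (-x ^ 2 / 2) * (-x))) x :=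
    ((Real.hasDerivAt_exp _).comp x h1).const_mul _
  convert h using 1
  simp only [gpdf_def]
  ring

lemma tendsto_negsq : Tendsto (fun x : ℝ => -x ^ 2 / 2) atTop atBot := by
  have h2 : Tendsto (fun x : ℝ => x ^ 2) atTop atTop := tendsto_pow_atTop two_ne_zero
  have h3 : Tendsto (fun x : ℝ => -x ^ 2) atTop atBot := tendsto_neg_atTop_atBot.comp h2
  exact h3.atBot_div_const two_pos

lemma tendsto_negsq_bot : Tendsto (fun x : ℝ => -x ^ 2 / 2) atBot atBot := by
  have := tendsto_negsq.comp tendsto_neg_atBot_atTop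
  simpa [Function.comp_def, neg_sq] using this

lemma tendsto_gpdf_atTop : Tendsto gpdf atTop (nhds 0) := by
  rw [gpdf_eq]
  have h := (Real.tendsto_exp_atBot.comp tendsto_negsq).const_mul (Real.sqrt (2 * π))⁻¹
  simpa [Function.comp_def] using h

lemma tendsto_gpdf_atBot : Tendsto gpdf atBot (nhds 0) := by
  rw [gpdf_eq]
  have h := (Real.tendsto_exp_atBot.comp tendsto_negsq_bot).const_mul (Real.sqrt (2 * π))⁻¹
  simpa [Function.comp_def] using h

lemma gauss_eq_withDensity :
    gaussianReal 0 1 = (volume : Measure ℝ).withDensity (fun x => ((gpdf x).toNNReal : ℝ≥0∞)) := by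
  rw [gaussianReal_of_var_ne_zero 0 one_ne_zero]
  rfl

lemma integral_gauss_eq (f : ℝ → ℝ) :
    ∫ x, f x ∂(gaussianReal 0 1) = ∫ x, gpdf x * f x := by
  rw [gauss_eq_withDensity, integral_withDensity_eq_integral_smul gpdf_meas.real_toNNReal]
  congr 1; funext x
  simp [NNReal.smul_def, Real.coe_toNNReal _ (gpdf_nonneg x)]

lemma integrable_gauss_iff (f : ℝ → ℝ) :
    Integrable f (gaussianReal 0 1) ↔ Integrable (fun x => gpdf x * f x) volume := by
  rw [gauss_eq_withDensity, integrable_withDensity_iff_integrable_smul gpdf_meas.real_toNNReal]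
  constructor <;> intro h <;> refine h.congr (Filter.Eventually.of_forall fun x => ?_) <;>
    simp [NNReal.smul_def, Real.coe_toNNReal _ (gpdf_nonneg x)]

lemma gpdf_cont : Continuous gpdf := by
  rw [gpdf_eq]
  exact continuous_const.mul (Real.continuous_exp.comp (by continuity))

lemma abs_le_exp_add (x : ℝ) : |x| ≤ Real.exp x + Real.exp (-x) := by
  rcases le_total 0 x with h | h
  · rw [abs_of_nonneg h]
    have := Real.add_one_le_exp x
    have := Real.exp_pos (-x)
    linarith
  · rw [abs_of_nonpos h]
    have := Real.add_one_le_exp (-x)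
    have := Real.exp_pos x
    linarith

lemma integrable_exp_gauss (b : ℝ) :
    Integrable (fun x => Real.exp (b * x)) (gaussianReal 0 1) := by
  rw [integrable_gauss_iff]
  have heq : (fun x => gpdf x * Real.exp (b * x))
      = fun x => ((Real.sqrt (2 * π))⁻¹ * Real.exp (b ^ 2 / 2))
          * Real.exp (-(1/2) * (x - b) ^ 2) := by
    funext x
    rw [gpdf_def, mul_assoc, ← Real.exp_add, mul_assoc, ← Real.exp_add]
    congr 1
    ring
  rw [heq]
  exact ((integrable_exp_neg_mul_sq (by norm_num : (0:ℝ) < 1/2)).comp_sub_right b).const_mul _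

lemma gauss_ibp_1d (g g' : ℝ → ℝ) (hg : ∀ x, HasDerivAt g (g' x) x) (c : ℝ)
    (hgb : ∀ x, |g x| ≤ c) (h1 : Integrable g' (gaussianReal 0 1))
    (h2 : Integrable (fun x => g x * x) (gaussianReal 0 1)) :
    ∫ x, g' x ∂(gaussianReal 0 1) = ∫ x, g x * x ∂(gaussianReal 0 1) := by
  rw [integral_gauss_eq, integral_gauss_eq]
  rw [integrable_gauss_iff] at h1 h2
  set G : ℝ → ℝ := fun x => g x * gpdf x with hGdef
  set D : ℝ → ℝ := fun x => gpdf x * g' x - gpdf x * (g x * x) with hDdef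
  have hG' : ∀ x, HasDerivAt G (D x) x := by
    intro x
    have : HasDerivAt G (g' x * gpdf x + g x * (-x * gpdf x)) x := (hg x).mul (hasDerivAt_gpdf x)
    convert this using 1
    simp only [hDdef]
    ring
  have hgc : Continuous g := by
    rw [continuous_iff_continuousAt]
    exact fun x => (hg x).continuousAt
  have hcont : Continuous G := hgc.mul gpdf_cont
  have hbound : ∀ x, ‖G x‖ ≤ c * gpdf x := by
    intro x
    simp only [hGdef, Real.norm_eq_abs, abs_mul, abs_of_nonneg (gpdf_nonneg x)]
    exact mul_le_mul_of_nonneg_right (hgb x) (gpdf_nonneg x)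
  have htop : Filter.Tendsto G Filter.atTop (nhds 0) :=
    squeeze_zero_norm hbound (by simpa using tendsto_gpdf_atTop.const_mul c)
  have hbot : Filter.Tendsto G Filter.atBot (nhds 0) :=
    squeeze_zero_norm hbound (by simpa using tendsto_gpdf_atBot.const_mul c)
  have hint : Integrable D volume := h1.sub h2
  have e1 : ∫ x in Set.Iic 0, D x = G 0 - 0 :=
    integral_Iic_of_hasDerivAt_of_tendsto hcont.continuousWithinAt
      (fun x _ => hG' x) hint.integrableOn hbot
  have e2 : ∫ x in Set.Ioi 0, D x = 0 - G 0 :=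
    integral_Ioi_of_hasDerivAt_of_tendsto hcont.continuousWithinAt
      (fun x _ => hG' x) hint.integrableOn htop
  have hz : ∫ x, D x = 0 := by
    rw [← intervalIntegral.integral_Iic_add_Ioi hint.integrableOn hint.integrableOn, e1, e2]
    ring
  have := integral_sub h1 h2
  rw [← hDdef] at this
  rw [hz] at this
  linarith [this]

lemma integrable_pi_prod {n : ℕ} (f : Fin n → ℝ → ℝ)
    (hf : ∀ i, Integrable (f i) (gaussianReal 0 1)) :
    Integrable (fun x : Fin n → ℝ => ∏ i, f i (x i))
      (Measure.pi fun _ => gaussianReal 0 1) := by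
  induction n with
  | zero =>
      simp only [Finset.univ_eq_empty, Finset.prod_empty]
      exact integrable_const 1
  | succ n ih =>
      have mp := (measurePreserving_piFinSuccAbove
        (fun _ : Fin (n + 1) => gaussianReal 0 1) 0).symm
      rw [← mp.integrable_comp_emb (MeasurableEquiv.measurableEmbedding _)]
      have heq : ((fun x : Fin (n + 1) → ℝ => ∏ i, f i (x i))
          ∘ (MeasurableEquiv.piFinSuccAbove (fun _ : Fin (n + 1) => ℝ) 0).symm)
          = fun q : ℝ × (Fin n → ℝ) => f 0 q.1 * ∏ j, f (Fin.succ j) (q.2 j) := by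
        funext q
        simp only [Function.comp_apply, MeasurableEquiv.piFinSuccAbove_symm_apply,
          Fin.insertNthEquiv, Equiv.coe_fn_mk, Fin.insertNth_zero]
        rw [Fin.prod_univ_succ]
        simp [Fin.cons_zero, Fin.cons_succ]
      rw [heq]
      exact (hf 0).mul_prod (ih (fun j => f (Fin.succ j)) (fun j => hf _))

lemma integrable_exp_dot {n : ℕ} (a : Fin n → ℝ) :
    Integrable (fun z : Fin n → ℝ => Real.exp (∑ l, a l * z l))
      (Measure.pi fun _ => gaussianReal 0 1) := by
  have heq : (fun z : Fin n → ℝ => Real.exp (∑ l, a l * z l))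
      = fun z => ∏ l, Real.exp (a l * z l) := by
    funext z; rw [Real.exp_sum]
  rw [heq]
  exact integrable_pi_prod _ (fun l => integrable_exp_gauss (a l))

lemma integrable_exp_coord {n : ℕ} (k : Fin n) (b : ℝ) :
    Integrable (fun z : Fin n → ℝ => Real.exp (b * z k))
      (Measure.pi fun _ => gaussianReal 0 1) := by
  have heq : (fun z : Fin n → ℝ => Real.exp (b * z k))
      = fun z : Fin n → ℝ => Real.exp (∑ l, (if l = k then b else 0) * z l) := by
    funext z
    congr 1
    rw [Finset.sum_eq_single k]
    · simp
    · intro l _ hl; simp [hl]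
    · simp
  rw [heq]
  exact integrable_exp_dot _

lemma L_integrable {N : ℕ} (k : Fin (N + 1)) (c b : Fin (N + 1) → ℝ)
    (B : Fin (N + 1) → Fin (N + 1) → ℝ)
    (φ : ℝ → ℝ) (hφ : ContDiff ℝ 1 φ) (cφ' : ℝ) (hφ'b : ∀ y, |deriv φ y| ≤ cφ') :
    Integrable (fun z : Fin (N + 1) → ℝ =>
        deriv φ (∑ i, c i * Real.exp (b i + ∑ l, B i l * z l))
          * ∑ i, c i * B i k * Real.exp (b i + ∑ l, B i l * z l))
      (Measure.pi fun _ => gaussianReal 0 1) := by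
  have hcφ' : 0 ≤ cφ' := (abs_nonneg _).trans (hφ'b 0)
  have hsumc : ∀ i : Fin (N + 1), Continuous (fun z : Fin (N + 1) → ℝ => b i + ∑ l, B i l * z l) :=
    fun i => continuous_const.add (continuous_finset_sum _ fun l _ =>
      continuous_const.mul (continuous_apply l))
  have hFc : Continuous (fun z : Fin (N + 1) → ℝ => ∑ i, c i * Real.exp (b i + ∑ l, B i l * z l)) :=
    continuous_finset_sum _ fun i _ =>
      continuous_const.mul (Real.continuous_exp.comp (hsumc i))
  refine Integrable.mono'
    (g := fun z => ∑ i, (cφ' * |c i * B i k| * Real.exp (b i)) * Real.exp (∑ l, B i l * z l))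
    (integrable_finset_sum _ fun i _ => ((integrable_exp_dot (B i)).const_mul _))
    ((((hφ.continuous_deriv le_rfl).comp hFc).mul
      (continuous_finset_sum _ fun i _ =>
        continuous_const.mul (Real.continuous_exp.comp (hsumc i)))).aestronglyMeasurable)
    (Filter.Eventually.of_forall fun z => ?_)
  have hb : ∀ i : Fin (N + 1),
      cφ' * |c i * B i k * Real.exp (b i + ∑ l, B i l * z l)|
        = (cφ' * |c i * B i k| * Real.exp (b i)) * Real.exp (∑ l, B i l * z l) := by
    intro i
    rw [abs_mul, abs_of_pos (Real.exp_pos _), Real.exp_add]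
    ring
  calc ‖deriv φ (∑ i, c i * Real.exp (b i + ∑ l, B i l * z l))
          * ∑ i, c i * B i k * Real.exp (b i + ∑ l, B i l * z l)‖
      ≤ cφ' * ∑ i, |c i * B i k * Real.exp (b i + ∑ l, B i l * z l)| := by
        rw [Real.norm_eq_abs, abs_mul]
        exact mul_le_mul (hφ'b _) (Finset.abs_sum_le_sum_abs _ _) (abs_nonneg _) hcφ'
    _ = ∑ i, (cφ' * |c i * B i k| * Real.exp (b i)) * Real.exp (∑ l, B i l * z l) := by
        rw [Finset.mul_sum]
        exact Finset.sum_congr rfl fun i _ => hb i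

lemma R_integrable {N : ℕ} (k : Fin (N + 1)) (c b : Fin (N + 1) → ℝ)
    (B : Fin (N + 1) → Fin (N + 1) → ℝ)
    (φ : ℝ → ℝ) (hφ : ContDiff ℝ 1 φ) (cφ : ℝ) (hφb : ∀ y, |φ y| ≤ cφ) :
    Integrable (fun z : Fin (N + 1) → ℝ =>
        φ (∑ i, c i * Real.exp (b i + ∑ l, B i l * z l)) * z k)
      (Measure.pi fun _ => gaussianReal 0 1) := by
  have hcφ : 0 ≤ cφ := (abs_nonneg _).trans (hφb 0)
  have hsumc : ∀ i : Fin (N + 1), Continuous (fun z : Fin (N + 1) → ℝ => b i + ∑ l, B i l * z l) :=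
    fun i => continuous_const.add (continuous_finset_sum _ fun l _ =>
      continuous_const.mul (continuous_apply l))
  have hFc : Continuous (fun z : Fin (N + 1) → ℝ => ∑ i, c i * Real.exp (b i + ∑ l, B i l * z l)) :=
    continuous_finset_sum _ fun i _ =>
      continuous_const.mul (Real.continuous_exp.comp (hsumc i))
  refine Integrable.mono'
    (g := fun z => cφ * Real.exp (1 * z k) + cφ * Real.exp ((-1) * z k))
    (((integrable_exp_coord k 1).const_mul cφ).add ((integrable_exp_coord k (-1)).const_mul cφ))
    (((hφ.continuous.comp hFc).mul (continuous_apply k)).aestronglyMeasurable)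
    (Filter.Eventually.of_forall fun z => ?_)
  calc ‖φ (∑ i, c i * Real.exp (b i + ∑ l, B i l * z l)) * z k‖
      = |φ (∑ i, c i * Real.exp (b i + ∑ l, B i l * z l))| * |z k| := by
        rw [Real.norm_eq_abs, abs_mul]
    _ ≤ cφ * (Real.exp (z k) + Real.exp (-(z k))) :=
        mul_le_mul (hφb _) (abs_le_exp_add _) (abs_nonneg _) hcφ
    _ = cφ * Real.exp (1 * z k) + cφ * Real.exp ((-1) * z k) := by
        rw [one_mul, neg_one_mul, mul_add]

lemma ibp_coord {N : ℕ} (k : Fin (N + 1)) (c b : Fin (N + 1) → ℝ)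
    (B : Fin (N + 1) → Fin (N + 1) → ℝ)
    (φ : ℝ → ℝ) (hφ : ContDiff ℝ 1 φ)
    (cφ : ℝ) (hφb : ∀ y, |φ y| ≤ cφ) (cφ' : ℝ) (hφ'b : ∀ y, |deriv φ y| ≤ cφ') :
    ∫ z : Fin (N + 1) → ℝ,
        deriv φ (∑ i, c i * Real.exp (b i + ∑ l, B i l * z l))
          * ∑ i, c i * B i k * Real.exp (b i + ∑ l, B i l * z l)
        ∂(Measure.pi fun _ => gaussianReal 0 1)
      = ∫ z : Fin (N + 1) → ℝ,
          φ (∑ i, c i * Real.exp (b i + ∑ l, B i l * z l)) * z k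
          ∂(Measure.pi fun _ => gaussianReal 0 1) := by
  have hcφ : 0 ≤ cφ := (abs_nonneg _).trans (hφb 0)
  have hcφ' : 0 ≤ cφ' := (abs_nonneg _).trans (hφ'b 0)
  set μ : Measure (Fin (N + 1) → ℝ) := Measure.pi fun _ => gaussianReal 0 1 with hμ
  set ν : Measure (Fin N → ℝ) := Measure.pi fun _ => gaussianReal 0 1 with hν
  set F : (Fin (N + 1) → ℝ) → ℝ :=
    fun z => ∑ i, c i * Real.exp (b i + ∑ l, B i l * z l) with hF
  set L : (Fin (N + 1) → ℝ) → ℝ :=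
    fun z => deriv φ (F z) * ∑ i, c i * B i k * Real.exp (b i + ∑ l, B i l * z l) with hL
  set R : (Fin (N + 1) → ℝ) → ℝ := fun z => φ (F z) * z k with hR
  -- continuity
  have hsumc : ∀ i : Fin (N + 1), Continuous (fun z : Fin (N + 1) → ℝ => b i + ∑ l, B i l * z l) :=
    fun i => continuous_const.add (continuous_finset_sum _ fun l _ =>
      continuous_const.mul (continuous_apply l))
  have hFc : Continuous F :=
    continuous_finset_sum _ fun i _ =>
      continuous_const.mul (Real.continuous_exp.comp (hsumc i))
  have hLc : Continuous L :=
    (((hφ.continuous_deriv le_rfl).comp hFc).mul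
      (continuous_finset_sum _ fun i _ =>
        continuous_const.mul (Real.continuous_exp.comp (hsumc i))))
  have hRc : Continuous R := (hφ.continuous.comp hFc).mul (continuous_apply k)
  -- integrability over μ
  have hLint : Integrable L μ := L_integrable k c b B φ hφ cφ' hφ'b
  have hRint : Integrable R μ := R_integrable k c b B φ hφ cφ hφb
  -- Fubini setup
  have mp := measurePreserving_piFinSuccAbove (fun _ : Fin (N + 1) => gaussianReal 0 1) k
  set e := MeasurableEquiv.piFinSuccAbove (fun _ : Fin (N + 1) => ℝ) k with he
  have mps : MeasurePreserving (⇑e.symm)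
      ((gaussianReal 0 1).prod (Measure.pi fun _ : Fin N => gaussianReal 0 1)) μ :=
    MeasurePreserving.symm e mp
  have hesymm : ∀ q : ℝ × (Fin N → ℝ), e.symm q = k.insertNth q.1 q.2 := by
    intro q
    rfl
  have hLeq : ∫ z, L z ∂μ = ∫ y, (∫ x, L (k.insertNth x y) ∂(gaussianReal 0 1)) ∂ν := by
    rw [← mps.integral_comp (MeasurableEquiv.measurableEmbedding _) L]
    rw [integral_prod_symm (fun q : ℝ × (Fin N → ℝ) => L (e.symm q))
      (((mps.integrable_comp_emb (MeasurableEquiv.measurableEmbedding _))).mpr hLint)]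
    refine integral_congr_ae (Filter.Eventually.of_forall fun y => ?_)
    refine integral_congr_ae (Filter.Eventually.of_forall fun x => ?_)
    exact congrArg L (hesymm (x, y))
  have hReq : ∫ z, R z ∂μ = ∫ y, (∫ x, R (k.insertNth x y) ∂(gaussianReal 0 1)) ∂ν := by
    rw [← mps.integral_comp (MeasurableEquiv.measurableEmbedding _) R]
    rw [integral_prod_symm (fun q : ℝ × (Fin N → ℝ) => R (e.symm q))
      (((mps.integrable_comp_emb (MeasurableEquiv.measurableEmbedding _))).mpr hRint)]
    refine integral_congr_ae (Filter.Eventually.of_forall fun y => ?_)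
    refine integral_congr_ae (Filter.Eventually.of_forall fun x => ?_)
    exact congrArg R (hesymm (x, y))
  rw [hLeq, hReq]
  refine integral_congr_ae (Filter.Eventually.of_forall fun y => ?_)
  -- one-dimensional IBP at fixed y
  set ρ : Fin (N + 1) → ℝ := fun i => b i + ∑ j, B i (k.succAbove j) * y j with hρ
  have hz : ∀ (x : ℝ) (i : Fin (N + 1)),
      b i + ∑ l, B i l * (k.insertNth x y : Fin (N + 1) → ℝ) l = ρ i + B i k * x := by
    intro x i
    rw [Fin.sum_univ_succAbove (fun l => B i l * (k.insertNth x y : Fin (N + 1) → ℝ) l) k]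
    rw [Fin.insertNth_apply_same]
    simp only [Fin.insertNth_apply_succAbove, hρ]
    ring
  set u : ℝ → ℝ := fun x => ∑ i, c i * Real.exp (ρ i + B i k * x) with hu
  have hFins : ∀ x, F (k.insertNth x y) = u x := by
    intro x
    exact Finset.sum_congr rfl fun i _ => by rw [hz x i]
  set u' : ℝ → ℝ := fun x => ∑ i, c i * B i k * Real.exp (ρ i + B i k * x) with hu'
  have hud : ∀ x, HasDerivAt u (u' x) x := by
    intro x
    refine HasDerivAt.fun_sum ?_
    intro i _
    have h1 : HasDerivAt (fun x : ℝ => ρ i + B i k * x) (B i k) x := by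
      simpa using ((hasDerivAt_id x).const_mul (B i k)).const_add (ρ i)
    have h2 := (Real.hasDerivAt_exp _).comp x h1
    have h3 := h2.const_mul (c i)
    rw [show c i * B i k * Real.exp (ρ i + B i k * x)
      = c i * (Real.exp (ρ i + B i k * x) * B i k) from by ring]
    exact h3
  set g : ℝ → ℝ := fun x => φ (u x) with hg
  set g' : ℝ → ℝ := fun x => deriv φ (u x) * u' x with hg'
  have hgd : ∀ x, HasDerivAt g (g' x) x := by
    intro x
    exact ((hφ.differentiable one_ne_zero).differentiableAt.hasDerivAt).comp x (hud x)
  have huc : Continuous u :=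
    continuous_finset_sum _ fun i _ => continuous_const.mul
      (Real.continuous_exp.comp (continuous_const.add (continuous_const.mul continuous_id)))
  have hu'c : Continuous u' :=
    continuous_finset_sum _ fun i _ => continuous_const.mul
      (Real.continuous_exp.comp (continuous_const.add (continuous_const.mul continuous_id)))
  have h1 : Integrable g' (gaussianReal 0 1) := by
    refine Integrable.mono'
      (g := fun x => ∑ i, (cφ' * |c i * B i k| * Real.exp (ρ i)) * Real.exp (B i k * x))
      (integrable_finset_sum _ fun i _ => ((integrable_exp_gauss (B i k)).const_mul _))
      (((hφ.continuous_deriv le_rfl).comp huc).mul hu'c).aestronglyMeasurable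
      (Filter.Eventually.of_forall fun x => ?_)
    have hb : ∀ i : Fin (N + 1),
        cφ' * |c i * B i k * Real.exp (ρ i + B i k * x)|
          = (cφ' * |c i * B i k| * Real.exp (ρ i)) * Real.exp (B i k * x) := by
      intro i
      rw [abs_mul, abs_of_pos (Real.exp_pos _), Real.exp_add]
      ring
    calc ‖g' x‖ ≤ cφ' * ∑ i, |c i * B i k * Real.exp (ρ i + B i k * x)| := by
          rw [hg', Real.norm_eq_abs, abs_mul]
          exact mul_le_mul (hφ'b _) (Finset.abs_sum_le_sum_abs _ _) (abs_nonneg _) hcφ'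
      _ = ∑ i, (cφ' * |c i * B i k| * Real.exp (ρ i)) * Real.exp (B i k * x) := by
          rw [Finset.mul_sum]
          exact Finset.sum_congr rfl fun i _ => hb i
  have h2 : Integrable (fun x => g x * x) (gaussianReal 0 1) := by
    refine Integrable.mono'
      (g := fun x => cφ * Real.exp (1 * x) + cφ * Real.exp ((-1) * x))
      (((integrable_exp_gauss 1).const_mul cφ).add ((integrable_exp_gauss (-1)).const_mul cφ))
      ((hφ.continuous.comp huc).mul continuous_id).aestronglyMeasurable
      (Filter.Eventually.of_forall fun x => ?_)
    calc ‖g x * x‖ = |φ (u x)| * |x| := by rw [Real.norm_eq_abs, abs_mul]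
      _ ≤ cφ * (Real.exp x + Real.exp (-x)) :=
          mul_le_mul (hφb _) (abs_le_exp_add _) (abs_nonneg _) hcφ
      _ = cφ * Real.exp (1 * x) + cφ * Real.exp ((-1) * x) := by
          rw [one_mul, neg_one_mul, mul_add]
  have hmain := gauss_ibp_1d g g' hgd cφ (fun x => hφb _) h1 h2
  have hLx : ∀ x : ℝ, L (k.insertNth x y) = g' x := by
    intro x
    show deriv φ (F (k.insertNth x y))
        * ∑ i, c i * B i k * Real.exp (b i + ∑ l, B i l * (k.insertNth x y : Fin (N + 1) → ℝ) l)
      = deriv φ (u x) * u' x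
    rw [hFins x]
    congr 1
    exact Finset.sum_congr rfl fun i _ => by rw [hz x i]
  have hRx : ∀ x : ℝ, R (k.insertNth x y) = g x * x := by
    intro x
    show φ (F (k.insertNth x y)) * (k.insertNth x y : Fin (N + 1) → ℝ) k = φ (u x) * x
    rw [hFins x, Fin.insertNth_apply_same]
  calc (∫ x, L (k.insertNth x y) ∂(gaussianReal 0 1))
      = ∫ x, g' x ∂(gaussianReal 0 1) :=
        integral_congr_ae (Filter.Eventually.of_forall fun x => hLx x)
    _ = ∫ x, g x * x ∂(gaussianReal 0 1) := hmain
    _ = ∫ x, R (k.insertNth x y) ∂(gaussianReal 0 1) :=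
        integral_congr_ae (Filter.Eventually.of_forall fun x => (hRx x).symm)


/-- Gaussian integration-by-parts identity: if `Z` is a multivariate Gaussian vector in
`ℝⁿ` with mean `m` and (possibly degenerate) symmetric positive semidefinite covariance
`C`, `ζᵢ ≥ 0`, and `φ` is `C¹` with `φ, φ′` bounded, then
`𝔼[φ′(Σᵢ ζᵢ e^{Zᵢ}) Σᵢ ζᵢ (C𝟙)ᵢ e^{Zᵢ}] = 𝔼[φ(Σᵢ ζᵢ e^{Zᵢ}) Σᵢ (Zᵢ − mᵢ)]`. -/
theorem gaussian_integration_by_parts_lognormal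
    (n : ℕ) (hn : 1 ≤ n)
    (C : Matrix (Fin n) (Fin n) ℝ) (hC : C.PosSemidef) (m : Fin n → ℝ)
    {Ω : Type*} [MeasurableSpace Ω] (P : Measure Ω) [IsProbabilityMeasure P]
    (Z : Ω → Fin n → ℝ)
    (hZ : Measure.map Z P
      = Measure.map (fun z => m + hC.sqrt.mulVec z)
          (Measure.pi fun _ : Fin n => gaussianReal 0 1))
    (ζ : Fin n → ℝ) (hζ : ∀ i, 0 ≤ ζ i)
    (φ : ℝ → ℝ) (hφ : ContDiff ℝ 1 φ)
    (hφbdd : ∃ c, ∀ y, |φ y| ≤ c) (hφ'bdd : ∃ c, ∀ y, |deriv φ y| ≤ c) :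
    ∫ ω, deriv φ (∑ i, ζ i * Real.exp (Z ω i))
        * ∑ i, ζ i * (∑ j, C i j) * Real.exp (Z ω i) ∂P
      = ∫ ω, φ (∑ i, ζ i * Real.exp (Z ω i)) * ∑ i, (Z ω i - m i) ∂P := by
  obtain ⟨N, rfl⟩ : ∃ N, n = N + 1 := ⟨n - 1, by omega⟩
  obtain ⟨cφ, hφb⟩ := hφbdd
  obtain ⟨cφ', hφ'b⟩ := hφ'bdd
  set μ : Measure (Fin (N + 1) → ℝ) := Measure.pi fun _ => gaussianReal 0 1 with hμdef
  set A : Matrix (Fin (N + 1)) (Fin (N + 1)) ℝ := hC.sqrt with hAdef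
  have hAs : ∀ i j, A i j = A j i := by
    intro i j
    have h : A.IsHermitian := by
      simp only [hAdef, Matrix.PosSemidef.sqrt, Matrix.star_eq_conjTranspose]
      exact Matrix.isHermitian_mul_mul_conjTranspose _ (Matrix.isHermitian_diagonal _)
    have h2 := congrFun (congrFun h i) j
    rw [Matrix.conjTranspose_apply] at h2
    simpa using h2.symm
  have hCA : ∀ i j, C i j = ∑ k, A i k * A k j := by
    intro i j
    have hsq : A * A = C := by
      have hUU := Unitary.coe_star_mul_self hC.1.eigenvectorUnitary
      conv_rhs => rw [hC.1.spectral_theorem, Unitary.conjStarAlgAut_apply]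
      simp only [hAdef, Matrix.PosSemidef.sqrt]
      simp only [Matrix.mul_assoc]
      congr 1
      rw [← Matrix.mul_assoc (star _), hUU, Matrix.one_mul, ← Matrix.mul_assoc,
        Matrix.diagonal_mul_diagonal]
      refine congrArg (· * _) (congrArg Matrix.diagonal (funext fun k => ?_))
      simp [Real.mul_self_sqrt (hC.eigenvalues_nonneg k)]
    conv_lhs => rw [← hsq]
    rw [Matrix.mul_apply]
  set T : (Fin (N + 1) → ℝ) → Fin (N + 1) → ℝ := fun z => m + A.mulVec z with hTdef
  have hTz : ∀ (z : Fin (N + 1) → ℝ) i, T z i = m i + ∑ l, A i l * z l := by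
    intro z i
    simp [hTdef, Matrix.mulVec, dotProduct]
  have hTm : Measurable T := by
    refine measurable_pi_lambda _ fun i => ?_
    have h : (fun z : Fin (N + 1) → ℝ => T z i) = fun z => m i + ∑ l, A i l * z l :=
      funext fun z => hTz z i
    rw [h]
    exact measurable_const.add
      (Finset.measurable_sum _ fun l _ => (measurable_pi_apply l).const_mul _)
  have hZm : AEMeasurable Z P := by
    by_contra h
    rw [Measure.map_of_not_aemeasurable h] at hZ
    have h2 : IsProbabilityMeasure (Measure.map T μ) :=
      Measure.isProbabilityMeasure_map hTm.aemeasurable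
    have h3 := h2.measure_univ
    rw [← hZ] at h3
    simp at h3
  -- continuity of the two integrands as functions of x
  have hΦ1c : Continuous (fun x : Fin (N + 1) → ℝ =>
      deriv φ (∑ i, ζ i * Real.exp (x i)) * ∑ i, ζ i * (∑ j, C i j) * Real.exp (x i)) := by
    have hs : Continuous (fun x : Fin (N + 1) → ℝ => ∑ i, ζ i * Real.exp (x i)) :=
      continuous_finset_sum _ fun i _ =>
        continuous_const.mul (Real.continuous_exp.comp (continuous_apply i))
    exact ((hφ.continuous_deriv le_rfl).comp hs).mul
      (continuous_finset_sum _ fun i _ =>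
        continuous_const.mul (Real.continuous_exp.comp (continuous_apply i)))
  have hΦ2c : Continuous (fun x : Fin (N + 1) → ℝ =>
      φ (∑ i, ζ i * Real.exp (x i)) * ∑ i, (x i - m i)) := by
    have hs : Continuous (fun x : Fin (N + 1) → ℝ => ∑ i, ζ i * Real.exp (x i)) :=
      continuous_finset_sum _ fun i _ =>
        continuous_const.mul (Real.continuous_exp.comp (continuous_apply i))
    exact (hφ.continuous.comp hs).mul
      (continuous_finset_sum _ fun i _ => (continuous_apply i).sub continuous_const)
  -- the weight vector
  set w : Fin (N + 1) → ℝ := fun k => ∑ j, A k j with hwdef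
  have hCsum : ∀ i, (∑ j, C i j) = ∑ k, A i k * w k := by
    intro i
    calc ∑ j, C i j = ∑ j, ∑ k, A i k * A k j := Finset.sum_congr rfl fun j _ => hCA i j
      _ = ∑ k, ∑ j, A i k * A k j := Finset.sum_comm
      _ = ∑ k, A i k * w k := Finset.sum_congr rfl fun k _ => by
            rw [← Finset.mul_sum]
  have claim1 : ∀ z : Fin (N + 1) → ℝ,
      deriv φ (∑ i, ζ i * Real.exp (T z i)) * ∑ i, ζ i * (∑ j, C i j) * Real.exp (T z i)
        = ∑ k, w k * (deriv φ (∑ i, ζ i * Real.exp (m i + ∑ l, A i l * z l))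
            * ∑ i, ζ i * A i k * Real.exp (m i + ∑ l, A i l * z l)) := by
    intro z
    have hFz : (∑ i, ζ i * Real.exp (T z i))
        = ∑ i, ζ i * Real.exp (m i + ∑ l, A i l * z l) :=
      Finset.sum_congr rfl fun i _ => by rw [hTz]
    rw [hFz]
    have hsub : (∑ i, ζ i * (∑ j, C i j) * Real.exp (T z i))
        = ∑ i, ζ i * (∑ k, A i k * w k) * Real.exp (m i + ∑ l, A i l * z l) :=
      Finset.sum_congr rfl fun i _ => by rw [hTz, hCsum i]
    rw [hsub]
    set D := deriv φ (∑ i, ζ i * Real.exp (m i + ∑ l, A i l * z l)) with hD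
    set E : Fin (N + 1) → ℝ := fun i => Real.exp (m i + ∑ l, A i l * z l) with hE
    have h1 : ∀ i, ζ i * (∑ k, A i k * w k) * E i = ∑ k, w k * (ζ i * A i k * E i) := by
      intro i
      calc ζ i * (∑ k, A i k * w k) * E i = (∑ k, A i k * w k) * (ζ i * E i) := by ring
        _ = ∑ k, (A i k * w k) * (ζ i * E i) := Finset.sum_mul _ _ _
        _ = ∑ k, w k * (ζ i * A i k * E i) := Finset.sum_congr rfl fun k _ => by ring
    calc D * ∑ i, ζ i * (∑ k, A i k * w k) * E i
        = D * ∑ i, ∑ k, w k * (ζ i * A i k * E i) := by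
          rw [Finset.sum_congr rfl fun i _ => h1 i]
      _ = D * ∑ k, ∑ i, w k * (ζ i * A i k * E i) := by rw [Finset.sum_comm]
      _ = ∑ k, D * ∑ i, w k * (ζ i * A i k * E i) := Finset.mul_sum _ _ _
      _ = ∑ k, w k * (D * ∑ i, ζ i * A i k * E i) := by
          refine Finset.sum_congr rfl fun k _ => ?_
          rw [← Finset.mul_sum]
          ring
  have claim2 : ∀ z : Fin (N + 1) → ℝ,
      φ (∑ i, ζ i * Real.exp (T z i)) * ∑ i, (T z i - m i)
        = ∑ k, w k * (φ (∑ i, ζ i * Real.exp (m i + ∑ l, A i l * z l)) * z k) := by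
    intro z
    have hFz : (∑ i, ζ i * Real.exp (T z i))
        = ∑ i, ζ i * Real.exp (m i + ∑ l, A i l * z l) :=
      Finset.sum_congr rfl fun i _ => by rw [hTz]
    rw [hFz]
    have h1 : (∑ i, (T z i - m i)) = ∑ k, w k * z k := by
      calc ∑ i, (T z i - m i) = ∑ i, ∑ l, A i l * z l :=
            Finset.sum_congr rfl fun i _ => by rw [hTz]; ring
        _ = ∑ l, ∑ i, A i l * z l := Finset.sum_comm
        _ = ∑ l, w l * z l := by
            refine Finset.sum_congr rfl fun l _ => ?_
            rw [← Finset.sum_mul]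
            congr 1
            exact Finset.sum_congr rfl fun i _ => hAs i l
    rw [h1, Finset.mul_sum]
    exact Finset.sum_congr rfl fun k _ => by ring
  have int1 : ∀ k : Fin (N + 1), Integrable (fun z : Fin (N + 1) → ℝ =>
      deriv φ (∑ i, ζ i * Real.exp (m i + ∑ l, A i l * z l))
        * ∑ i, ζ i * A i k * Real.exp (m i + ∑ l, A i l * z l)) μ :=
    fun k => L_integrable k ζ m A φ hφ cφ' hφ'b
  have int2 : ∀ k : Fin (N + 1), Integrable (fun z : Fin (N + 1) → ℝ =>
      φ (∑ i, ζ i * Real.exp (m i + ∑ l, A i l * z l)) * z k) μ :=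
    fun k => R_integrable k ζ m A φ hφ cφ hφb
  calc ∫ ω, deriv φ (∑ i, ζ i * Real.exp (Z ω i))
          * ∑ i, ζ i * (∑ j, C i j) * Real.exp (Z ω i) ∂P
      = ∫ x, deriv φ (∑ i, ζ i * Real.exp (x i))
          * ∑ i, ζ i * (∑ j, C i j) * Real.exp (x i) ∂(Measure.map Z P) :=
        (integral_map hZm hΦ1c.aestronglyMeasurable).symm
    _ = ∫ z, deriv φ (∑ i, ζ i * Real.exp (T z i))
          * ∑ i, ζ i * (∑ j, C i j) * Real.exp (T z i) ∂μ := by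
        rw [hZ]
        exact integral_map hTm.aemeasurable hΦ1c.aestronglyMeasurable
    _ = ∫ z, ∑ k, w k * (deriv φ (∑ i, ζ i * Real.exp (m i + ∑ l, A i l * z l))
          * ∑ i, ζ i * A i k * Real.exp (m i + ∑ l, A i l * z l)) ∂μ :=
        integral_congr_ae (Filter.Eventually.of_forall claim1)
    _ = ∑ k, w k * ∫ z, deriv φ (∑ i, ζ i * Real.exp (m i + ∑ l, A i l * z l))
          * ∑ i, ζ i * A i k * Real.exp (m i + ∑ l, A i l * z l) ∂μ := by
        rw [integral_finset_sum _ (fun k _ => ((int1 k).const_mul (w k)))]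
        exact Finset.sum_congr rfl fun k _ => integral_const_mul _ _
    _ = ∑ k, w k * ∫ z, φ (∑ i, ζ i * Real.exp (m i + ∑ l, A i l * z l)) * z k ∂μ :=
        Finset.sum_congr rfl fun k _ => by
          rw [ibp_coord k ζ m A φ hφ cφ hφb cφ' hφ'b]
    _ = ∫ z, ∑ k, w k * (φ (∑ i, ζ i * Real.exp (m i + ∑ l, A i l * z l)) * z k) ∂μ := by
        rw [integral_finset_sum _ (fun k _ => ((int2 k).const_mul (w k)))]
        exact (Finset.sum_congr rfl fun k _ => integral_const_mul _ _).symm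
    _ = ∫ z, φ (∑ i, ζ i * Real.exp (T z i)) * ∑ i, (T z i - m i) ∂μ :=
        (integral_congr_ae (Filter.Eventually.of_forall claim2)).symm
    _ = ∫ x, φ (∑ i, ζ i * Real.exp (x i)) * ∑ i, (x i - m i) ∂(Measure.map Z P) := by
        rw [hZ]
        exact (integral_map hTm.aemeasurable hΦ2c.aestronglyMeasurable).symm
    _ = ∫ ω, φ (∑ i, ζ i * Real.exp (Z ω i)) * ∑ i, (Z ω i - m i) ∂P :=
        integral_map hZm hΦ2c.aestronglyMeasurable
end

section
/- Let a < b, let h : [a,b] → ℝ be integrable and nonincreasing, and set G(u) = ∫_a^u h(s) ds. Then ∫_a^b [G(u) − ((b−u)/(b−a))·G(a) − ((u−a)/(b−a))·G(b)] du = ∫_a^b h(s)·((a+b)/2 − s) ds, and this quantity is nonnegative and bounded above by ((b−a)²/8)·(h(a) − h(b)). -/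
open MeasureTheory intervalIntegral

/-- Fubini for the primitive: the integral of `u ↦ ∫_a^u h` over `[a,b]` equals
`∫_a^b h(s)(b-s) ds`. -/
lemma primitive_swap' (a b : ℝ) (hab : a ≤ b) (h : ℝ → ℝ)
    (hint : IntervalIntegrable h volume a b) :
    ∫ u in a..b, (∫ s in a..u, h s) = ∫ s in a..b, h s * (b - s) := by
  set μ := volume.restrict (Set.Ioc a b) with hμdef
  haveI : IsFiniteMeasure μ := by
    constructor
    rw [hμdef, Measure.restrict_apply_univ]
    exact (Real.volume_Ioc (a := a) (b := b)) ▸ ENNReal.ofReal_lt_top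
  have hIoc : IntegrableOn h (Set.Ioc a b) volume :=
    (intervalIntegrable_iff_integrableOn_Ioc_of_le hab).1 hint
  have hIocμ : Integrable h μ := hIoc
  set F : ℝ × ℝ → ℝ := fun p => Set.indicator {p : ℝ × ℝ | p.2 ≤ p.1} (fun p => h p.2) p with hF
  have hmeasset : MeasurableSet {p : ℝ × ℝ | p.2 ≤ p.1} :=
    measurableSet_le measurable_snd measurable_fst
  have hFsm : AEStronglyMeasurable F (μ.prod μ) := by
    apply AEStronglyMeasurable.indicator _ hmeasset
    exact hIocμ.aestronglyMeasurable.comp_quasiMeasurePreserving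
      Measure.quasiMeasurePreserving_snd
  have hFrow : ∀ u : ℝ, (fun s => F (u, s)) = Set.indicator (Set.Iic u) h := by
    intro u; funext s
    simp only [hF, Set.indicator_apply, Set.mem_setOf_eq, Set.mem_Iic]
  have hFcol : ∀ s : ℝ, (fun u => F (u, s)) = Set.indicator (Set.Ici s) (fun _ => h s) := by
    intro s; funext u
    simp only [hF, Set.indicator_apply, Set.mem_setOf_eq, Set.mem_Ici]
  have hFint : Integrable F (μ.prod μ) := by
    rw [integrable_prod_iff hFsm]
    constructor
    · filter_upwards with u
      rw [hFrow u]
      exact hIocμ.indicator measurableSet_Iic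
    · apply Integrable.mono' (g := fun _ : ℝ => ∫ s, ‖h s‖ ∂μ) (integrable_const _)
        (hFsm.norm.integral_prod_right')
      filter_upwards with u
      have h1 : ∀ s, ‖F (u, s)‖ ≤ ‖h s‖ := by
        intro s
        have : F (u, s) = Set.indicator (Set.Iic u) h s := congrFun (hFrow u) s
        rw [this]
        exact norm_indicator_le_norm_self (f := h) (a := s)
      have h2 : (∫ s, ‖F (u, s)‖ ∂μ) ≤ ∫ s, ‖h s‖ ∂μ :=
        integral_mono_of_nonneg (Filter.Eventually.of_forall fun s => norm_nonneg _)
          hIocμ.norm (Filter.Eventually.of_forall h1)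
      rw [Real.norm_of_nonneg (integral_nonneg fun s => norm_nonneg _)]
      exact h2
  have hleft : ∫ u in a..b, (∫ s in a..u, h s) = ∫ u, ∫ s, F (u, s) ∂μ ∂μ := by
    rw [intervalIntegral.integral_of_le hab]
    apply setIntegral_congr_fun measurableSet_Ioc
    intro u hu
    show (∫ s in a..u, h s) = ∫ s, F (u, s) ∂μ
    rw [hFrow u, MeasureTheory.integral_indicator measurableSet_Iic, hμdef,
      Measure.restrict_restrict measurableSet_Iic,
      intervalIntegral.integral_of_le hu.1.le]
    congr 1
    rw [Set.Iic_inter_Ioc_of_le hu.2]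
  have hswap : ∫ u, ∫ s, F (u, s) ∂μ ∂μ = ∫ s, ∫ u, F (u, s) ∂μ ∂μ :=
    integral_integral_swap (f := fun u s => F (u, s)) hFint
  have hright : ∫ s, ∫ u, F (u, s) ∂μ ∂μ = ∫ s in a..b, h s * (b - s) := by
    rw [intervalIntegral.integral_of_le hab]
    apply setIntegral_congr_fun measurableSet_Ioc
    intro s hs
    show (∫ u, F (u, s) ∂μ) = h s * (b - s)
    rw [hFcol s, MeasureTheory.integral_indicator measurableSet_Ici, hμdef,
      Measure.restrict_restrict measurableSet_Ici, setIntegral_const]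
    have : Set.Ici s ∩ Set.Ioc a b = Set.Icc s b := by
      ext x
      simp only [Set.mem_inter_iff, Set.mem_Ici, Set.mem_Ioc, Set.mem_Icc]
      constructor
      · rintro ⟨h1, _, h3⟩; exact ⟨h1, h3⟩
      · rintro ⟨h1, h2⟩; exact ⟨h1, lt_of_lt_of_le hs.1 h1, h2⟩
    rw [this, Real.volume_real_Icc_of_le (by linarith [hs.2] : s ≤ b)]
    simp [mul_comm]
  rw [hleft, hswap, hright]

/-- Integrated linear-interpolation error of the primitive `G(u) = ∫_a^u h(s) ds` of a
nonincreasing integrable function `h`: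
`∫_a^b [G(u) − ((b−u)/(b−a))G(a) − ((u−a)/(b−a))G(b)] du = ∫_a^b h(s)((a+b)/2 − s) ds`,
and this quantity lies in `[0, ((b−a)²/8)(h(a) − h(b))]`. -/
theorem trapezoid_interpolation_error_concave
    (a b : ℝ) (hab : a < b)
    (h : ℝ → ℝ) (hint : IntervalIntegrable h volume a b)
    (hmono : AntitoneOn h (Set.Icc a b))
    (G : ℝ → ℝ) (hG : ∀ u, G u = ∫ s in a..u, h s) :
    (∫ u in a..b,
        (G u - (b - u) / (b - a) * G a - (u - a) / (b - a) * G b))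
      = (∫ s in a..b, h s * ((a + b) / 2 - s))
    ∧ 0 ≤ ∫ s in a..b, h s * ((a + b) / 2 - s)
    ∧ (∫ s in a..b, h s * ((a + b) / 2 - s))
        ≤ (b - a) ^ 2 / 8 * (h a - h b) := by
  have hab' : a ≤ b := hab.le
  have hba : b - a ≠ 0 := sub_ne_zero.2 hab.ne'
  set c : ℝ := (a + b) / 2 with hc
  have hac : a ≤ c := by rw [hc]; linarith
  have hcb : c ≤ b := by rw [hc]; linarith
  -- integrability facts
  have hsub : Set.uIcc a c ⊆ Set.uIcc a b := by
    rw [Set.uIcc_of_le hab', Set.uIcc_of_le hac]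
    exact Set.Icc_subset_Icc le_rfl hcb
  have hf_int : IntervalIntegrable (fun s => h s * (c - s)) volume a b :=
    hint.mul_continuousOn ((continuous_const.sub continuous_id).continuousOn)
  have hf_int_ac : IntervalIntegrable (fun s => h s * (c - s)) volume a c :=
    hf_int.mono_set hsub
  have hf_int_cb : IntervalIntegrable (fun s => h s * (c - s)) volume c b :=
    hf_int.mono_set (by
      rw [Set.uIcc_of_le hab', Set.uIcc_of_le hcb]
      exact Set.Icc_subset_Icc hac le_rfl)
  have hrefl_int : IntervalIntegrable (fun x => h (a + b - x) * (c - (a + b - x))) volume a c := by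
    have h1 : IntervalIntegrable (fun x => h ((a+b) - x) * (c - ((a+b) - x))) volume
        ((a+b) - a) ((a+b) - b) := hf_int.comp_sub_left (a + b)
    have h2 : (a+b) - a = b := by ring
    have h3 : (a+b) - b = a := by ring
    rw [h2, h3] at h1
    exact h1.symm.mono_set hsub
  -- reflection identity
  have hrefl : (∫ s in a..b, h s * (c - s))
      = ∫ x in a..c, (h x - h (a + b - x)) * (c - x) := by
    have hsplit : (∫ s in a..b, h s * (c - s))
        = (∫ s in a..c, h s * (c - s)) + ∫ s in c..b, h s * (c - s) :=
      (integral_add_adjacent_intervals hf_int_ac hf_int_cb).symm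
    have hflip : (∫ s in c..b, h s * (c - s))
        = ∫ x in a..c, h (a + b - x) * (c - (a + b - x)) := by
      have := intervalIntegral.integral_comp_sub_left (fun s => h s * (c - s)) (a + b)
        (a := a) (b := c)
      have h2 : (a+b) - c = c := by rw [hc]; ring
      have h3 : (a+b) - a = b := by ring
      rw [h2, h3] at this
      exact this.symm
    rw [hsplit, hflip, ← intervalIntegral.integral_add hf_int_ac hrefl_int]
    apply intervalIntegral.integral_congr
    intro x _
    show h x * (c - x) + h (a + b - x) * (c - (a + b - x)) = (h x - h (a + b - x)) * (c - x)
    have : c - (a + b - x) = x - c := by rw [hc]; ring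
    rw [this]; ring
  -- pointwise facts on [a, c]
  have hmem : ∀ x ∈ Set.Icc a c, x ∈ Set.Icc a b ∧ (a + b - x) ∈ Set.Icc a b ∧ x ≤ a + b - x := by
    intro x hx
    have h1 := hx.1; have h2 := hx.2
    have h2' : x ≤ (a + b) / 2 := by rw [hc] at h2; linarith
    refine ⟨⟨h1, by linarith⟩, ⟨by linarith, by linarith⟩, by linarith⟩
  -- nonnegativity
  have hnonneg : 0 ≤ ∫ s in a..b, h s * (c - s) := by
    rw [hrefl]
    apply intervalIntegral.integral_nonneg hac
    intro x hx
    obtain ⟨hx1, hx2, hx3⟩ := hmem x hx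
    have := hmono hx1 hx2 hx3
    have hcx : 0 ≤ c - x := by linarith [hx.2]
    exact mul_nonneg (by linarith) hcx
  -- upper bound
  have hupper : (∫ s in a..b, h s * (c - s)) ≤ (b - a) ^ 2 / 8 * (h a - h b) := by
    rw [hrefl]
    have hrefl_int2 : IntervalIntegrable (fun x => h (a + b - x)) volume a c := by
      have h1 := hint.comp_sub_left (a + b)
      have h2 : (a+b) - a = b := by ring
      have h3 : (a+b) - b = a := by ring
      rw [h2, h3] at h1
      exact h1.symm.mono_set hsub
    have hd_int : IntervalIntegrable (fun x => (h x - h (a + b - x)) * (c - x)) volume a c :=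
      ((hint.mono_set hsub).sub hrefl_int2).mul_continuousOn
        ((continuous_const.sub continuous_id).continuousOn)
    have hconst_int : IntervalIntegrable (fun x => (h a - h b) * (c - x)) volume a c :=
      (Continuous.intervalIntegrable (by continuity) a c)
    have hstep : (∫ x in a..c, (h x - h (a + b - x)) * (c - x))
        ≤ ∫ x in a..c, (h a - h b) * (c - x) := by
      apply intervalIntegral.integral_mono_on hac hd_int hconst_int
      intro x hx
      obtain ⟨hx1, hx2, _⟩ := hmem x hx
      have ha_mem : a ∈ Set.Icc a b := Set.left_mem_Icc.2 hab'
      have hb_mem : b ∈ Set.Icc a b := Set.right_mem_Icc.2 hab'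
      have e1 : h x ≤ h a := hmono ha_mem hx1 hx1.1
      have e2 : h b ≤ h (a + b - x) := hmono hx2 hb_mem hx2.2
      have hcx : 0 ≤ c - x := by linarith [hx.2]
      exact mul_le_mul_of_nonneg_right (by linarith) hcx
    have hcomp : (∫ x in a..c, (h a - h b) * (c - x)) = (b - a) ^ 2 / 8 * (h a - h b) := by
      rw [intervalIntegral.integral_const_mul,
        intervalIntegral.integral_sub intervalIntegrable_const intervalIntegrable_id,
        intervalIntegral.integral_const, integral_id]
      rw [hc]; simp only [smul_eq_mul]; ring
    calc (∫ x in a..c, (h x - h (a + b - x)) * (c - x))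
        ≤ ∫ x in a..c, (h a - h b) * (c - x) := hstep
      _ = (b - a) ^ 2 / 8 * (h a - h b) := hcomp
  -- part 1: the interpolation-error identity
  have hGa : G a = 0 := by rw [hG]; simp
  have hpart1 : (∫ u in a..b,
      (G u - (b - u) / (b - a) * G a - (u - a) / (b - a) * G b))
      = ∫ s in a..b, h s * (c - s) := by
    simp only [hGa, mul_zero, sub_zero]
    have hGint : IntervalIntegrable G volume a b := by
      have hIcc : IntegrableOn h (Set.uIcc a b) volume := by
        rw [Set.uIcc_of_le hab']
        exact (intervalIntegrable_iff_integrableOn_Icc_of_le hab').1 hint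
      have : ContinuousOn G (Set.uIcc a b) := by
        have := intervalIntegral.continuousOn_primitive_interval hIcc
        have hGeq : G = fun x => ∫ t in a..x, h t := funext hG
        rw [hGeq]; exact this
      exact this.intervalIntegrable
    have hlin_int : IntervalIntegrable (fun u => (u - a) / (b - a) * G b) volume a b :=
      (((continuous_id.sub continuous_const).div_const _).mul continuous_const).intervalIntegrable
        a b
    rw [intervalIntegral.integral_sub hGint hlin_int]
    have hGswap : (∫ u in a..b, G u) = ∫ s in a..b, h s * (b - s) := by
      rw [show (∫ u in a..b, G u) = ∫ u in a..b, ∫ s in a..u, h s from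
        intervalIntegral.integral_congr fun u _ => hG u]
      exact primitive_swap' a b hab' h hint
    have hlin : (∫ u in a..b, (u - a) / (b - a) * G b) = (b - a) / 2 * G b := by
      have heq : (fun u : ℝ => (u - a) / (b - a) * G b) = fun u => G b / (b - a) * (u - a) := by
        funext u; ring
      rw [heq, intervalIntegral.integral_const_mul,
        intervalIntegral.integral_sub intervalIntegrable_id intervalIntegrable_const,
        integral_id, intervalIntegral.integral_const]
      simp only [smul_eq_mul]
      field_simp
      ring
    rw [hGswap, hlin, hG b]
    have : (b - a) / 2 * ∫ s in a..b, h s = ∫ s in a..b, (b - a) / 2 * h s :=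
      (intervalIntegral.integral_const_mul _ _).symm
    have hbint : IntervalIntegrable (fun s : ℝ => h s * (b - s)) volume a b :=
      hint.mul_continuousOn ((continuous_const.sub continuous_id).continuousOn)
    rw [this, ← intervalIntegral.integral_sub hbint (hint.const_mul _)]
    apply intervalIntegral.integral_congr
    intro s _
    rw [hc]; ring
  exact ⟨hpart1, hnonneg, hupper⟩
end

section
/- Let κ > 0 and β ∈ (0,1) satisfy κ(β+1) > 2. Then there exists a constant C such that for all n ≥ 1, Σ_{i=1}^{n−1} [((i+1)/n)^κ − (i/n)^κ]³ · ((i+1)/n)^{κ(β−2)} ≤ C/n². -/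
open Real Finset

/-- Bernoulli upper increment bound: for `κ ≥ 1` and `a > 0`,
`(a+1)^κ - a^κ ≤ κ * (a+1)^(κ-1)`. -/
lemma bern_upper {a κ : ℝ} (ha : 0 < a) (hκ : 1 ≤ κ) :
    (a + 1) ^ κ - a ^ κ ≤ κ * (a + 1) ^ (κ - 1) := by
  have ha1 : (0:ℝ) < a + 1 := by linarith
  have hs : (-1:ℝ) ≤ -(1/(a+1)) := by
    rw [neg_le_neg_iff]
    rw [div_le_one ha1]; linarith
  have h := one_add_mul_self_le_rpow_one_add hs hκ
  have h1 : (1 : ℝ) + -(1/(a+1)) = a / (a+1) := by field_simp; ring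
  rw [h1] at h
  have h2 : (a / (a+1)) ^ κ = a ^ κ / (a+1) ^ κ := div_rpow ha.le ha1.le κ
  rw [h2] at h
  have h3 : (0:ℝ) < (a+1) ^ κ := rpow_pos_of_pos ha1 κ
  have h4 : (1 + κ * -(1/(a+1))) * (a+1) ^ κ ≤ a ^ κ := by
    rw [← le_div_iff₀ h3] at *; exact h
  have h5 : (a+1) ^ (κ - 1) = (a+1) ^ κ / (a+1) := rpow_sub_one ha1.ne' κ
  have hexp : (1 + κ * -(1/(a+1))) * (a+1) ^ κ = (a+1) ^ κ - κ * ((a+1) ^ κ / (a+1)) := by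
    field_simp; ring
  rw [hexp] at h4
  rw [h5]
  linarith

/-- Bernoulli lower increment bound: for `0 ≤ p ≤ 1` and `a ≥ 1`,
`p * a^(p-1) ≤ a^p - (a-1)^p`. -/
lemma bern_lower {a p : ℝ} (ha : 1 ≤ a) (hp0 : 0 ≤ p) (hp1 : p ≤ 1) :
    p * a ^ (p - 1) ≤ a ^ p - (a - 1) ^ p := by
  have ha0 : (0:ℝ) < a := by linarith
  have hs : (-1:ℝ) ≤ -(1/a) := by
    rw [neg_le_neg_iff, div_le_one ha0]; linarith
  have h := rpow_one_add_le_one_add_mul_self hs hp0 hp1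
  have h1 : (1 : ℝ) + -(1/a) = (a - 1) / a := by field_simp; ring
  rw [h1] at h
  have h2 : ((a-1) / a) ^ p = (a-1) ^ p / a ^ p := div_rpow (by linarith) ha0.le p
  rw [h2] at h
  have h3 : (0:ℝ) < a ^ p := rpow_pos_of_pos ha0 p
  have h4 : (a-1) ^ p ≤ (1 + p * -(1/a)) * a ^ p := by
    rw [div_le_iff₀ h3] at h; linarith [h]
  have h5 : a ^ (p - 1) = a ^ p / a := rpow_sub_one ha0.ne' p
  have : (1 + p * -(1/a)) * a ^ p = a ^ p - p * (a ^ p / a) := by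
    field_simp; ring
  rw [this] at h4
  rw [h5]
  linarith

/-- Deterministic grid-sum estimate for the stretched grid `tᵢⁿ = T + Θ(i/n)^κ`:
if `κ > 0`, `β ∈ (0,1)` and `κ(β+1) > 2`, then
`Σ_{i=1}^{n−1} [((i+1)/n)^κ − (i/n)^κ]³ ((i+1)/n)^{κ(β−2)} ≤ C/n²` for all `n ≥ 1`. -/
theorem stretched_grid_sum_estimate
    (κ β : ℝ) (hκ : 0 < κ) (hβ0 : 0 < β) (hβ1 : β < 1) (hκβ : 2 < κ * (β + 1)) :
    ∃ C : ℝ, ∀ n : ℕ, 1 ≤ n →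
      ∑ i ∈ Finset.Ico 1 n,
          ((((i : ℝ) + 1) / n) ^ κ - ((i : ℝ) / n) ^ κ) ^ 3
            * (((i : ℝ) + 1) / n) ^ (κ * (β - 2))
        ≤ C / n ^ 2 := by
  set α : ℝ := κ * (β + 1) with hα
  have hκ1 : 1 ≤ κ := by nlinarith
  have hα2 : 2 < α := hκβ
  set B : ℝ := 1 + 1 / (α - 2) with hB
  have hα2' : (0:ℝ) < α - 2 := by linarith
  have hinvpos : (0:ℝ) < 1 / (α - 2) := by positivity
  have hB0 : 1 ≤ B := by rw [hB]; linarith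
  have hBinv : 1 / (α - 2) ≤ B := by rw [hB]; linarith
  refine ⟨κ ^ 3 * B, fun n hn => ?_⟩
  have hN : (0:ℝ) < n := by exact_mod_cast hn
  -- Step A: termwise bound
  have stepA : ∀ i ∈ Finset.Ico 1 n,
      ((((i : ℝ) + 1) / n) ^ κ - ((i : ℝ) / n) ^ κ) ^ 3
          * (((i : ℝ) + 1) / n) ^ (κ * (β - 2))
        ≤ κ ^ 3 * (n:ℝ) ^ (-α) * ((i:ℝ) + 1) ^ (α - 3) := by
    intro i hi
    rw [Finset.mem_Ico] at hi
    have hi1 : (1:ℝ) ≤ i := by exact_mod_cast hi.1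
    have hi0 : (0:ℝ) < i := by linarith
    have hi01 : (0:ℝ) < (i:ℝ) + 1 := by linarith
    have hd : (((i : ℝ) + 1) / n) ^ κ - ((i : ℝ) / n) ^ κ
        = (((i:ℝ)+1) ^ κ - (i:ℝ) ^ κ) / (n:ℝ) ^ κ := by
      rw [div_rpow hi01.le hN.le, div_rpow hi0.le hN.le, div_sub_div_same]
    have hbern := bern_upper hi0 hκ1
    have hnκ : (0:ℝ) < (n:ℝ) ^ κ := rpow_pos_of_pos hN κ
    have hdpos : 0 ≤ (((i:ℝ)+1) ^ κ - (i:ℝ) ^ κ) / (n:ℝ) ^ κ := by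
      have : (i:ℝ) ^ κ ≤ ((i:ℝ)+1) ^ κ := rpow_le_rpow hi0.le (by linarith) hκ.le
      exact div_nonneg (by linarith) hnκ.le
    have hx : (0:ℝ) < ((i:ℝ)+1) / n := by positivity
    have hdle : (((i:ℝ)+1) ^ κ - (i:ℝ) ^ κ) / (n:ℝ) ^ κ
        ≤ κ * ((i:ℝ)+1) ^ (κ-1) / (n:ℝ) ^ κ := by
      gcongr
    have hcube : ((((i : ℝ) + 1) / n) ^ κ - ((i : ℝ) / n) ^ κ) ^ 3
        ≤ (κ * ((i:ℝ)+1) ^ (κ-1) / (n:ℝ) ^ κ) ^ 3 := by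
      rw [hd]; exact pow_le_pow_left₀ hdpos hdle 3
    have hr : (0:ℝ) < (((i:ℝ)+1)/n) ^ (κ * (β - 2)) := rpow_pos_of_pos hx _
    calc ((((i : ℝ) + 1) / n) ^ κ - ((i : ℝ) / n) ^ κ) ^ 3
            * (((i : ℝ) + 1) / n) ^ (κ * (β - 2))
        ≤ (κ * ((i:ℝ)+1) ^ (κ-1) / (n:ℝ) ^ κ) ^ 3
            * (((i : ℝ) + 1) / n) ^ (κ * (β - 2)) :=
          mul_le_mul_of_nonneg_right hcube hr.le
      _ = κ ^ 3 * (n:ℝ) ^ (-α) * ((i:ℝ) + 1) ^ (α - 3) := by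
          rw [div_rpow hi01.le hN.le, div_pow, mul_pow,
            ← rpow_natCast (((i:ℝ)+1) ^ (κ-1)) 3, ← rpow_mul hi01.le,
            ← rpow_natCast ((n:ℝ) ^ κ) 3, ← rpow_mul hN.le]
          push_cast
          rw [div_mul_div_comm, mul_assoc, ← rpow_add hi01, ← rpow_add hN]
          have e1 : (κ - 1) * 3 + κ * (β - 2) = α - 3 := by rw [hα]; ring
          have e2 : κ * 3 + κ * (β - 2) = α := by rw [hα]; ring
          rw [e1, e2, rpow_neg hN.le, div_eq_mul_inv]
          ring
  -- Step B: sum of rpow bound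
  have stepB : ∑ i ∈ Finset.Ico 1 n, ((i:ℝ) + 1) ^ (α - 3)
      ≤ B * (n:ℝ) ^ (α - 2) := by
    rcases le_or_gt 3 α with h3 | h3
    · -- increasing case: each term ≤ n^(α-3)
      have : ∀ i ∈ Finset.Ico 1 n, ((i:ℝ) + 1) ^ (α - 3) ≤ (n:ℝ) ^ (α - 3) := by
        intro i hi
        rw [Finset.mem_Ico] at hi
        have : ((i:ℝ) + 1) ≤ n := by
          have : (i:ℕ) + 1 ≤ n := hi.2
          exact_mod_cast this
        exact rpow_le_rpow (by positivity) this (by linarith)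
      calc ∑ i ∈ Finset.Ico 1 n, ((i:ℝ) + 1) ^ (α - 3)
          ≤ ∑ _i ∈ Finset.Ico 1 n, (n:ℝ) ^ (α - 3) := Finset.sum_le_sum this
        _ = ((n - 1 : ℕ) : ℝ) * (n:ℝ) ^ (α - 3) := by
            rw [Finset.sum_const, Nat.card_Ico]; simp
        _ ≤ (n:ℝ) * (n:ℝ) ^ (α - 3) := by
            apply mul_le_mul_of_nonneg_right _ (rpow_pos_of_pos hN _).le
            exact_mod_cast Nat.sub_le n 1
        _ = (n:ℝ) ^ (α - 2) := by
            have hne : (1:ℝ) + (α - 3) ≠ 0 := by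
              have : (0:ℝ) < 1 + (α - 3) := by linarith
              exact this.ne'
            have e : α - 2 = 1 + (α - 3) := by ring
            rw [e, rpow_one_add' hN.le hne]
        _ ≤ B * (n:ℝ) ^ (α - 2) := by
            nlinarith [rpow_pos_of_pos hN (α - 2), hB0]
    · -- telescoping case: p = α - 2 ∈ (0,1)
      set p : ℝ := α - 2 with hp
      have hp0 : 0 < p := by simp [hp]; linarith
      have hp1 : p ≤ 1 := by simp [hp]; linarith
      have key : ∀ i ∈ Finset.Ico 1 n, ((i:ℝ) + 1) ^ (α - 3)
          ≤ (1/p) * (((i:ℝ)+1) ^ p - (i:ℝ) ^ p) := by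
        intro i hi
        rw [Finset.mem_Ico] at hi
        have hi1 : (1:ℝ) ≤ (i:ℝ) + 1 := le_add_of_nonneg_left (Nat.cast_nonneg i)
        have h := bern_lower hi1 hp0.le hp1
        have e1 : ((i:ℝ) + 1) - 1 = (i:ℝ) := by ring
        rw [e1] at h
        have e2 : α - 3 = p - 1 := by rw [hp]; ring
        rw [e2]
        have h' : ((i:ℝ) + 1) ^ (p - 1) ≤ (((i:ℝ)+1) ^ p - (i:ℝ) ^ p) / p := by
          rw [le_div_iff₀ hp0]
          nlinarith [h]
        calc ((i:ℝ) + 1) ^ (p - 1) ≤ (((i:ℝ)+1) ^ p - (i:ℝ) ^ p) / p := h'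
          _ = 1 / p * (((i:ℝ)+1) ^ p - (i:ℝ) ^ p) := by ring
      calc ∑ i ∈ Finset.Ico 1 n, ((i:ℝ) + 1) ^ (α - 3)
          ≤ ∑ i ∈ Finset.Ico 1 n, (1/p) * (((i:ℝ)+1) ^ p - (i:ℝ) ^ p) :=
            Finset.sum_le_sum key
        _ = (1/p) * ∑ i ∈ Finset.Ico 1 n, (((i:ℝ)+1) ^ p - (i:ℝ) ^ p) := by
            rw [Finset.mul_sum]
        _ ≤ (1/p) * ∑ i ∈ Finset.range n, (((i:ℝ)+1) ^ p - (i:ℝ) ^ p) := by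
            apply mul_le_mul_of_nonneg_left _ (one_div_nonneg.2 hp0.le)
            apply Finset.sum_le_sum_of_subset_of_nonneg
            · intro x hx
              rw [Finset.mem_Ico] at hx
              exact Finset.mem_range.2 hx.2
            · intro i hi _
              have : (i:ℝ) ^ p ≤ ((i:ℝ)+1) ^ p :=
                rpow_le_rpow (Nat.cast_nonneg i) (by linarith) hp0.le
              linarith
        _ = (1/p) * ((n:ℝ) ^ p - (0:ℝ) ^ p) := by
            congr 1
            have := Finset.sum_range_sub (fun i : ℕ => (i:ℝ) ^ p) n
            simpa using this
        _ ≤ B * (n:ℝ) ^ (α - 2) := by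
            rw [zero_rpow hp0.ne', sub_zero]
            have hnp : 0 < (n:ℝ) ^ p := rpow_pos_of_pos hN p
            have : (n:ℝ) ^ p = (n:ℝ) ^ (α - 2) := by rw [hp]
            rw [this] at hnp ⊢
            exact mul_le_mul_of_nonneg_right hBinv hnp.le
  -- Combine
  calc ∑ i ∈ Finset.Ico 1 n,
          ((((i : ℝ) + 1) / n) ^ κ - ((i : ℝ) / n) ^ κ) ^ 3
            * (((i : ℝ) + 1) / n) ^ (κ * (β - 2))
      ≤ ∑ i ∈ Finset.Ico 1 n, κ ^ 3 * (n:ℝ) ^ (-α) * ((i:ℝ) + 1) ^ (α - 3) :=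
        Finset.sum_le_sum stepA
    _ = κ ^ 3 * (n:ℝ) ^ (-α) * ∑ i ∈ Finset.Ico 1 n, ((i:ℝ) + 1) ^ (α - 3) := by
        rw [← Finset.mul_sum]
    _ ≤ κ ^ 3 * (n:ℝ) ^ (-α) * (B * (n:ℝ) ^ (α - 2)) := by
        apply mul_le_mul_of_nonneg_left stepB
        exact mul_nonneg (pow_nonneg hκ.le 3) (rpow_pos_of_pos hN _).le
    _ = κ ^ 3 * B / (n:ℝ) ^ 2 := by
        have e : (n:ℝ) ^ (-α) * (n:ℝ) ^ (α - 2) = ((n:ℝ) ^ (2:ℕ))⁻¹ := by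
          rw [← rpow_add hN]
          have : -α + (α - 2) = -(2:ℝ) := by ring
          rw [this, rpow_neg hN.le]
          norm_num
        calc κ ^ 3 * (n:ℝ) ^ (-α) * (B * (n:ℝ) ^ (α - 2))
            = κ ^ 3 * B * ((n:ℝ) ^ (-α) * (n:ℝ) ^ (α - 2)) := by ring
          _ = κ ^ 3 * B / (n:ℝ) ^ 2 := by rw [e]; rw [div_eq_mul_inv]
end
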